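/- arXiv:1509.00273 — 2 statements merged into one kernel-verified Lean document; each statement's English description precedes it below -/
import Mathlib

section
/- Let w, σ be weights and 0 < r < p < ∞ with p > 1, and let 𝒮 be a sparse collection of dyadic cubes in ℝ^n. Then ‖A_𝒮^r(·σ)‖_{L^p(σ)→L^p(w)}^r ≃ sup over measurable f ≥ 0 with ‖f‖_{L^p(σ)} = 1 of ‖∑_{Q∈𝒮} ⟨σ⟩_Q^r ⟨f^r⟩_Q^σ 1_Q‖_{L^{p/r}(w)}, with implied constants depending only on n, p and r. -/
open MeasureTheory ENNReal NNReal Set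

noncomputable section

namespace Paper

abbrev Rn (n : ℕ) := Fin n → ℝ

/-- A dyadic cube in `ℝⁿ`: `∏ᵢ [2^{-k} mᵢ, 2^{-k}(mᵢ+1))`. -/
def IsDyadicCube (n : ℕ) (Q : Set (Rn n)) : Prop :=
  ∃ (k : ℤ) (m : Fin n → ℤ), Q =
    {x : Rn n | ∀ i, (2:ℝ) ^ (-k) * m i ≤ x i ∧ x i < (2:ℝ) ^ (-k) * (m i + 1)}

/-- A sparse collection of dyadic cubes. -/
def IsSparse (n : ℕ) (S : Set (Set (Rn n))) : Prop :=
  (∀ Q ∈ S, IsDyadicCube n Q) ∧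
  ∃ E : Set (Rn n) → Set (Rn n),
    (∀ Q ∈ S, E Q ⊆ Q ∧ MeasurableSet (E Q) ∧ volume Q ≤ 2 * volume (E Q)) ∧
    S.Pairwise (fun Q Q' => Disjoint (E Q) (E Q'))

/-- Average `⟨w⟩_Q = |Q|⁻¹ ∫_Q w`. -/
def dAvg {n : ℕ} (w : Rn n → ℝ≥0∞) (Q : Set (Rn n)) : ℝ≥0∞ :=
  (volume Q)⁻¹ * ∫⁻ x in Q, w x

/-- Weighted average `⟨f⟩_Q^σ = σ(Q)⁻¹ ∫_Q f σ`. -/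
def dAvgW {n : ℕ} (σ f : Rn n → ℝ≥0∞) (Q : Set (Rn n)) : ℝ≥0∞ :=
  (∫⁻ x in Q, σ x)⁻¹ * ∫⁻ x in Q, f x * σ x

/-- Local integrability (w.r.t. dyadic cubes). -/
def LocInt {n : ℕ} (w : Rn n → ℝ≥0∞) : Prop :=
  ∀ Q : Set (Rn n), IsDyadicCube n Q → (∫⁻ x in Q, w x) < ∞

/-- The sparse operator `A_𝒮^r g = (∑_{Q∈𝒮} ⟨g⟩_Q^r 1_Q)^{1/r}`. -/
def sparseOp {n : ℕ} (S : Set (Set (Rn n))) (r : ℝ) (g : Rn n → ℝ≥0∞) (x : Rn n) : ℝ≥0∞ :=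
  (∑' Q : S, (Q : Set (Rn n)).indicator (fun _ => (dAvg g Q) ^ r) x) ^ (1 / r)

/-- `‖g‖_{L^p(w)} = (∫ g^p w)^{1/p}`. -/
def lpNorm {n : ℕ} (p : ℝ) (w g : Rn n → ℝ≥0∞) : ℝ≥0∞ :=
  (∫⁻ x, (g x) ^ p * w x) ^ (1 / p)

/-- `‖g‖_{L^{p,∞}(w)} = sup_{t>0} t · w({g > t})^{1/p}`. -/
def wLpNorm {n : ℕ} (p : ℝ) (w g : Rn n → ℝ≥0∞) : ℝ≥0∞ :=
  ⨆ (t : ℝ≥0) (_ : 0 < t), (t : ℝ≥0∞) * (∫⁻ x in {x | (t : ℝ≥0∞) < g x}, w x) ^ (1 / p)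

/-- `‖A_𝒮^r(·σ)‖_{L^p(σ)→L^p(w)}`, the least constant in the strong-type bound. -/
def opNormStrong {n : ℕ} (S : Set (Set (Rn n))) (r p : ℝ) (w σ : Rn n → ℝ≥0∞) : ℝ≥0∞ :=
  sInf {C : ℝ≥0∞ | ∀ f : Rn n → ℝ≥0∞, Measurable f →
    lpNorm p w (sparseOp S r (fun x => f x * σ x)) ≤ C * lpNorm p σ f}

/-- `‖A_𝒮^r(·σ)‖_{L^p(σ)→L^{p,∞}(w)}`, the least constant in the weak-type bound. -/
def opNormWeak {n : ℕ} (S : Set (Set (Rn n))) (r p : ℝ) (w σ : Rn n → ℝ≥0∞) : ℝ≥0∞ :=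
  sInf {C : ℝ≥0∞ | ∀ f : Rn n → ℝ≥0∞, Measurable f →
    wLpNorm p w (sparseOp S r (fun x => f x * σ x)) ≤ C * lpNorm p σ f}

/-- Two-weight (dyadic) `A_p` characteristic. -/
def ApChar {n : ℕ} (p : ℝ) (w σ : Rn n → ℝ≥0∞) : ℝ≥0∞ :=
  ⨆ (Q : Set (Rn n)) (_ : IsDyadicCube n Q), dAvg w Q * (dAvg σ Q) ^ (p - 1)

/-- Dyadic maximal operator. -/
def dyadicM {n : ℕ} (g : Rn n → ℝ≥0∞) (x : Rn n) : ℝ≥0∞ :=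
  ⨆ (Q : Set (Rn n)) (_ : IsDyadicCube n Q ∧ x ∈ Q), dAvg g Q

/-- Fujii–Wilson (dyadic) `A_∞` characteristic. -/
def AinfChar {n : ℕ} (w : Rn n → ℝ≥0∞) : ℝ≥0∞ :=
  ⨆ (Q : Set (Rn n)) (_ : IsDyadicCube n Q),
    (∫⁻ x in Q, w x)⁻¹ * ∫⁻ x in Q, dyadicM (Q.indicator w) x

/-- The testing constant `𝒯_s` (Theorem 1.4 uses `s = r`). -/
def testT {n : ℕ} (S : Set (Set (Rn n))) (p s : ℝ) (w σ : Rn n → ℝ≥0∞) : ℝ≥0∞ :=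
  ⨆ (R : Set (Rn n)) (_ : R ∈ S),
    (∫⁻ x in R, σ x) ^ (-(s / p)) *
      lpNorm (p / s) w (fun x => ∑' Q : {Q : Set (Rn n) // Q ∈ S ∧ Q ⊆ R},
        (Q : Set (Rn n)).indicator (fun _ => (dAvg σ Q) ^ s) x)

/-- The dual testing constant `𝒯*`. -/
def testTstar {n : ℕ} (S : Set (Set (Rn n))) (p r : ℝ) (w σ : Rn n → ℝ≥0∞) : ℝ≥0∞ :=
  ⨆ (R : Set (Rn n)) (_ : R ∈ S),
    (∫⁻ x in R, w x) ^ (-(1 - r / p)) *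
      lpNorm ((p / r) / (p / r - 1)) σ (fun x => ∑' Q : {Q : Set (Rn n) // Q ∈ S ∧ Q ⊆ R},
        (Q : Set (Rn n)).indicator (fun _ => (dAvg σ Q) ^ (r - 1) * dAvg w Q) x)


namespace Aux

variable {n : ℕ}

/-- The dyadic cube with parameters `k, m`. -/
def dc (n : ℕ) (k : ℤ) (m : Fin n → ℤ) : Set (Rn n) :=
  {x : Rn n | ∀ i, (2:ℝ) ^ (-k) * m i ≤ x i ∧ x i < (2:ℝ) ^ (-k) * (m i + 1)}

lemma isDyadicCube_iff {Q : Set (Rn n)} : IsDyadicCube n Q ↔ ∃ k m, Q = dc n k m := Iff.rfl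

lemma ico_step {k k' : ℤ} (hk : k ≤ k') {a a' : ℤ} {y : ℝ}
    (h1 : (2:ℝ)^(-k) * a ≤ y ∧ y < (2:ℝ)^(-k) * (a+1))
    (h2 : (2:ℝ)^(-k') * a' ≤ y ∧ y < (2:ℝ)^(-k') * (a'+1)) :
    ∀ z : ℝ, (2:ℝ)^(-k') * a' ≤ z ∧ z < (2:ℝ)^(-k') * (a'+1) →
      (2:ℝ)^(-k) * a ≤ z ∧ z < (2:ℝ)^(-k) * (a+1) := by
  have h2pos : (0:ℝ) < (2:ℝ)^(-k') := by positivity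
  set D : ℤ := 2 ^ (k' - k).toNat with hD
  have hDcast : ((D:ℤ):ℝ) = (2:ℝ) ^ (k' - k) := by
    rw [hD]; push_cast
    rw [← zpow_natCast (2:ℝ), Int.toNat_of_nonneg (by omega)]
  have hsplit : (2:ℝ)^(-k) = (2:ℝ)^(-k') * (D:ℝ) := by
    rw [hDcast, ← zpow_add₀ (two_ne_zero)]; congr 1; ring
  obtain ⟨h1l, h1r⟩ := h1; obtain ⟨h2l, h2r⟩ := h2
  have key1 : a' + 1 ≤ D * (a+1) := by
    have hr : (a':ℝ) < (D:ℝ) * ((a:ℝ)+1) := by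
      have h := h2l.trans_lt h1r
      rw [hsplit] at h
      have := lt_of_mul_lt_mul_left (a := (2:ℝ)^(-k')) (by linarith [h] : (2:ℝ)^(-k') * (a':ℝ) < (2:ℝ)^(-k') * ((D:ℝ) * ((a:ℝ)+1))) (le_of_lt h2pos)
      exact this
    have : (a' : ℤ) < D * (a+1) := by exact_mod_cast hr
    omega
  have key2 : D * a ≤ a' := by
    have hr : (D:ℝ) * (a:ℝ) < (a':ℝ) + 1 := by
      have h := h1l.trans_lt h2r
      rw [hsplit] at h
      have := lt_of_mul_lt_mul_left (a := (2:ℝ)^(-k')) (by linarith [h] : (2:ℝ)^(-k') * ((D:ℝ)*(a:ℝ)) < (2:ℝ)^(-k') * ((a':ℝ)+1)) (le_of_lt h2pos)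
      exact this
    have : D * a < a' + 1 := by exact_mod_cast hr
    omega
  intro z ⟨hzl, hzr⟩
  constructor
  · calc (2:ℝ)^(-k) * a = (2:ℝ)^(-k') * ((D:ℝ) * a) := by rw [hsplit]; ring
    _ ≤ (2:ℝ)^(-k') * a' := by
        apply mul_le_mul_of_nonneg_left _ (le_of_lt h2pos)
        exact_mod_cast key2
    _ ≤ z := hzl
  · calc z < (2:ℝ)^(-k') * (a'+1) := hzr
    _ ≤ (2:ℝ)^(-k') * ((D:ℝ) * ((a:ℝ)+1)) := by
        apply mul_le_mul_of_nonneg_left _ (le_of_lt h2pos)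
        exact_mod_cast key1
    _ = (2:ℝ)^(-k) * (a+1) := by rw [hsplit]; ring

lemma dc_subset_dc {k k' : ℤ} (hk : k ≤ k') {m m' : Fin n → ℤ} {x : Rn n}
    (hx : x ∈ dc n k m) (hx' : x ∈ dc n k' m') : dc n k' m' ⊆ dc n k m := by
  intro z hz i
  exact ico_step hk (hx i) (hx' i) (z i) (hz i)

lemma dc_measurable (k : ℤ) (m : Fin n → ℤ) : MeasurableSet (dc n k m) := by
  have : dc n k m = ⋂ i, (fun x : Rn n => x i) ⁻¹'
      (Ico ((2:ℝ)^(-k) * m i) ((2:ℝ)^(-k) * (m i + 1))) := by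
    ext x; simp [dc, Set.mem_Ico]
  rw [this]
  exact MeasurableSet.iInter fun i => (measurable_pi_apply i) measurableSet_Ico

lemma dc_volume_lt_top (k : ℤ) (m : Fin n → ℤ) : volume (dc n k m) < ∞ := by
  have : dc n k m = Set.pi Set.univ
      (fun i => Ico ((2:ℝ)^(-k) * m i) ((2:ℝ)^(-k) * (m i + 1))) := by
    ext x; simp [dc, Set.mem_pi, Set.mem_Ico]
  rw [this, volume_pi_pi]
  exact ENNReal.prod_lt_top (fun i _ => by simp [Real.volume_Ico])

lemma countable_dc : Set.Countable {Q : Set (Rn n) | ∃ km : ℤ × (Fin n → ℤ), Q = dc n km.1 km.2} := by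
  have : {Q : Set (Rn n) | ∃ km : ℤ × (Fin n → ℤ), Q = dc n km.1 km.2}
      = Set.range (fun km : ℤ × (Fin n → ℤ) => dc n km.1 km.2) := by
    ext Q; simp [Set.range, eq_comm]
  rw [this]; exact Set.countable_range _



/-- `tw a = 2^a` in `ℝ≥0∞`. -/
def tw (a : ℝ) : ℝ≥0∞ := (((2:ℝ≥0) ^ a : ℝ≥0) : ℝ≥0∞)

lemma tw_ne_top (a : ℝ) : tw a ≠ ∞ := ENNReal.coe_ne_top
lemma tw_lt_top (a : ℝ) : tw a < ∞ := ENNReal.coe_lt_top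
lemma tw_ne_zero (a : ℝ) : tw a ≠ 0 := by
  simp only [tw, ne_eq, ENNReal.coe_eq_zero]
  exact ne_of_gt (NNReal.rpow_pos (by norm_num))
lemma tw_pos (a : ℝ) : 0 < tw a := pos_iff_ne_zero.mpr (tw_ne_zero a)

lemma tw_add (a b : ℝ) : tw (a + b) = tw a * tw b := by
  simp only [tw, ← ENNReal.coe_mul]
  congr 1
  exact NNReal.rpow_add (by norm_num) a b

lemma tw_zero : tw 0 = 1 := by simp [tw]
lemma tw_one : tw 1 = 2 := by simp [tw]

lemma tw_rpow (a b : ℝ) : (tw a) ^ b = tw (a * b) := by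
  simp only [tw]
  rw [← ENNReal.coe_rpow_of_ne_zero (ne_of_gt (NNReal.rpow_pos (by norm_num)))]
  congr 1
  exact (NNReal.rpow_mul _ _ _).symm

lemma tw_pow (a : ℝ) (i : ℕ) : (tw a) ^ i = tw (a * i) := by
  rw [← ENNReal.rpow_natCast, tw_rpow]

lemma tw_inv (a : ℝ) : (tw a)⁻¹ = tw (-a) := by
  have : tw a * tw (-a) = 1 := by rw [← tw_add]; simp [tw_zero]
  exact ENNReal.eq_inv_of_mul_eq_one_left (by rw [mul_comm] at this; exact this) |>.symm

lemma tw_strictMono : StrictMono tw := by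
  intro a b hab
  simp only [tw, ENNReal.coe_lt_coe]
  exact NNReal.rpow_lt_rpow_of_exponent_lt (by norm_num) hab

lemma tw_mono : Monotone tw := tw_strictMono.monotone

lemma tw_lt_one {a : ℝ} (ha : a < 0) : tw a < 1 := by
  have := tw_strictMono ha; rwa [tw_zero] at this

lemma exists_tw {a : ℝ≥0∞} (h0 : a ≠ 0) (ht : a ≠ ∞) :
    ∃ J : ℤ, tw J ≤ a ∧ a < tw ((J:ℝ) + 1) := by
  obtain ⟨J, hJ⟩ := exists_mem_Ico_zpow (x := a.toNNReal) (y := 2)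
    (by simpa using ENNReal.toNNReal_pos h0 ht) (by norm_num)
  refine ⟨J, ?_, ?_⟩
  · have : tw J = (((2:ℝ≥0) ^ J : ℝ≥0) : ℝ≥0∞) := by
      simp only [tw]; congr 1; rw [← NNReal.rpow_intCast]
    rw [this, ← ENNReal.coe_toNNReal ht]
    exact ENNReal.coe_le_coe.mpr hJ.1
  · have : tw ((J:ℝ)+1) = (((2:ℝ≥0) ^ (J+1) : ℝ≥0) : ℝ≥0∞) := by
      simp only [tw]; congr 1; rw [← NNReal.rpow_intCast]; push_cast; ring_nf
    rw [this, ← ENNReal.coe_toNNReal ht]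
    exact ENNReal.coe_lt_coe.mpr hJ.2

/-- geometric sum over integers `≤ J`. -/
lemma tsum_int_le {φ : ℤ → ℝ≥0∞} {J : ℤ} {a ρ : ℝ≥0∞}
    (h0 : ∀ j, J < j → φ j = 0) (hle : ∀ i : ℕ, φ (J - i) ≤ a * ρ ^ i) :
    ∑' j : ℤ, φ j ≤ a * (1 - ρ)⁻¹ := by
  have hinj : Function.Injective (fun i : ℕ => J - (i:ℤ)) := by intro i j h; have : J - (i:ℤ) = J - (j:ℤ) := h; omega
  have hsupp : Function.support φ ⊆ Set.range (fun i : ℕ => J - (i:ℤ)) := by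
    intro j hj
    by_cases h : j ≤ J
    · exact ⟨(J - j).toNat, by show J - ((J - j).toNat : ℤ) = j; omega⟩
    · exact absurd (h0 j (by omega)) hj
  rw [← Function.Injective.tsum_eq hinj hsupp]
  calc ∑' i : ℕ, φ (J - i) ≤ ∑' i : ℕ, a * ρ ^ i := ENNReal.tsum_le_tsum hle
  _ = a * ∑' i : ℕ, ρ ^ i := ENNReal.tsum_mul_left
  _ = a * (1 - ρ)⁻¹ := by rw [ENNReal.tsum_geometric]

/-- helper: `a⁻¹ * (c * a) ≤ c`. -/
lemma inv_mul_cancel_le' (a c : ℝ≥0∞) : a⁻¹ * (c * a) ≤ c := by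
  rcases eq_or_ne a 0 with rfl | h0
  · simp
  rcases eq_or_ne a ∞ with rfl | ht
  · simp
  · rw [mul_comm c a, ← mul_assoc, ENNReal.inv_mul_cancel h0 ht, one_mul]

section Maximal
variable {n : ℕ}

def muA (μ : Measure (Rn n)) (g : Rn n → ℝ≥0∞) (Q : Set (Rn n)) : ℝ≥0∞ :=
  (μ Q)⁻¹ * ∫⁻ x in Q, g x ∂μ

def mx (μ : Measure (Rn n)) (g : Rn n → ℝ≥0∞) (x : Rn n) : ℝ≥0∞ :=
  ⨆ km : ℤ × (Fin n → ℤ), (dc n km.1 km.2).indicator (fun _ => muA μ g (dc n km.1 km.2)) x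

lemma mx_measurable (μ : Measure (Rn n)) (g : Rn n → ℝ≥0∞) : Measurable (mx μ g) :=
  Measurable.iSup fun km => Measurable.indicator measurable_const (dc_measurable _ _)

lemma muA_le_mx {μ : Measure (Rn n)} {g : Rn n → ℝ≥0∞} {k : ℤ} {m : Fin n → ℤ} {x : Rn n}
    (hx : x ∈ dc n k m) : muA μ g (dc n k m) ≤ mx μ g x := by
  have h := le_iSup (fun km : ℤ × (Fin n → ℤ) =>
    (dc n km.1 km.2).indicator (fun _ => muA μ g (dc n km.1 km.2)) x) (k, m)
  rwa [Set.indicator_of_mem hx] at h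

lemma const_le_muA {μ : Measure (Rn n)} {v : Rn n → ℝ≥0∞} {Q : Set (Rn n)} {c : ℝ≥0∞}
    (hQ : MeasurableSet Q) (h0 : μ Q ≠ 0) (ht : μ Q ≠ ∞)
    (hc : ∀ y ∈ Q, c ≤ v y) : c ≤ muA μ v Q := by
  have h1 : c * μ Q ≤ ∫⁻ x in Q, v x ∂μ := by
    rw [← setLIntegral_const]
    exact setLIntegral_mono' hQ hc
  calc c = (μ Q)⁻¹ * (c * μ Q) := by
        rw [mul_comm c, ← mul_assoc, ENNReal.inv_mul_cancel h0 ht, one_mul]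
  _ ≤ muA μ v Q := mul_le_mul_right h1 _

lemma muA_le_const {μ : Measure (Rn n)} {v : Rn n → ℝ≥0∞} {Q : Set (Rn n)} {c : ℝ≥0∞}
    (hQ : MeasurableSet Q) (hc : ∀ y ∈ Q, v y ≤ c) : muA μ v Q ≤ c := by
  have h1 : ∫⁻ x in Q, v x ∂μ ≤ c * μ Q := by
    rw [← setLIntegral_const]; exact setLIntegral_mono' hQ hc
  calc muA μ v Q ≤ (μ Q)⁻¹ * (c * μ Q) := mul_le_mul_right h1 _
  _ ≤ c := inv_mul_cancel_le' _ _

theorem mx_weak (μ : Measure (Rn n)) {g : Rn n → ℝ≥0∞} (s : ℝ≥0∞) :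
    s * μ {x | s < mx μ g x} ≤ ∫⁻ x, g x ∂μ := by
  rcases eq_or_ne s 0 with rfl | hs0
  · simp
  rcases eq_or_ne s ∞ with rfl | hst
  · have h : {x | (∞:ℝ≥0∞) < mx μ g x} = ∅ := by ext x; simp
    simp [h]
  set ν := μ.withDensity g with hν
  have hνa : ∀ Q : Set (Rn n), MeasurableSet Q → ν Q = ∫⁻ x in Q, g x ∂μ :=
    fun Q hQ => withDensity_apply g hQ
  set P : ℕ → ℤ × (Fin n → ℤ) → Prop :=
    fun N km => -(N:ℤ) ≤ km.1 ∧ s < muA μ g (dc n km.1 km.2) with hP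
  set G : ℕ → Set (Rn n) :=
    fun N => ⋃ km : ℤ × (Fin n → ℤ), ⋃ (_ : P N km), dc n km.1 km.2 with hG
  have hGsel : ∀ N : ℕ, ∀ x ∈ G N, ∃ km, P N km ∧ x ∈ dc n km.1 km.2 ∧
      ∀ km', P N km' → x ∈ dc n km'.1 km'.2 → km.1 ≤ km'.1 := by
    intro N x hx
    simp only [hG, Set.mem_iUnion] at hx
    obtain ⟨km0, hP0, hx0⟩ := hx
    obtain ⟨k0, ⟨m0, hPm, hxm⟩, hleast⟩ := Int.exists_least_of_bdd
      (P := fun z => ∃ m, P N (z, m) ∧ x ∈ dc n z m)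
      ⟨-(N:ℤ), fun z hz => hz.choose_spec.1.1⟩ ⟨km0.1, km0.2, hP0, hx0⟩
    exact ⟨(k0, m0), hPm, hxm, fun km' hP' hx' => hleast km'.1 ⟨km'.2, hP', hx'⟩⟩
  have claim : ∀ N : ℕ, s * μ (G N) ≤ ν (G N) := by
    intro N
    choose sel hsel1 hsel2 hsel3 using hGsel N
    set C : Set (Set (Rn n)) :=
      {Q | ∃ x, ∃ hx : x ∈ G N, Q = dc n (sel x hx).1 (sel x hx).2} with hC
    have hCd : ∀ Q ∈ C, ∃ km, P N km ∧ Q = dc n km.1 km.2 := by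
      rintro Q ⟨x, hx, rfl⟩; exact ⟨sel x hx, hsel1 x hx, rfl⟩
    have hCcount : C.Countable := by
      apply Set.Countable.mono _ (countable_dc (n := n))
      intro Q hQ; obtain ⟨km, _, h⟩ := hCd Q hQ; exact ⟨km, h⟩
    have hCmeas : ∀ Q ∈ C, MeasurableSet Q := by
      intro Q hQ; obtain ⟨km, _, rfl⟩ := hCd Q hQ; exact dc_measurable _ _
    have hkey : ∀ (x) (hx : x ∈ G N) (y) (hy : y ∈ G N), (sel x hx).1 ≤ (sel y hy).1 →
        ∀ z, z ∈ dc n (sel x hx).1 (sel x hx).2 → z ∈ dc n (sel y hy).1 (sel y hy).2 →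
        dc n (sel x hx).1 (sel x hx).2 = dc n (sel y hy).1 (sel y hy).2 := by
      intro x hx y hy hk z hz1 hz2
      have hsub : dc n (sel y hy).1 (sel y hy).2 ⊆ dc n (sel x hx).1 (sel x hx).2 :=
        dc_subset_dc hk hz1 hz2
      have hk2 : (sel y hy).1 ≤ (sel x hx).1 :=
        hsel3 y hy _ (hsel1 x hx) (hsub (hsel2 y hy))
      exact Set.Subset.antisymm (dc_subset_dc hk2 hz2 hz1) hsub
    have hCdisj : C.Pairwise Disjoint := by
      rintro Q ⟨x, hx, rfl⟩ Q' ⟨y, hy, rfl⟩ hne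
      by_contra hnd
      obtain ⟨z, hz1, hz2⟩ := Set.not_disjoint_iff.mp hnd
      rcases le_total (sel x hx).1 (sel y hy).1 with hk | hk
      · exact hne (hkey x hx y hy hk z hz1 hz2)
      · exact hne (hkey y hy x hx hk z hz2 hz1).symm
    have hGC : G N = ⋃₀ C := by
      apply Set.Subset.antisymm
      · intro x hx
        exact ⟨dc n (sel x hx).1 (sel x hx).2, ⟨x, hx, rfl⟩, hsel2 x hx⟩
      · intro z hz
        obtain ⟨Q, hQC, hzQ⟩ := hz
        obtain ⟨km, hPkm, rfl⟩ := hCd Q hQC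
        simp only [hG, Set.mem_iUnion]
        exact ⟨km, hPkm, hzQ⟩
    have hper : ∀ Q ∈ C, s * μ Q ≤ ν Q := by
      intro Q hQC
      obtain ⟨km, hPkm, rfl⟩ := hCd Q hQC
      have hlt : s < muA μ g (dc n km.1 km.2) := hPkm.2
      rcases eq_or_ne (μ (dc n km.1 km.2)) 0 with h0 | h0
      · simp [h0]
      rcases eq_or_ne (μ (dc n km.1 km.2)) ∞ with hT | hT
      · rw [muA, hT] at hlt; simp at hlt
      · rw [hνa _ (dc_measurable _ _)]
        calc s * μ (dc n km.1 km.2) ≤ muA μ g (dc n km.1 km.2) * μ (dc n km.1 km.2) :=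
              mul_le_mul_left (le_of_lt hlt) _
        _ = ∫⁻ x in dc n km.1 km.2, g x ∂μ := by
            rw [muA, mul_comm _ (μ (dc n km.1 km.2)), ← mul_assoc,
              ENNReal.mul_inv_cancel h0 hT, one_mul]
    calc s * μ (G N) = s * ∑' Q : C, μ (Q : Set (Rn n)) := by
          rw [hGC, measure_sUnion hCcount hCdisj hCmeas]
    _ = ∑' Q : C, s * μ (Q : Set (Rn n)) := ENNReal.tsum_mul_left.symm
    _ ≤ ∑' Q : C, ν (Q : Set (Rn n)) := ENNReal.tsum_le_tsum (fun Q => hper Q Q.2)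
    _ = ν (⋃₀ C) := (measure_sUnion hCcount hCdisj hCmeas).symm
    _ = ν (G N) := by rw [hGC]
  have hUnion : {x | s < mx μ g x} = ⋃ N : ℕ, G N := by
    ext x
    simp only [Set.mem_setOf_eq, Set.mem_iUnion, hG]
    constructor
    · intro hx
      obtain ⟨km, hkm⟩ := lt_iSup_iff.mp hx
      have hmem : x ∈ dc n km.1 km.2 := by
        by_contra hmem
        rw [Set.indicator_of_notMem hmem] at hkm
        simp at hkm
      rw [Set.indicator_of_mem hmem] at hkm
      exact ⟨(-km.1).toNat, km, ⟨by omega, hkm⟩, hmem⟩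
    · rintro ⟨N, km, ⟨_, hkm⟩, hmem⟩
      exact hkm.trans_le (muA_le_mx hmem)
  have hmono : Monotone G := by
    intro N M hNM x hx
    simp only [hG, Set.mem_iUnion] at hx ⊢
    obtain ⟨km, ⟨h1, h2⟩, hmem⟩ := hx
    have : (N:ℤ) ≤ (M:ℤ) := by exact_mod_cast hNM
    exact ⟨km, ⟨by omega, h2⟩, hmem⟩
  rw [hUnion, Directed.measure_iUnion (Monotone.directed_le hmono), ENNReal.mul_iSup]
  apply iSup_le
  intro N
  refine (claim N).trans ((measure_mono (Set.subset_univ _)).trans ?_)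
  rw [hνa Set.univ MeasurableSet.univ, setLIntegral_univ]

theorem mx_split (μ : Measure (Rn n)) {g : Rn n → ℝ≥0∞} (hg : Measurable g)
    {t : ℝ≥0∞} (ht0 : t ≠ 0) (htt : t ≠ ∞) :
    μ {x | t < mx μ g x} ≤ 2 * t⁻¹ * ∫⁻ x, ({y | t/2 < g y}.indicator g) x ∂μ := by
  set c := t / 2 with hc
  have hc0 : c ≠ 0 := by
    simp only [hc, ne_eq, ENNReal.div_eq_zero_iff]
    push_neg; exact ⟨ht0, by norm_num⟩
  have hct : c ≠ ∞ := by
    rw [hc]; exact (ENNReal.div_lt_top htt (by norm_num)).ne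
  set g1 : Rn n → ℝ≥0∞ := {y | c < g y}.indicator g with hg1
  have hg1m : Measurable g1 := hg.indicator (measurableSet_lt measurable_const hg)
  have hpoint : ∀ x, mx μ g x ≤ mx μ g1 x + c := by
    intro x
    apply iSup_le
    intro km
    by_cases hmem : x ∈ dc n km.1 km.2
    · rw [Set.indicator_of_mem hmem]
      set Q := dc n km.1 km.2 with hQ
      have hdec : muA μ g Q ≤ muA μ g1 Q + c := by
        have hsum : ∀ y, g y = g1 y + ({y | c < g y}ᶜ.indicator g) y := by
          intro y
          by_cases hy : y ∈ {y | c < g y}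
          · rw [hg1, Set.indicator_of_mem hy, Set.indicator_of_notMem (by simpa using hy)]
            simp
          · rw [hg1, Set.indicator_of_notMem hy, Set.indicator_of_mem (by simpa using hy)]
            simp
        have hint : ∫⁻ y in Q, g y ∂μ
            = ∫⁻ y in Q, g1 y ∂μ + ∫⁻ y in Q, ({y | c < g y}ᶜ.indicator g) y ∂μ := by
          rw [← lintegral_add_left hg1m]
          exact lintegral_congr fun y => hsum y
        have hsecond : (μ Q)⁻¹ * ∫⁻ y in Q, ({y | c < g y}ᶜ.indicator g) y ∂μ ≤ c := by
          have hle : ∫⁻ y in Q, ({y | c < g y}ᶜ.indicator g) y ∂μ ≤ c * μ Q := by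
            rw [← setLIntegral_const]
            refine setLIntegral_mono' (dc_measurable _ _) (fun y _ => ?_)
            by_cases hy : y ∈ {y | c < g y}ᶜ
            · rw [Set.indicator_of_mem hy]
              exact le_of_not_gt (by simpa using hy)
            · rw [Set.indicator_of_notMem hy]; exact zero_le
          exact (mul_le_mul_right hle _).trans (inv_mul_cancel_le' _ _)
        calc muA μ g Q = (μ Q)⁻¹ * ∫⁻ y in Q, g y ∂μ := rfl
        _ = (μ Q)⁻¹ * ∫⁻ y in Q, g1 y ∂μ
            + (μ Q)⁻¹ * ∫⁻ y in Q, ({y | c < g y}ᶜ.indicator g) y ∂μ := by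
              rw [hint, mul_add]
        _ ≤ muA μ g1 Q + c := add_le_add le_rfl hsecond
      exact hdec.trans (add_le_add_left (muA_le_mx hmem) c)
    · rw [Set.indicator_of_notMem hmem]; exact zero_le
  have hsubset : {x | t < mx μ g x} ⊆ {x | c < mx μ g1 x} := by
    intro x hx
    simp only [Set.mem_setOf_eq] at hx ⊢
    by_contra hle
    push_neg at hle
    have h2 : mx μ g x ≤ c + c := (hpoint x).trans (add_le_add_left hle c)
    rw [hc, ENNReal.add_halves] at h2
    exact absurd hx (not_lt_of_ge h2)
  calc μ {x | t < mx μ g x} ≤ μ {x | c < mx μ g1 x} := measure_mono hsubset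
  _ = c⁻¹ * (c * μ {x | c < mx μ g1 x}) := by
      rw [← mul_assoc, ENNReal.inv_mul_cancel hc0 hct, one_mul]
  _ ≤ c⁻¹ * ∫⁻ x, g1 x ∂μ := mul_le_mul_right (mx_weak μ c) _
  _ = 2 * t⁻¹ * ∫⁻ x, g1 x ∂μ := by
      congr 1
      rw [hc, div_eq_mul_inv, ENNReal.mul_inv (Or.inl ht0) (Or.inl htt), mul_comm]
      congr 1
      simp

/-- The constant in the strong-type maximal inequality. -/
def mxC (q : ℝ) : ℝ≥0∞ := 2 * tw (3*q - 1) * (1 - tw (1 - q))⁻¹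

lemma mxC_ne_zero (q : ℝ) : mxC q ≠ 0 := by
  have h1 : (1 - tw (1 - q))⁻¹ ≠ 0 := ENNReal.inv_ne_zero.mpr
    (ne_top_of_le_ne_top ENNReal.one_ne_top tsub_le_self)
  simp only [mxC, ne_eq, mul_eq_zero]
  push_neg
  exact ⟨⟨by norm_num, tw_ne_zero _⟩, h1⟩

lemma mxC_ne_top {q : ℝ} (hq : 1 < q) : mxC q ≠ ∞ := by
  have hlt : tw (1 - q) < 1 := tw_lt_one (by linarith)
  have h1 : (1 - tw (1 - q))⁻¹ ≠ ∞ := by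
    rw [ne_eq, ENNReal.inv_eq_top]
    exact ne_of_gt (tsub_pos_of_lt hlt)
  exact ENNReal.mul_ne_top (ENNReal.mul_ne_top (by norm_num) (tw_ne_top _)) h1

set_option maxHeartbeats 1000000 in
theorem mx_strong (μ : Measure (Rn n)) {g : Rn n → ℝ≥0∞} (hg : Measurable g)
    {q : ℝ} (hq : 1 < q) :
    ∫⁻ x, (mx μ g x) ^ q ∂μ ≤ mxC q * ∫⁻ x, (g x) ^ q ∂μ := by
  have hq0 : (0:ℝ) < q := by linarith
  by_cases hfin : ∫⁻ x, (g x) ^ q ∂μ = ∞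
  · rw [hfin, ENNReal.mul_top (mxC_ne_zero q)]; exact le_top
  set A := ∫⁻ x, (g x) ^ q ∂μ with hA
  set ρ : ℝ≥0∞ := tw (1 - q) with hρ
  have hρ1 : ρ < 1 := tw_lt_one (by linarith)
  -- pointwise: if `tw s < g y` then `g y ≤ tw (s*(1-q)) * g y ^ q`.
  have hptwise : ∀ (s : ℝ) (y : Rn n), ({y | tw s < g y}.indicator g) y
      ≤ tw (s * (1-q)) * g y ^ q := by
    intro s y
    by_cases hy : y ∈ {y | tw s < g y}
    · rw [Set.indicator_of_mem hy]
      simp only [Set.mem_setOf_eq] at hy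
      rcases eq_or_ne (g y) ∞ with hgy | hgy
      · rw [hgy, ENNReal.top_rpow_of_pos hq0, ENNReal.mul_top (tw_ne_zero _)]
      · have hgy0 : g y ≠ 0 := by
          intro h
          rw [h] at hy
          exact absurd hy (by simp)
        have h1 : g y ^ (1 - q) ≤ tw (s * (1-q)) := by
          have h2 : tw s ^ (q - 1) ≤ g y ^ (q - 1) :=
            ENNReal.rpow_le_rpow (le_of_lt hy) (by linarith)
          have h3 : (g y ^ (q-1))⁻¹ ≤ (tw s ^ (q-1))⁻¹ := ENNReal.inv_le_inv.mpr h2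
          calc g y ^ (1 - q) = (g y ^ (q-1))⁻¹ := by
                rw [← ENNReal.rpow_neg]; congr 1; ring
          _ ≤ (tw s ^ (q-1))⁻¹ := h3
          _ = tw (s * (1-q)) := by rw [tw_rpow, tw_inv]; congr 1; ring
        calc g y = g y ^ (q + (1-q)) := by
              rw [show q + (1-q) = (1:ℝ) by ring, ENNReal.rpow_one]
        _ = g y ^ q * g y ^ (1-q) := ENNReal.rpow_add _ _ hgy0 hgy
        _ ≤ g y ^ q * tw (s * (1-q)) := mul_le_mul_right h1 _
        _ = tw (s * (1-q)) * g y ^ q := mul_comm _ _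
    · rw [Set.indicator_of_notMem hy]; exact zero_le
  -- μ{mx = ∞} = 0
  have hnull : μ {x | mx μ g x = ∞} = 0 := by
    have hbd : ∀ k : ℕ, μ {x | mx μ g x = ∞} ≤ (2 * tw (q-1) * A) * (tw (-q)) ^ k := by
      intro k
      have hsub : {x | mx μ g x = ∞} ⊆ {x | tw k < mx μ g x} := by
        intro x hx; simp only [Set.mem_setOf_eq] at hx ⊢; rw [hx]; exact tw_lt_top _
      have h1 := mx_split μ hg (tw_ne_zero (k:ℝ)) (tw_ne_top (k:ℝ))
      have h2 : tw (k:ℝ) / 2 = tw ((k:ℝ) - 1) := by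
        rw [div_eq_mul_inv, show ((2:ℝ≥0∞) = tw 1) from tw_one.symm, tw_inv, ← tw_add]
        congr 1 <;> ring
      have h3 : ∫⁻ y, ({y | tw ((k:ℝ)-1) < g y}.indicator g) y ∂μ
          ≤ tw (((k:ℝ)-1) * (1-q)) * A := by
        rw [hA, ← lintegral_const_mul' _ _ (tw_ne_top _)]
        exact lintegral_mono fun y => hptwise ((k:ℝ)-1) y
      calc μ {x | mx μ g x = ∞} ≤ μ {x | tw (k:ℝ) < mx μ g x} := measure_mono hsub
      _ ≤ 2 * (tw (k:ℝ))⁻¹ * ∫⁻ y, ({y | tw ((k:ℝ)-1) < g y}.indicator g) y ∂μ := by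
          rw [h2] at h1; exact h1
      _ ≤ 2 * tw (-(k:ℝ)) * (tw (((k:ℝ)-1) * (1-q)) * A) := by
          rw [tw_inv]; exact mul_le_mul_right h3 _
      _ = (2 * tw (q-1) * A) * (tw (-q)) ^ k := by
          rw [tw_pow]
          have hmerge : tw (((k:ℝ)-1) * (1-q)) * tw (-(k:ℝ))
              = tw (q-1) * tw (-q*(k:ℝ)) := by
            rw [← tw_add, ← tw_add]; congr 1 <;> ring
          calc 2 * tw (-(k:ℝ)) * (tw (((k:ℝ)-1) * (1-q)) * A)
              = 2 * (tw (((k:ℝ)-1) * (1-q)) * tw (-(k:ℝ))) * A := by ring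
          _ = 2 * (tw (q-1) * tw (-q*(k:ℝ))) * A := by rw [hmerge]
          _ = 2 * tw (q-1) * A * tw (-q*(k:ℝ)) := by ring
    have htend : Filter.Tendsto (fun k : ℕ => (2 * tw (q-1) * A) * (tw (-q)) ^ k)
        Filter.atTop (nhds 0) := by
      have h0 : Filter.Tendsto (fun k : ℕ => (tw (-q)) ^ k) Filter.atTop (nhds 0) :=
        ENNReal.tendsto_pow_atTop_nhds_zero_of_lt_one (tw_lt_one (by linarith))
      have := ENNReal.Tendsto.const_mul (a := 2 * tw (q-1) * A) h0
        (Or.inr (ENNReal.mul_ne_top (ENNReal.mul_ne_top (by norm_num) (tw_ne_top _)) hfin))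
      simpa using this
    exact le_antisymm (ge_of_tendsto' htend hbd) (zero_le)
  -- decomposition over dyadic levels
  have hme : Measurable (mx μ g) := mx_measurable μ g
  set E : ℤ → Set (Rn n) :=
    fun j => {x | tw (j:ℝ) ≤ mx μ g x ∧ mx μ g x < tw ((j:ℝ)+1)} with hE
  have hEmeas : ∀ j, MeasurableSet (E j) := fun j => hme measurableSet_Ico
  have htopm : MeasurableSet {x | mx μ g x = ∞} := hme (measurableSet_singleton ∞)
  have hsplit1 : ∫⁻ x, (mx μ g x) ^ q ∂μ
      = ∫⁻ x in {x | mx μ g x = ∞}ᶜ, (mx μ g x) ^ q ∂μ := by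
    rw [← lintegral_add_compl (fun x => (mx μ g x)^q) htopm,
      setLIntegral_measure_zero _ _ hnull, zero_add]
  have hcover : {x | mx μ g x = ∞}ᶜ ⊆ {x | mx μ g x = 0} ∪ ⋃ j : ℤ, E j := by
    intro x hx
    simp only [Set.mem_compl_iff, Set.mem_setOf_eq] at hx
    rcases eq_or_ne (mx μ g x) 0 with h0 | h0
    · exact Or.inl h0
    · obtain ⟨J, hJ1, hJ2⟩ := exists_tw h0 hx
      exact Or.inr (Set.mem_iUnion.mpr ⟨J, hJ1, hJ2⟩)
  have hzero : ∫⁻ x in {x | mx μ g x = 0}, (mx μ g x) ^ q ∂μ = 0 := by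
    have h : ∀ᵐ x ∂μ, x ∈ {x | mx μ g x = 0} → (mx μ g x) ^ q = (fun _ => (0:ℝ≥0∞)) x :=
      ae_of_all _ (fun x hx => by
        rw [Set.mem_setOf_eq] at hx; rw [hx]; exact ENNReal.zero_rpow_of_pos hq0)
    have hs0m : MeasurableSet {x | mx μ g x = 0} := hme (measurableSet_singleton 0)
    rw [setLIntegral_congr_fun_ae hs0m h]
    simp
  set I : ℤ → Rn n → ℝ≥0∞ := fun j => ({y | tw ((j:ℝ)-2) < g y}).indicator g with hI
  have hImeas : ∀ j, Measurable (I j) :=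
    fun j => hg.indicator (measurableSet_lt measurable_const hg)
  set D : ℤ → ℝ≥0∞ := fun j => tw (((j:ℝ)+1)*q + (1-(j:ℝ))) with hD
  have hEbound : ∀ j : ℤ, ∫⁻ x in E j, (mx μ g x) ^ q ∂μ
      ≤ 2 * (D j * ∫⁻ y, I j y ∂μ) := by
    intro j
    have h1 : ∫⁻ x in E j, (mx μ g x) ^ q ∂μ ≤ tw (((j:ℝ)+1)*q) * μ (E j) := by
      rw [← setLIntegral_const]
      refine setLIntegral_mono' (hEmeas j) (fun x hx => ?_)
      calc (mx μ g x)^q ≤ (tw ((j:ℝ)+1))^q := ENNReal.rpow_le_rpow hx.2.le hq0.le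
      _ = tw (((j:ℝ)+1)*q) := tw_rpow _ _
    have h2 : μ (E j) ≤ μ {x | tw ((j:ℝ)-1) < mx μ g x} := by
      apply measure_mono
      intro x hx
      exact lt_of_lt_of_le (tw_strictMono (by linarith)) hx.1
    have hhalf : tw ((j:ℝ)-1) / 2 = tw ((j:ℝ)-2) := by
      rw [div_eq_mul_inv, show ((2:ℝ≥0∞) = tw 1) from tw_one.symm, tw_inv, ← tw_add]
      congr 1; ring
    have h3 := mx_split μ hg (tw_ne_zero ((j:ℝ)-1)) (tw_ne_top ((j:ℝ)-1))
    rw [hhalf] at h3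
    have h4 : μ (E j) ≤ 2 * tw (1-(j:ℝ)) * ∫⁻ y, I j y ∂μ := by
      refine h2.trans (h3.trans ?_)
      rw [tw_inv, show -((j:ℝ)-1) = 1-(j:ℝ) by ring]
    calc ∫⁻ x in E j, (mx μ g x) ^ q ∂μ ≤ tw (((j:ℝ)+1)*q) * μ (E j) := h1
    _ ≤ tw (((j:ℝ)+1)*q) * (2 * tw (1-(j:ℝ)) * ∫⁻ y, I j y ∂μ) := mul_le_mul_right h4 _
    _ = 2 * (D j * ∫⁻ y, I j y ∂μ) := by
        have hmerge : tw (((j:ℝ)+1)*q) * tw (1-(j:ℝ))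
            = tw (((j:ℝ)+1)*q + (1-(j:ℝ))) := (tw_add _ _).symm
        calc tw (((j:ℝ)+1)*q) * (2 * tw (1-(j:ℝ)) * ∫⁻ y, I j y ∂μ)
            = 2 * (tw (((j:ℝ)+1)*q) * tw (1-(j:ℝ)) * ∫⁻ y, I j y ∂μ) := by ring
        _ = 2 * (tw (((j:ℝ)+1)*q + (1-(j:ℝ))) * ∫⁻ y, I j y ∂μ) := by rw [hmerge]
  have hswap : ∑' j : ℤ, D j * ∫⁻ y, I j y ∂μ = ∫⁻ y, ∑' j : ℤ, D j * I j y ∂μ := by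
    rw [lintegral_tsum (fun j => ((hImeas j).const_mul (D j)).aemeasurable)]
    congr 1; funext j; exact (lintegral_const_mul' (D j) _ (tw_ne_top _)).symm
  have hC1ne0 : tw (3*q-1) * (1-ρ)⁻¹ ≠ 0 :=
    mul_ne_zero (tw_ne_zero _) (ENNReal.inv_ne_zero.mpr
      (ne_top_of_le_ne_top ENNReal.one_ne_top tsub_le_self))
  have hpt2 : ∀ y, ∑' j : ℤ, D j * I j y ≤ (tw (3*q-1) * (1 - ρ)⁻¹) * g y ^ q := by
    intro y
    rcases eq_or_ne (g y) 0 with h0 | h0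
    · have hz : ∀ j : ℤ, D j * I j y = 0 := by
        intro j
        have hIy : I j y = 0 := by
          apply Set.indicator_of_notMem
          simp [h0]
        rw [hIy, mul_zero]
      simp [hz]
    rcases eq_or_ne (g y) ∞ with htop' | htop'
    · rw [htop', ENNReal.top_rpow_of_pos hq0, ENNReal.mul_top hC1ne0]
      exact le_top
    obtain ⟨J, hJ1, hJ2⟩ := exists_tw h0 htop'
    have hvan : ∀ j : ℤ, J + 2 < j → D j * I j y = 0 := by
      intro j hj
      have hIy : I j y = 0 := by
        apply Set.indicator_of_notMem
        simp only [Set.mem_setOf_eq, not_lt]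
        refine hJ2.le.trans (tw_mono ?_)
        push_cast
        have : (J:ℝ) + 3 ≤ (j:ℝ) := by exact_mod_cast (by omega : J + 3 ≤ j)
        linarith
      rw [hIy, mul_zero]
    have hgeo : ∀ i : ℕ, D (J + 2 - i) * I (J+2-i) y
        ≤ (tw (((J:ℝ)+3)*q - ((J:ℝ)+1)) * g y) * ρ ^ i := by
      intro i
      have h1 : I (J+2-i) y ≤ g y := Set.indicator_le_self _ _ y
      have h2 : D (J+2-(i:ℤ)) = tw (((J:ℝ)+3)*q - ((J:ℝ)+1)) * ρ ^ i := by
        simp only [hD, hρ]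
        rw [tw_pow, ← tw_add]
        congr 1
        push_cast
        ring
      rw [h2]
      calc tw (((J:ℝ)+3)*q - ((J:ℝ)+1)) * ρ ^ i * I (J+2-i) y
          ≤ tw (((J:ℝ)+3)*q - ((J:ℝ)+1)) * ρ ^ i * g y := mul_le_mul_right h1 _
      _ = (tw (((J:ℝ)+3)*q - ((J:ℝ)+1)) * g y) * ρ ^ i := by ring
    refine (tsum_int_le hvan hgeo).trans ?_
    have hJle : tw (((J:ℝ)+3)*q - ((J:ℝ)+1)) ≤ tw (3*q-1) * g y ^ (q-1) := by
      have hh : tw ((J:ℝ)*(q-1)) ≤ g y ^ (q-1) := by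
        rw [← tw_rpow]
        exact ENNReal.rpow_le_rpow hJ1 (by linarith)
      calc tw (((J:ℝ)+3)*q - ((J:ℝ)+1)) = tw (3*q-1) * tw ((J:ℝ)*(q-1)) := by
            rw [← tw_add]; congr 1 <;> ring
      _ ≤ tw (3*q-1) * g y ^ (q-1) := mul_le_mul_right hh _
    calc (tw (((J:ℝ)+3)*q - ((J:ℝ)+1)) * g y) * (1-ρ)⁻¹
        ≤ (tw (3*q-1) * g y ^ (q-1) * g y) * (1-ρ)⁻¹ :=
          mul_le_mul_left (mul_le_mul_left hJle _) _
    _ = (tw (3*q-1) * (1-ρ)⁻¹) * (g y ^ (q-1) * g y ^ (1:ℝ)) := by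
          rw [ENNReal.rpow_one]; ring
    _ = (tw (3*q-1) * (1-ρ)⁻¹) * g y ^ q := by
          rw [← ENNReal.rpow_add _ _ h0 htop', show q - 1 + 1 = q by ring]
  calc ∫⁻ x, (mx μ g x)^q ∂μ
      = ∫⁻ x in {x | mx μ g x = ∞}ᶜ, (mx μ g x)^q ∂μ := hsplit1
  _ ≤ ∫⁻ x in {x | mx μ g x = 0} ∪ ⋃ j : ℤ, E j, (mx μ g x)^q ∂μ :=
      lintegral_mono_set hcover
  _ ≤ ∫⁻ x in {x | mx μ g x = 0}, (mx μ g x)^q ∂μ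
      + ∫⁻ x in ⋃ j : ℤ, E j, (mx μ g x)^q ∂μ := by
      rw [← lintegral_add_measure]
      exact lintegral_mono' (Measure.restrict_union_le _ _) le_rfl
  _ = ∫⁻ x in ⋃ j : ℤ, E j, (mx μ g x)^q ∂μ := by rw [hzero, zero_add]
  _ ≤ ∑' j : ℤ, ∫⁻ x in E j, (mx μ g x)^q ∂μ := lintegral_iUnion_le _ _
  _ ≤ ∑' j : ℤ, 2 * (D j * ∫⁻ y, I j y ∂μ) := ENNReal.tsum_le_tsum hEbound
  _ = 2 * ∑' j : ℤ, D j * ∫⁻ y, I j y ∂μ := ENNReal.tsum_mul_left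
  _ = 2 * ∫⁻ y, ∑' j : ℤ, D j * I j y ∂μ := by rw [hswap]
  _ ≤ 2 * ∫⁻ y, (tw (3*q-1) * (1 - ρ)⁻¹) * g y ^ q ∂μ :=
      mul_le_mul_right (lintegral_mono hpt2) _
  _ = 2 * ((tw (3*q-1) * (1 - ρ)⁻¹) * A) := by
      rw [lintegral_const_mul' _ _ (ENNReal.mul_ne_top (tw_ne_top _)
        (ENNReal.inv_ne_top.mpr (ne_of_gt (tsub_pos_of_lt hρ1))))]
  _ = mxC q * A := by rw [mxC]; ring

end Maximal

section Glue
variable {n : ℕ}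

lemma meas_rpow {f : Rn n → ℝ≥0∞} (hf : Measurable f) (y : ℝ) :
    Measurable fun x => f x ^ y :=
  ENNReal.continuous_rpow_const.measurable.comp hf

/-- converting weighted set integrals to `withDensity` integrals -/
lemma lint_wd {σ f : Rn n → ℝ≥0∞} (hσ : Measurable σ) (hf : Measurable f) {Q : Set (Rn n)}
    (hQ : MeasurableSet Q) :
    ∫⁻ x in Q, f x * σ x = ∫⁻ x in Q, f x ∂(volume.withDensity σ) := by
  rw [restrict_withDensity hQ, lintegral_withDensity_eq_lintegral_mul _ hσ hf]
  exact lintegral_congr fun x => (mul_comm (σ x) (f x)).symm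

lemma lint_wd' {σ f : Rn n → ℝ≥0∞} (hσ : Measurable σ) (hf : Measurable f) :
    ∫⁻ x, f x * σ x = ∫⁻ x, f x ∂(volume.withDensity σ) := by
  rw [lintegral_withDensity_eq_lintegral_mul _ hσ hf]
  exact lintegral_congr fun x => (mul_comm (σ x) (f x)).symm

lemma wd_apply {σ : Rn n → ℝ≥0∞} {Q : Set (Rn n)} (hQ : MeasurableSet Q) :
    (volume.withDensity σ) Q = ∫⁻ x in Q, σ x := withDensity_apply σ hQ

/-- if `∫_Q σ = 0` then `∫_Q f σ = 0`. -/
lemma setl_zero {σ f : Rn n → ℝ≥0∞} (hσ : Measurable σ) {Q : Set (Rn n)}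
    (h0 : ∫⁻ x in Q, σ x = 0) :
    ∫⁻ x in Q, f x * σ x = 0 := by
  have hae : σ =ᵐ[volume.restrict Q] 0 := (lintegral_eq_zero_iff hσ).mp h0
  have hae2 : (fun x => f x * σ x) =ᵐ[volume.restrict Q] 0 := by
    filter_upwards [hae] with x hx
    simp only [Pi.zero_apply] at hx ⊢
    rw [hx, mul_zero]
  rw [lintegral_congr_ae hae2]; simp

/-- `⟨fσ⟩_Q = ⟨σ⟩_Q ⟨f⟩_Q^σ`. -/
lemma avg_factor {σ f : Rn n → ℝ≥0∞} (hσ : Measurable σ) {Q : Set (Rn n)}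
    (hfin : ∫⁻ x in Q, σ x ≠ ∞) :
    dAvg (fun x => f x * σ x) Q = dAvg σ Q * dAvgW σ f Q := by
  rcases eq_or_ne (∫⁻ x in Q, σ x) 0 with h0 | h0
  · rw [dAvg, dAvg, dAvgW, setl_zero hσ h0, h0]
    simp
  · rw [dAvg, dAvg, dAvgW]
    rw [mul_assoc, ← mul_assoc (∫⁻ x in Q, σ x), ENNReal.mul_inv_cancel h0 hfin, one_mul]

/-- `dAvgW` as `muA` of the `withDensity` measure. -/
lemma dAvgW_eq_muA {σ f : Rn n → ℝ≥0∞} (hσ : Measurable σ) (hf : Measurable f)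
    {Q : Set (Rn n)} (hQ : MeasurableSet Q) :
    dAvgW σ f Q = muA (volume.withDensity σ) f Q := by
  rw [dAvgW, muA, wd_apply hQ, lint_wd hσ hf hQ]

lemma lpNorm_rpow {p r : ℝ} (hp : 0 < p) (hr : 0 < r) (w g : Rn n → ℝ≥0∞) :
    lpNorm p w g ^ r = lpNorm (p/r) w (fun x => g x ^ r) := by
  rw [lpNorm, lpNorm, ← ENNReal.rpow_mul]
  have h2 : 1/p*r = 1/(p/r) := by
    field_simp
  rw [h2]
  congr 1
  apply lintegral_congr
  intro x
  congr 1
  rw [← ENNReal.rpow_mul]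
  congr 1
  field_simp

lemma lpNorm_mono {p : ℝ} (hp : 0 < p) (w F G : Rn n → ℝ≥0∞) (h : ∀ x, F x ≤ G x) :
    lpNorm p w F ≤ lpNorm p w G := by
  apply ENNReal.rpow_le_rpow _ (by positivity)
  exact lintegral_mono fun x => mul_le_mul_left (ENNReal.rpow_le_rpow (h x) hp.le) _

lemma lpNorm_const_mul {p : ℝ} (hp : 0 < p) {c : ℝ≥0∞} (hc : c ≠ ∞) (w F : Rn n → ℝ≥0∞) :
    lpNorm p w (fun x => c * F x) = c * lpNorm p w F := by
  have h1 : ∀ x, (c * F x) ^ p * w x = c ^ p * (F x ^ p * w x) := fun x => by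
    rw [ENNReal.mul_rpow_of_nonneg _ _ hp.le, mul_assoc]
  rw [lpNorm, lintegral_congr h1,
    lintegral_const_mul' _ _ (ENNReal.rpow_ne_top_of_nonneg hp.le hc),
    ENNReal.mul_rpow_of_nonneg _ _ (by positivity : (0:ℝ) ≤ 1/p), ← ENNReal.rpow_mul,
    mul_one_div, div_self hp.ne', ENNReal.rpow_one, lpNorm]

lemma lpNorm_eq_zero {p : ℝ} (hp : 0 < p) {w F : Rn n → ℝ≥0∞}
    (h : ∀ᵐ x, F x ^ p * w x = 0) : lpNorm p w F = 0 := by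
  rw [lpNorm, lintegral_congr_ae (h.mono fun x hx => hx), lintegral_zero,
    ENNReal.zero_rpow_of_pos (by positivity)]

lemma sparseOp_rpow {S : Set (Set (Rn n))} {r : ℝ} (hr : 0 < r) (g : Rn n → ℝ≥0∞) (x : Rn n) :
    (sparseOp S r g x) ^ r
      = ∑' Q : S, (Q : Set (Rn n)).indicator (fun _ => (dAvg g Q) ^ r) x := by
  rw [sparseOp, ← ENNReal.rpow_mul, one_div, inv_mul_cancel₀ hr.ne', ENNReal.rpow_one]

end Glue

section MoreGlue
variable {n : ℕ}

lemma dAvgW_const_mul {σ g : Rn n → ℝ≥0∞} {c : ℝ≥0∞} (hc : c ≠ ∞) (Q : Set (Rn n)) :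
    dAvgW σ (fun y => c * g y) Q = c * dAvgW σ g Q := by
  rw [dAvgW, dAvgW]
  have h1 : ∀ y, (c * g y) * σ y = c * (g y * σ y) := fun y => by ring
  rw [lintegral_congr h1, lintegral_const_mul' _ _ hc, mul_left_comm]

lemma indicator_const_mul {s : Set (Rn n)} {c v : ℝ≥0∞} {x : Rn n} :
    c * s.indicator (fun _ => v) x = s.indicator (fun _ => c * v) x := by
  by_cases hx : x ∈ s <;> simp [hx]

lemma rpow_pos_ne_zero {a : ℝ≥0∞} {r : ℝ} (ha : a ≠ 0) (hr : 0 < r) : a ^ r ≠ 0 := by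
  intro h
  rcases ENNReal.rpow_eq_zero_iff.mp h with ⟨h1, _⟩ | ⟨_, h2⟩
  · exact ha h1
  · linarith

lemma rpow_from_eq_zero {a : ℝ≥0∞} {r : ℝ} (hr : 0 < r) (h : a ^ r = 0) : a = 0 := by
  rcases ENNReal.rpow_eq_zero_iff.mp h with ⟨h1, _⟩ | ⟨_, h2⟩
  · exact h1
  · linarith

end MoreGlue

end Aux

open Aux

/-- Lemma 2.1, strong type (`0 < r < p`, `p > 1`):
`‖A_𝒮^r(·σ)‖_{L^p(σ)→L^p(w)}^r ≃ sup_{‖f‖_{L^p(σ)}=1} ‖∑_Q ⟨σ⟩_Q^r ⟨f^r⟩_Q^σ 1_Q‖_{L^{p/r}(w)}`. -/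
theorem statement7 (n : ℕ) (p r : ℝ) (hp : 1 < p) (hr : 0 < r) (hrp : r < p) :
    ∃ c C : ℝ≥0∞, 0 < c ∧ C ≠ ∞ ∧
      ∀ S : Set (Set (Rn n)), IsSparse n S →
      ∀ w σ : Rn n → ℝ≥0∞, Measurable w → Measurable σ → LocInt w → LocInt σ →
        c * (⨆ (f : Rn n → ℝ≥0∞) (_ : Measurable f ∧ lpNorm p σ f = 1),
              lpNorm (p / r) w (fun x => ∑' Q : S, (Q : Set (Rn n)).indicator
                (fun _ => (dAvg σ Q) ^ r * dAvgW σ (fun y => (f y) ^ r) Q) x))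
            ≤ (opNormStrong S r p w σ) ^ r ∧
        (opNormStrong S r p w σ) ^ r ≤
          C * (⨆ (f : Rn n → ℝ≥0∞) (_ : Measurable f ∧ lpNorm p σ f = 1),
              lpNorm (p / r) w (fun x => ∑' Q : S, (Q : Set (Rn n)).indicator
                (fun _ => (dAvg σ Q) ^ r * dAvgW σ (fun y => (f y) ^ r) Q) x)) := by
  have hp0 : (0:ℝ) < p := by linarith
  have hpr1 : 1 < p / r := (one_lt_div hr).mpr hrp
  have hpr0 : (0:ℝ) < p / r := by linarith
  refine ⟨mxC (p/r) ^ (-(r/p)), mxC p ^ (r/p), ?_, ?_, ?_⟩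
  · exact ENNReal.rpow_pos (pos_iff_ne_zero.mpr (Aux.mxC_ne_zero _)) (Aux.mxC_ne_top hpr1)
  · exact ENNReal.rpow_ne_top_of_nonneg (by positivity) (Aux.mxC_ne_top hp)
  intro S hS w σ hw hσ hLw hLσ
  set μ := volume.withDensity σ with hμdef
  have hSd : ∀ Q ∈ S, ∃ km : ℤ × (Fin n → ℤ), Q = Aux.dc n km.1 km.2 := by
    intro Q hQ
    obtain ⟨k, m, h⟩ := hS.1 Q hQ
    exact ⟨(k, m), h⟩
  have hSm : ∀ Q ∈ S, MeasurableSet Q := by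
    intro Q hQ; obtain ⟨km, rfl⟩ := hSd Q hQ; exact Aux.dc_measurable _ _
  have hSσfin : ∀ Q ∈ S, ∫⁻ x in Q, σ x ≠ ∞ := fun Q hQ => (hLσ Q (hS.1 Q hQ)).ne
  have hSvol : ∀ Q ∈ S, volume Q ≠ ∞ := by
    intro Q hQ; obtain ⟨km, rfl⟩ := hSd Q hQ; exact (Aux.dc_volume_lt_top _ _).ne
  have hScnt : S.Countable := by
    apply Set.Countable.mono _ (Aux.countable_dc (n := n))
    intro Q hQ; exact hSd Q hQ
  haveI : Countable ↥S := hScnt.to_subtype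
  set SUP := ⨆ (f : Rn n → ℝ≥0∞) (_ : Measurable f ∧ lpNorm p σ f = 1),
      lpNorm (p / r) w (fun x => ∑' Q : S, (Q : Set (Rn n)).indicator
        (fun _ => (dAvg σ Q) ^ r * dAvgW σ (fun y => (f y) ^ r) Q) x) with hSUP
  -- zero-norm vanishing
  have lemA : ∀ f : Rn n → ℝ≥0∞, Measurable f → lpNorm p σ f = 0 →
      lpNorm p w (sparseOp S r (fun x => f x * σ x)) = 0 := by
    intro f hf h0
    have hint : ∫⁻ x, f x ^ p * σ x = 0 := by
      rw [lpNorm] at h0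
      exact rpow_from_eq_zero (by positivity) h0
    have hae : (fun x => f x ^ p * σ x) =ᵐ[volume] 0 :=
      (lintegral_eq_zero_iff ((meas_rpow hf p).mul hσ)).mp hint
    have haefσ : (fun x => f x * σ x) =ᵐ[volume] 0 := by
      filter_upwards [hae] with x hx
      simp only [Pi.zero_apply] at hx ⊢
      rcases mul_eq_zero.mp hx with h | h
      · rw [rpow_from_eq_zero hp0 h, zero_mul]
      · rw [h, mul_zero]
    have hzero : ∀ Q : Set (Rn n), ∫⁻ x in Q, f x * σ x = 0 := by
      intro Q
      rw [lintegral_congr_ae (ae_restrict_of_ae haefσ)]; simp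
    apply lpNorm_eq_zero hp0
    apply ae_of_all
    intro x
    have hsp : sparseOp S r (fun x => f x * σ x) x = 0 := by
      have hterm : ∀ Q : S, (Q : Set (Rn n)).indicator
          (fun _ => (dAvg (fun x => f x * σ x) Q) ^ r) x = 0 := by
        intro Q
        have hz : dAvg (fun x => f x * σ x) (Q : Set (Rn n)) = 0 := by
          rw [dAvg, hzero, mul_zero]
        simp only [hz, ENNReal.zero_rpow_of_pos hr]
        simp
      rw [sparseOp, tsum_congr hterm, tsum_zero]
      exact ENNReal.zero_rpow_of_pos (by positivity)
    rw [hsp, ENNReal.zero_rpow_of_pos hp0, zero_mul]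
  -- opNorm bound applies to finite-norm functions
  have lemB : ∀ h : Rn n → ℝ≥0∞, Measurable h → lpNorm p σ h ≠ ∞ →
      lpNorm p w (sparseOp S r (fun x => h x * σ x)) ≤ opNormStrong S r p w σ * lpNorm p σ h := by
    intro h hh hfin
    rcases eq_or_ne (lpNorm p σ h) 0 with h0 | h0
    · rw [lemA h hh h0]; exact zero_le
    · have key : lpNorm p w (sparseOp S r (fun x => h x * σ x)) * (lpNorm p σ h)⁻¹
          ≤ opNormStrong S r p w σ := by
        rw [opNormStrong]
        apply le_sInf
        intro C hC
        have h1 := hC h hh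
        calc lpNorm p w (sparseOp S r (fun x => h x * σ x)) * (lpNorm p σ h)⁻¹
            ≤ (C * lpNorm p σ h) * (lpNorm p σ h)⁻¹ := mul_le_mul_left h1 _
        _ = C := by rw [mul_assoc, ENNReal.mul_inv_cancel h0 hfin, mul_one]
      calc lpNorm p w (sparseOp S r (fun x => h x * σ x))
          = (lpNorm p w (sparseOp S r (fun x => h x * σ x)) * (lpNorm p σ h)⁻¹)
            * lpNorm p σ h := by
            rw [mul_assoc, ENNReal.inv_mul_cancel h0 hfin, mul_one]
      _ ≤ opNormStrong S r p w σ * lpNorm p σ h := mul_le_mul_left key _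
  constructor
  · -- lower bound : c * SUP ≤ N ^ r
    have hSUPle : SUP ≤ opNormStrong S r p w σ ^ r * mxC (p/r) ^ (r/p) := by
      rw [hSUP]
      apply iSup_le; intro f; apply iSup_le; rintro ⟨hfm, hfn⟩
      set g0 : Rn n → ℝ≥0∞ := fun y => f y ^ r with hg0
      have hg0m : Measurable g0 := meas_rpow hfm r
      set h : Rn n → ℝ≥0∞ := fun x => Aux.mx μ g0 x ^ (1/r) with hhdef
      have hhm : Measurable h := meas_rpow (Aux.mx_measurable μ g0) (1/r)
      have hfp1 : ∫⁻ x, f x ^ p * σ x = 1 := by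
        have h1 := congrArg (fun z : ℝ≥0∞ => z ^ p) hfn
        simp only [lpNorm] at h1
        rwa [← ENNReal.rpow_mul, one_div, inv_mul_cancel₀ hp0.ne', ENNReal.rpow_one,
          ENNReal.one_rpow] at h1
      have hg0pr : ∫⁻ x, g0 x ^ (p/r) ∂μ = 1 := by
        have h1 : ∀ x, g0 x ^ (p/r) = f x ^ p := by
          intro x
          simp only [hg0]
          rw [← ENNReal.rpow_mul]
          congr 1
          field_simp
        calc ∫⁻ x, g0 x ^ (p/r) ∂μ = ∫⁻ x, f x ^ p ∂μ :=
              lintegral_congr fun x => by rw [h1 x]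
        _ = ∫⁻ x, f x ^ p * σ x := (lint_wd' hσ (meas_rpow hfm p)).symm
        _ = 1 := hfp1
      have hhnorm : lpNorm p σ h ≤ mxC (p/r) ^ (1/p) := by
        have h2 : ∀ x, h x ^ p = Aux.mx μ g0 x ^ (p/r) := by
          intro x
          simp only [hhdef]
          rw [← ENNReal.rpow_mul]
          congr 1
          field_simp
        rw [lpNorm]
        apply ENNReal.rpow_le_rpow _ (by positivity)
        calc ∫⁻ x, h x ^ p * σ x = ∫⁻ x, h x ^ p ∂μ := lint_wd' hσ (meas_rpow hhm p)
        _ = ∫⁻ x, Aux.mx μ g0 x ^ (p/r) ∂μ := lintegral_congr fun x => by rw [h2 x]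
        _ ≤ mxC (p/r) * ∫⁻ x, g0 x ^ (p/r) ∂μ := Aux.mx_strong μ hg0m hpr1
        _ = mxC (p/r) := by rw [hg0pr, mul_one]
      have hhfin : lpNorm p σ h ≠ ∞ :=
        ne_top_of_le_ne_top (ENNReal.rpow_ne_top_of_nonneg (by positivity)
          (Aux.mxC_ne_top hpr1)) hhnorm
      have hpoint : ∀ x, (∑' Q : S, (Q : Set (Rn n)).indicator
          (fun _ => (dAvg σ Q) ^ r * dAvgW σ g0 Q) x)
          ≤ sparseOp S r (fun y => h y * σ y) x ^ r := by
        intro x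
        rw [sparseOp_rpow hr]
        apply ENNReal.tsum_le_tsum
        intro Q
        apply Set.indicator_le_indicator
        obtain ⟨km, hkm⟩ := hSd Q Q.2
        have hQm : MeasurableSet (Q : Set (Rn n)) := hSm Q Q.2
        have hfinσ : ∫⁻ y in (Q : Set (Rn n)), σ y ≠ ∞ := hSσfin Q Q.2
        rw [avg_factor hσ hfinσ, ENNReal.mul_rpow_of_nonneg _ _ hr.le]
        apply mul_le_mul_right
        rw [dAvgW_eq_muA hσ hg0m hQm, dAvgW_eq_muA hσ hhm hQm]
        rcases eq_or_ne (μ (Q : Set (Rn n))) 0 with hμ0 | hμ0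
        · have hz : ∫⁻ y in (Q : Set (Rn n)), g0 y ∂μ = 0 :=
            setLIntegral_measure_zero _ _ hμ0
          rw [Aux.muA, hz, mul_zero]
          exact zero_le
        · have hμt : μ (Q : Set (Rn n)) ≠ ∞ := by rw [wd_apply hQm]; exact hfinσ
          have hc1 : ∀ y ∈ (Q : Set (Rn n)), Aux.muA μ g0 (Q : Set (Rn n)) ^ (1/r) ≤ h y := by
            intro y hy
            have hle := Aux.muA_le_mx (μ := μ) (g := g0) (hkm ▸ hy)
            rw [← hkm] at hle
            simp only [hhdef]
            exact ENNReal.rpow_le_rpow hle (by positivity)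
          have hc2 : Aux.muA μ g0 (Q : Set (Rn n)) ^ (1/r) ≤ Aux.muA μ h (Q : Set (Rn n)) :=
            Aux.const_le_muA hQm hμ0 hμt hc1
          calc Aux.muA μ g0 (Q : Set (Rn n))
              = (Aux.muA μ g0 (Q : Set (Rn n)) ^ (1/r)) ^ r := by
                rw [← ENNReal.rpow_mul, one_div, inv_mul_cancel₀ hr.ne', ENNReal.rpow_one]
          _ ≤ Aux.muA μ h (Q : Set (Rn n)) ^ r := ENNReal.rpow_le_rpow hc2 hr.le
      calc lpNorm (p / r) w (fun x => ∑' Q : S, (Q : Set (Rn n)).indicator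
            (fun _ => (dAvg σ Q) ^ r * dAvgW σ g0 Q) x)
          ≤ lpNorm (p / r) w (fun x => sparseOp S r (fun y => h y * σ y) x ^ r) :=
            lpNorm_mono hpr0 _ _ _ hpoint
      _ = lpNorm p w (sparseOp S r (fun y => h y * σ y)) ^ r :=
            (lpNorm_rpow hp0 hr _ _).symm
      _ ≤ (opNormStrong S r p w σ * lpNorm p σ h) ^ r :=
            ENNReal.rpow_le_rpow (lemB h hhm hhfin) hr.le
      _ ≤ (opNormStrong S r p w σ * mxC (p/r) ^ (1/p)) ^ r :=
            ENNReal.rpow_le_rpow (mul_le_mul_right hhnorm _) hr.le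
      _ = opNormStrong S r p w σ ^ r * mxC (p/r) ^ (r/p) := by
            rw [ENNReal.mul_rpow_of_nonneg _ _ hr.le, ← ENNReal.rpow_mul]
            congr 2
            ring
    have hB0 : mxC (p/r) ^ (r/p) ≠ 0 :=
      (ENNReal.rpow_pos (pos_iff_ne_zero.mpr (Aux.mxC_ne_zero _)) (Aux.mxC_ne_top hpr1)).ne'
    have hBt : mxC (p/r) ^ (r/p) ≠ ∞ :=
      ENNReal.rpow_ne_top_of_nonneg (by positivity) (Aux.mxC_ne_top hpr1)
    calc mxC (p/r) ^ (-(r/p)) * SUP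
        ≤ (mxC (p/r) ^ (r/p))⁻¹ * (opNormStrong S r p w σ ^ r * mxC (p/r) ^ (r/p)) := by
          rw [ENNReal.rpow_neg]
          exact mul_le_mul_right hSUPle _
    _ = opNormStrong S r p w σ ^ r := by
          rw [mul_comm (opNormStrong S r p w σ ^ r), ← mul_assoc,
            ENNReal.inv_mul_cancel hB0 hBt, one_mul]
  · -- upper bound : N ^ r ≤ C * SUP
    have hCfin0 : mxC p ^ (r/p) ≠ 0 :=
      (ENNReal.rpow_pos (pos_iff_ne_zero.mpr (Aux.mxC_ne_zero _)) (Aux.mxC_ne_top hp)).ne'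
    have hmem : opNormStrong S r p w σ ≤ (mxC p ^ (r/p) * SUP) ^ (1/r) := by
      rw [opNormStrong]
      apply sInf_le
      intro f hfm
      rcases eq_or_ne (lpNorm p σ f) 0 with hl0 | hl0
      · rw [lemA f hfm hl0]; exact zero_le
      set Mf : Rn n → ℝ≥0∞ := Aux.mx μ f with hMfdef
      have hMm : Measurable Mf := Aux.mx_measurable μ f
      -- key per-cube estimate
      have hkey : ∀ Q (hQS : Q ∈ S), (dAvgW σ f Q) ^ r ≤ dAvgW σ (fun y => Mf y ^ r) Q := by
        intro Q hQS
        obtain ⟨km, hkm⟩ := hSd Q hQS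
        have hQm : MeasurableSet Q := hSm Q hQS
        rw [dAvgW_eq_muA hσ hfm hQm, dAvgW_eq_muA hσ (meas_rpow hMm r) hQm]
        rcases eq_or_ne (μ Q) 0 with hμ0 | hμ0
        · have hz : ∫⁻ y in Q, f y ∂μ = 0 := setLIntegral_measure_zero _ _ hμ0
          rw [Aux.muA, hz, mul_zero, ENNReal.zero_rpow_of_pos hr]
          exact zero_le
        · have hμt : μ Q ≠ ∞ := by rw [wd_apply hQm]; exact hSσfin Q hQS
          have hc1 : ∀ y ∈ Q, Aux.muA μ f Q ^ r ≤ Mf y ^ r := by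
            intro y hy
            have hle := Aux.muA_le_mx (μ := μ) (g := f) (hkm ▸ hy)
            rw [← hkm] at hle
            exact ENNReal.rpow_le_rpow hle hr.le
          exact Aux.const_le_muA hQm hμ0 hμt hc1
      -- the SUP = 0 degenerate case
      rcases eq_or_ne SUP 0 with hS0 | hS0
      · -- dichotomy: each Q ∈ S has σ-measure 0 or w vanishes a.e. on Q
        have hdich : ∀ Q, Q ∈ S → (∫⁻ x in Q, σ x = 0) ∨ (∀ᵐ x, x ∈ Q → w x = 0) := by
          intro Q hQS
          rcases eq_or_ne (∫⁻ x in Q, σ x) 0 with h0 | h0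
          · exact Or.inl h0
          right
          have hsfin : (∫⁻ x in Q, σ x) ≠ ∞ := hSσfin Q hQS
          have hQm := hSm Q hQS
          set sQ := ∫⁻ x in Q, σ x with hsQ
          set a : ℝ≥0∞ := sQ ^ (-(1/p)) with ha
          have hat : a ≠ ∞ := by
            rw [ha, ENNReal.rpow_neg, ne_eq, ENNReal.inv_eq_top]
            exact rpow_pos_ne_zero h0 (by positivity)
          have ha0 : a ≠ 0 := by
            rw [ha, ENNReal.rpow_neg]
            exact ENNReal.inv_ne_zero.mpr (ENNReal.rpow_ne_top_of_nonneg (by positivity) hsfin)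
          set fQ : Rn n → ℝ≥0∞ := Q.indicator (fun _ => a) with hfQ
          have hfQm : Measurable fQ := measurable_const.indicator hQm
          have hintQ : ∀ b : ℝ, 0 < b → ∫⁻ x, fQ x ^ b * σ x = a ^ b * sQ := by
            intro b hb
            have h1 : ∀ x, fQ x ^ b * σ x = Q.indicator (fun y => a ^ b * σ y) x := by
              intro x
              by_cases hx : x ∈ Q
              · simp [hfQ, Set.indicator_of_mem hx]
              · simp [hfQ, Set.indicator_of_notMem hx, ENNReal.zero_rpow_of_pos hb]
            rw [lintegral_congr h1, lintegral_indicator hQm,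
              lintegral_const_mul' _ _ (ENNReal.rpow_ne_top_of_nonneg hb.le hat)]
          have hfQnorm : lpNorm p σ fQ = 1 := by
            rw [lpNorm, hintQ p hp0]
            have h3 : a ^ p = sQ⁻¹ := by
              rw [ha, ← ENNReal.rpow_mul, show -(1/p)*p = (-1:ℝ) by field_simp,
                ENNReal.rpow_neg_one]
            rw [h3, ENNReal.inv_mul_cancel h0 hsfin, ENNReal.one_rpow]
          -- the Q-coefficient for fQ is nonzero
          have hcoef : (dAvg σ Q) ^ r * dAvgW σ (fun y => (fQ y) ^ r) Q ≠ 0 := by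
            apply mul_ne_zero
            · apply rpow_pos_ne_zero _ hr
              rw [dAvg]
              exact mul_ne_zero (ENNReal.inv_ne_zero.mpr (hSvol Q hQS)) h0
            · have hval : dAvgW σ (fun y => (fQ y) ^ r) Q = a ^ r := by
                rw [dAvgW]
                have h2 : ∫⁻ x in Q, fQ x ^ r * σ x = a ^ r * sQ := by
                  have h1 : ∀ x ∈ Q, fQ x ^ r * σ x = a ^ r * σ x := by
                    intro x hx
                    simp [hfQ, Set.indicator_of_mem hx]
                  rw [setLIntegral_congr_fun_ae hQm (ae_of_all _ h1),
                    lintegral_const_mul' _ _ (ENNReal.rpow_ne_top_of_nonneg hr.le hat)]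
                rw [h2, ← mul_assoc, mul_comm sQ⁻¹ (a ^ r), mul_assoc,
                  ENNReal.inv_mul_cancel h0 hsfin, mul_one]
              rw [hval]
              exact rpow_pos_ne_zero ha0 hr
          -- SUP = 0 forces the test expression to vanish
          have hTze : lpNorm (p / r) w (fun x => ∑' Qi : S, (Qi : Set (Rn n)).indicator
              (fun _ => (dAvg σ Qi) ^ r * dAvgW σ (fun y => (fQ y) ^ r) Qi) x) = 0 := by
            apply le_antisymm _ (zero_le)
            rw [← hS0, hSUP]
            exact le_iSup_of_le fQ (le_iSup_of_le ⟨hfQm, hfQnorm⟩ le_rfl)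
          have hmeasT : Measurable (fun x => (∑' Qi : S, (Qi : Set (Rn n)).indicator
              (fun _ => (dAvg σ Qi) ^ r * dAvgW σ (fun y => (fQ y) ^ r) Qi) x) ^ (p/r) * w x) := by
            apply Measurable.mul _ hw
            apply Measurable.comp ENNReal.continuous_rpow_const.measurable
            exact Measurable.ennreal_tsum fun Qi => measurable_const.indicator (hSm Qi Qi.2)
          have hae1 : ∀ᵐ x, (∑' Qi : S, (Qi : Set (Rn n)).indicator
              (fun _ => (dAvg σ Qi) ^ r * dAvgW σ (fun y => (fQ y) ^ r) Qi) x) ^ (p/r) * w x = 0 := by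
            have hint0 : ∫⁻ x, (∑' Qi : S, (Qi : Set (Rn n)).indicator
                (fun _ => (dAvg σ Qi) ^ r * dAvgW σ (fun y => (fQ y) ^ r) Qi) x) ^ (p/r) * w x = 0 := by
              rw [lpNorm] at hTze
              exact rpow_from_eq_zero (by positivity) hTze
            have := (lintegral_eq_zero_iff hmeasT).mp hint0
            filter_upwards [this] with x hx
            exact hx
          filter_upwards [hae1] with x hx
          intro hxQ
          by_contra hwx
          rcases mul_eq_zero.mp hx with h | h
          · have hsum0 := rpow_from_eq_zero hpr0 h
            have hterm := ENNReal.tsum_eq_zero.mp hsum0 ⟨Q, hQS⟩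
            rw [Set.indicator_of_mem hxQ] at hterm
            exact hcoef hterm
          · exact hwx h
        -- conclude the operator vanishes on every f
        have hLHS : lpNorm p w (sparseOp S r (fun x => f x * σ x)) = 0 := by
          apply lpNorm_eq_zero hp0
          have hc : ∀ᵐ x, ∀ (Q : Set (Rn n)) (_ : Q ∈ S),
              (∫⁻ y in Q, σ y = 0) ∨ (x ∈ Q → w x = 0) := by
            rw [ae_ball_iff hScnt]
            intro Q hQS
            rcases hdich Q hQS with h | h
            · exact ae_of_all _ fun x => Or.inl h
            · filter_upwards [h] with x hx
              exact Or.inr hx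
          filter_upwards [hc] with x hx
          rcases eq_or_ne (w x) 0 with hwx | hwx
          · rw [hwx, mul_zero]
          · have hsp0 : sparseOp S r (fun y => f y * σ y) x = 0 := by
              have hterm : ∀ Qi : S, (Qi : Set (Rn n)).indicator
                  (fun _ => dAvg (fun y => f y * σ y) Qi ^ r) x = 0 := by
                intro Qi
                rcases hx Qi Qi.2 with h | h
                · have hz : dAvg (fun y => f y * σ y) (Qi : Set (Rn n)) = 0 := by
                    rw [dAvg, setl_zero hσ h, mul_zero]
                  simp only [hz, ENNReal.zero_rpow_of_pos hr]
                  simp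
                · exact Set.indicator_of_notMem (fun hmem => hwx (h hmem)) _
              rw [sparseOp, tsum_congr hterm, tsum_zero]
              exact ENNReal.zero_rpow_of_pos (by positivity)
            rw [hsp0, ENNReal.zero_rpow_of_pos hp0, zero_mul]
        rw [hLHS]
        exact zero_le
      -- SUP ≠ 0 :
      rcases eq_or_ne (lpNorm p σ f) ∞ with hlt | hlt
      · -- infinite norm, RHS is infinite
        have hD0 : (mxC p ^ (r/p) * SUP) ^ (1/r) ≠ 0 :=
          rpow_pos_ne_zero (mul_ne_zero hCfin0 hS0) (by positivity)
        rw [hlt, ENNReal.mul_top hD0]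
        exact le_top
      -- main case : 0 < ‖f‖ < ∞
      have hMnorm : lpNorm p σ Mf ≤ mxC p ^ (1/p) * lpNorm p σ f := by
        rw [lpNorm, lpNorm, ← ENNReal.mul_rpow_of_nonneg _ _ (by positivity : (0:ℝ) ≤ 1/p)]
        apply ENNReal.rpow_le_rpow _ (by positivity)
        calc ∫⁻ x, Mf x ^ p * σ x = ∫⁻ x, Mf x ^ p ∂μ := lint_wd' hσ (meas_rpow hMm p)
        _ ≤ mxC p * ∫⁻ x, f x ^ p ∂μ := Aux.mx_strong μ hfm hp
        _ = mxC p * ∫⁻ x, f x ^ p * σ x := by rw [lint_wd' hσ (meas_rpow hfm p)]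
      have hMfin : lpNorm p σ Mf ≠ ∞ :=
        ne_top_of_le_ne_top (ENNReal.mul_ne_top (ENNReal.rpow_ne_top_of_nonneg
          (by positivity) (Aux.mxC_ne_top hp)) hlt) hMnorm
      rcases eq_or_ne (lpNorm p σ Mf) 0 with hM0 | hM0
      · -- maximal function vanishes in L^p(σ): operator output vanishes
        have hint : ∫⁻ x, Mf x ^ p * σ x = 0 := by
          rw [lpNorm] at hM0
          exact rpow_from_eq_zero (by positivity) hM0
        have haeM : (fun x => Mf x ^ r * σ x) =ᵐ[volume] 0 := by
          have := (lintegral_eq_zero_iff ((meas_rpow hMm p).mul hσ)).mp hint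
          filter_upwards [this] with x hx
          simp only [Pi.zero_apply] at hx ⊢
          rcases mul_eq_zero.mp hx with h | h
          · rw [rpow_from_eq_zero hp0 h, ENNReal.zero_rpow_of_pos hr, zero_mul]
          · rw [h, mul_zero]
        have hMW : ∀ Q : Set (Rn n), dAvgW σ (fun y => Mf y ^ r) Q = 0 := by
          intro Q
          have hz : ∫⁻ x in Q, Mf x ^ r * σ x = 0 := by
            rw [lintegral_congr_ae (ae_restrict_of_ae haeM)]; simp
          rw [dAvgW, hz, mul_zero]
        have hLHS : lpNorm p w (sparseOp S r (fun x => f x * σ x)) = 0 := by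
          apply lpNorm_eq_zero hp0
          apply ae_of_all
          intro x
          have hsp0 : sparseOp S r (fun y => f y * σ y) x = 0 := by
            have hterm : ∀ Qi : S, (Qi : Set (Rn n)).indicator
                (fun _ => dAvg (fun y => f y * σ y) Qi ^ r) x = 0 := by
              intro Qi
              have hz : dAvg (fun y => f y * σ y) (Qi : Set (Rn n)) ^ r = 0 := by
                apply le_antisymm _ (zero_le)
                calc dAvg (fun y => f y * σ y) (Qi : Set (Rn n)) ^ r
                    = (dAvg σ Qi * dAvgW σ f Qi) ^ r := by
                      rw [avg_factor hσ (hSσfin Qi Qi.2)]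
                _ = dAvg σ (Qi : Set (Rn n)) ^ r * dAvgW σ f Qi ^ r :=
                      ENNReal.mul_rpow_of_nonneg _ _ hr.le
                _ ≤ dAvg σ (Qi : Set (Rn n)) ^ r * dAvgW σ (fun y => Mf y ^ r) Qi :=
                      mul_le_mul_right (hkey Qi Qi.2) _
                _ = 0 := by rw [hMW, mul_zero]
              simp only [hz]
              simp
            rw [sparseOp, tsum_congr hterm, tsum_zero]
            exact ENNReal.zero_rpow_of_pos (by positivity)
          rw [hsp0, ENNReal.zero_rpow_of_pos hp0, zero_mul]
        rw [hLHS]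
        exact zero_le
      -- now 0 < ‖Mf‖ < ∞ : normalize
      set u : Rn n → ℝ≥0∞ := fun x => (lpNorm p σ Mf)⁻¹ * Mf x with hu
      have hum : Measurable u := hMm.const_mul _
      have hunorm : lpNorm p σ u = 1 := by
        rw [hu, lpNorm_const_mul hp0 (ENNReal.inv_ne_top.mpr hM0) σ Mf]
        exact ENNReal.inv_mul_cancel hM0 hMfin
      have hMr : ∀ Q : Set (Rn n), dAvgW σ (fun y => Mf y ^ r) Q
          = lpNorm p σ Mf ^ r * dAvgW σ (fun y => u y ^ r) Q := by
        intro Q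
        have h1 : ∀ y, u y ^ r = ((lpNorm p σ Mf)⁻¹) ^ r * Mf y ^ r := fun y => by
          rw [hu]
          exact ENNReal.mul_rpow_of_nonneg _ _ hr.le
        have h2 : dAvgW σ (fun y => u y ^ r) Q
            = ((lpNorm p σ Mf)⁻¹) ^ r * dAvgW σ (fun y => Mf y ^ r) Q := by
          calc dAvgW σ (fun y => u y ^ r) Q
              = dAvgW σ (fun y => ((lpNorm p σ Mf)⁻¹) ^ r * Mf y ^ r) Q := by
                apply congrArg (fun F => dAvgW σ F Q)
                funext y
                exact h1 y
          _ = ((lpNorm p σ Mf)⁻¹) ^ r * dAvgW σ (fun y => Mf y ^ r) Q :=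
                dAvgW_const_mul (ENNReal.rpow_ne_top_of_nonneg hr.le
                  (ENNReal.inv_ne_top.mpr hM0)) Q
        rw [h2, ← mul_assoc, ← ENNReal.mul_rpow_of_nonneg _ _ hr.le,
          ENNReal.mul_inv_cancel hM0 hMfin, ENNReal.one_rpow, one_mul]
      have hpt : ∀ x, sparseOp S r (fun y => f y * σ y) x ^ r
          ≤ lpNorm p σ Mf ^ r * (∑' Q : S, (Q : Set (Rn n)).indicator
            (fun _ => (dAvg σ Q) ^ r * dAvgW σ (fun y => (u y) ^ r) Q) x) := by
        intro x
        rw [sparseOp_rpow hr, ← ENNReal.tsum_mul_left]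
        apply ENNReal.tsum_le_tsum
        intro Q
        rw [Aux.indicator_const_mul]
        apply Set.indicator_le_indicator
        calc dAvg (fun y => f y * σ y) (Q : Set (Rn n)) ^ r
            = (dAvg σ Q * dAvgW σ f Q) ^ r := by rw [avg_factor hσ (hSσfin Q Q.2)]
        _ = dAvg σ (Q : Set (Rn n)) ^ r * dAvgW σ f Q ^ r :=
              ENNReal.mul_rpow_of_nonneg _ _ hr.le
        _ ≤ dAvg σ (Q : Set (Rn n)) ^ r * dAvgW σ (fun y => Mf y ^ r) Q :=
              mul_le_mul_right (hkey Q Q.2) _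
        _ = lpNorm p σ Mf ^ r * (dAvg σ (Q : Set (Rn n)) ^ r * dAvgW σ (fun y => u y ^ r) Q) := by
              rw [hMr]; ring
      have hmain : lpNorm p w (sparseOp S r (fun y => f y * σ y)) ^ r
          ≤ lpNorm p σ Mf ^ r * SUP := by
        rw [lpNorm_rpow hp0 hr]
        calc lpNorm (p/r) w (fun x => sparseOp S r (fun y => f y * σ y) x ^ r)
            ≤ lpNorm (p/r) w (fun x => lpNorm p σ Mf ^ r * (∑' Q : S, (Q : Set (Rn n)).indicator
              (fun _ => (dAvg σ Q) ^ r * dAvgW σ (fun y => (u y) ^ r) Q) x)) :=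
              lpNorm_mono hpr0 _ _ _ hpt
        _ = lpNorm p σ Mf ^ r * lpNorm (p/r) w (fun x => ∑' Q : S, (Q : Set (Rn n)).indicator
              (fun _ => (dAvg σ Q) ^ r * dAvgW σ (fun y => (u y) ^ r) Q) x) :=
              lpNorm_const_mul hpr0 (ENNReal.rpow_ne_top_of_nonneg hr.le hMfin) _ _
        _ ≤ lpNorm p σ Mf ^ r * SUP := by
              apply mul_le_mul_right
              rw [hSUP]
              exact le_iSup_of_le u (le_iSup_of_le ⟨hum, hunorm⟩ le_rfl)
      have hfinal : lpNorm p w (sparseOp S r (fun y => f y * σ y))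
          ≤ (lpNorm p σ Mf ^ r * SUP) ^ (1/r) := by
        have h1 := ENNReal.rpow_le_rpow hmain (by positivity : (0:ℝ) ≤ 1/r)
        rwa [← ENNReal.rpow_mul, mul_one_div, div_self hr.ne', ENNReal.rpow_one] at h1
      refine hfinal.trans ?_
      calc (lpNorm p σ Mf ^ r * SUP) ^ (1/r)
          ≤ ((mxC p ^ (1/p) * lpNorm p σ f) ^ r * SUP) ^ (1/r) := by
            apply ENNReal.rpow_le_rpow _ (by positivity)
            exact mul_le_mul_left (ENNReal.rpow_le_rpow hMnorm hr.le) _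
      _ = (mxC p ^ (r/p) * SUP) ^ (1/r) * lpNorm p σ f := by
            rw [ENNReal.mul_rpow_of_nonneg (mxC p ^ (1/p)) _ hr.le,
              ← ENNReal.rpow_mul (mxC p), show (1/p)*r = r/p by ring,
              show mxC p ^ (r/p) * lpNorm p σ f ^ r * SUP
                = (mxC p ^ (r/p) * SUP) * lpNorm p σ f ^ r by ring,
              ENNReal.mul_rpow_of_nonneg _ _ (by positivity : (0:ℝ) ≤ 1/r),
              ← ENNReal.rpow_mul (lpNorm p σ f), mul_one_div, div_self hr.ne',
              ENNReal.rpow_one]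
    have hNr := ENNReal.rpow_le_rpow hmem hr.le
    refine hNr.trans ?_
    rw [← ENNReal.rpow_mul, one_div, inv_mul_cancel₀ hr.ne', ENNReal.rpow_one]



end Paper
end
end

section
/- Let 1 < p < ∞, let 𝒬 be a countable collection of dyadic cubes in ℝ^n, let τ = {τ_Q : Q ∈ 𝒬} be nonnegative constants, and let w, σ be weights. Define T_τ(f) := ∑_{Q∈𝒬} τ_Q ⟨f⟩_Q 1_Q. Then ‖T_τ(·σ)‖_{L^p(σ)→L^{p,∞}(w)} ≃ sup_{R∈𝒬} w(R)^{−1/p'} ‖∑_{Q∈𝒬, Q⊆R} τ_Q ⟨w⟩_Q 1_Q‖_{L^{p'}(σ)}, with implied constants depending only on n and p, where p' is the conjugate exponent of p. -/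
open MeasureTheory ENNReal NNReal Set

noncomputable section

namespace Paper

/-- The linear operator `T_τ f = ∑_{Q∈𝒬} τ_Q ⟨f⟩_Q 1_Q`. -/
def linOp {n : ℕ} (Qc : Set (Set (Rn n))) (τ : Set (Rn n) → ℝ≥0)
    (g : Rn n → ℝ≥0∞) (x : Rn n) : ℝ≥0∞ :=
  ∑' Q : Qc, (Q : Set (Rn n)).indicator (fun _ => (τ Q : ℝ≥0∞) * dAvg g Q) x

/-- Weak-type operator norm of `T_τ(·σ) : L^p(σ) → L^{p,∞}(w)`. -/
def linOpNormWeak {n : ℕ} (Qc : Set (Set (Rn n))) (τ : Set (Rn n) → ℝ≥0) (p : ℝ)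
    (w σ : Rn n → ℝ≥0∞) : ℝ≥0∞ :=
  sInf {C : ℝ≥0∞ | ∀ f : Rn n → ℝ≥0∞, Measurable f →
    wLpNorm p w (linOp Qc τ (fun x => f x * σ x)) ≤ C * lpNorm p σ f}

/-- Strong-type operator norm of `T_τ(·σ) : L^p(σ) → L^p(w)`. -/
def linOpNormStrong {n : ℕ} (Qc : Set (Set (Rn n))) (τ : Set (Rn n) → ℝ≥0) (p : ℝ)
    (w σ : Rn n → ℝ≥0∞) : ℝ≥0∞ :=
  sInf {C : ℝ≥0∞ | ∀ f : Rn n → ℝ≥0∞, Measurable f →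
    lpNorm p w (linOp Qc τ (fun x => f x * σ x)) ≤ C * lpNorm p σ f}

/-- Dual testing constant `sup_R w(R)^{-1/p′} ‖∑_{Q⊆R} τ_Q ⟨w⟩_Q 1_Q‖_{L^{p′}(σ)}`. -/
def linTestDual {n : ℕ} (Qc : Set (Set (Rn n))) (τ : Set (Rn n) → ℝ≥0) (p : ℝ)
    (w σ : Rn n → ℝ≥0∞) : ℝ≥0∞ :=
  ⨆ (R : Set (Rn n)) (_ : R ∈ Qc),
    (∫⁻ x in R, w x) ^ (-(1 - 1 / p)) *
      lpNorm (p / (p - 1)) σ (fun x => ∑' Q : {Q : Set (Rn n) // Q ∈ Qc ∧ Q ⊆ R},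
        (Q : Set (Rn n)).indicator (fun _ => (τ Q : ℝ≥0∞) * dAvg w Q) x)

/-- Direct testing constant `sup_R σ(R)^{-1/p} ‖∑_{Q⊆R} τ_Q ⟨σ⟩_Q 1_Q‖_{L^p(w)}`. -/
def linTestDirect {n : ℕ} (Qc : Set (Set (Rn n))) (τ : Set (Rn n) → ℝ≥0) (p : ℝ)
    (w σ : Rn n → ℝ≥0∞) : ℝ≥0∞ :=
  ⨆ (R : Set (Rn n)) (_ : R ∈ Qc),
    (∫⁻ x in R, σ x) ^ (-(1 / p)) *
      lpNorm p w (fun x => ∑' Q : {Q : Set (Rn n) // Q ∈ Qc ∧ Q ⊆ R},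
        (Q : Set (Rn n)).indicator (fun _ => (τ Q : ℝ≥0∞) * dAvg σ Q) x)


/-- explicit dyadic cube -/
def dcube (n : ℕ) (k : ℤ) (m : Fin n → ℤ) : Set (Rn n) :=
  {x : Rn n | ∀ i, (2:ℝ) ^ (-k) * m i ≤ x i ∧ x i < (2:ℝ) ^ (-k) * (m i + 1)}

lemma isDyadicCube_iff {n : ℕ} {Q : Set (Rn n)} :
    IsDyadicCube n Q ↔ ∃ k m, Q = dcube n k m := Iff.rfl

lemma dcube_eq_pi {n : ℕ} (k : ℤ) (m : Fin n → ℤ) :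
    dcube n k m =
      Set.univ.pi (fun i => Set.Ico ((2:ℝ)^(-k) * m i) ((2:ℝ)^(-k) * (m i + 1))) := by
  ext x; simp [dcube, Set.mem_pi]

lemma IsDyadicCube.measurableSet {n : ℕ} {Q : Set (Rn n)} (h : IsDyadicCube n Q) :
    MeasurableSet Q := by
  obtain ⟨k, m, rfl⟩ := h
  show MeasurableSet (dcube n k m)
  rw [dcube_eq_pi]
  exact MeasurableSet.univ_pi fun i => measurableSet_Ico

lemma dcube_volume {n : ℕ} (k : ℤ) (m : Fin n → ℤ) :
    volume (dcube n k m) = (ENNReal.ofReal ((2:ℝ)^(-k)))^n := by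
  rw [dcube_eq_pi, volume_pi_pi]
  have : ∀ i : Fin n, volume (Set.Ico ((2:ℝ)^(-k) * m i) ((2:ℝ)^(-k) * (m i + 1)))
      = ENNReal.ofReal ((2:ℝ)^(-k)) := by
    intro i
    rw [Real.volume_Ico]
    congr 1
    ring
  rw [Finset.prod_congr rfl (fun i _ => this i), Finset.prod_const, Finset.card_univ,
    Fintype.card_fin]

lemma IsDyadicCube.volume_pos {n : ℕ} {Q : Set (Rn n)} (h : IsDyadicCube n Q) :
    0 < volume Q := by
  obtain ⟨k, m, rfl⟩ := h
  show 0 < volume (dcube n k m)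
  rw [dcube_volume]
  exact ENNReal.pow_pos (ENNReal.ofReal_pos.2 (zpow_pos two_pos _)) n

lemma IsDyadicCube.volume_lt_top {n : ℕ} {Q : Set (Rn n)} (h : IsDyadicCube n Q) :
    volume Q < ∞ := by
  obtain ⟨k, m, rfl⟩ := h
  show volume (dcube n k m) < ∞
  rw [dcube_volume]
  exact ENNReal.pow_lt_top ENNReal.ofReal_lt_top

lemma IsDyadicCube.nonempty {n : ℕ} {Q : Set (Rn n)} (h : IsDyadicCube n Q) :
    Q.Nonempty := by
  obtain ⟨k, m, rfl⟩ := h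
  refine ⟨fun i => (2:ℝ)^(-k) * m i, fun i => ⟨le_refl _, ?_⟩⟩
  have : (0:ℝ) < (2:ℝ)^(-k) := zpow_pos two_pos _
  have h2 : (m i : ℝ) < (m i : ℝ) + 1 := lt_add_one _
  exact mul_lt_mul_of_pos_left h2 this

lemma dcube_subset_of_mem {n : ℕ} {k k' : ℤ} {m m' : Fin n → ℤ} (hk : k' ≤ k)
    {x : Rn n} (hx : x ∈ dcube n k m) (hx' : x ∈ dcube n k' m') :
    dcube n k m ⊆ dcube n k' m' := by
  set N : ℤ := 2 ^ (k - k').toNat with hNdef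
  have ht : ((k - k').toNat : ℤ) = k - k' := Int.toNat_of_nonneg (sub_nonneg.2 hk)
  have hN : (2:ℝ)^(-k') = (N:ℝ) * (2:ℝ)^(-k) := by
    have hcast : (N:ℝ) = (2:ℝ) ^ (((k - k').toNat : ℤ)) := by
      rw [zpow_natCast]; push_cast [hNdef]; norm_num
    rw [hcast, ← zpow_add₀ (two_ne_zero : (2:ℝ) ≠ 0)]
    congr 1
    omega
  have hh : (0:ℝ) < (2:ℝ)^(-k) := zpow_pos two_pos _
  intro z hz
  intro i
  have hxi := hx i
  have hx'i := hx' i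
  have hzi := hz i
  rw [hN] at hx'i ⊢
  set h : ℝ := (2:ℝ)^(-k)
  -- integer inequalities
  have key1 : N * m' i ≤ m i := by
    have r1 : h * ((N:ℝ) * (m' i : ℝ)) ≤ x i := by
      calc h * ((N:ℝ) * (m' i)) = (N:ℝ) * h * (m' i) := by ring
      _ ≤ x i := hx'i.1
    have r2 : x i < h * ((m i : ℝ) + 1) := hxi.2
    have : h * ((N:ℝ) * (m' i : ℝ)) < h * ((m i : ℝ) + 1) := lt_of_le_of_lt r1 r2
    have := (mul_lt_mul_iff_right₀ hh).mp this
    have h3 : N * m' i < m i + 1 := by exact_mod_cast (by push_cast; linarith :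
      ((N * m' i : ℤ) : ℝ) < ((m i + 1 : ℤ) : ℝ))
    omega
  have key2 : m i + 1 ≤ N * (m' i + 1) := by
    have r1 : h * (m i : ℝ) ≤ x i := hxi.1
    have r2 : x i < h * ((N:ℝ) * ((m' i : ℝ) + 1)) := by
      calc x i < (N:ℝ) * h * ((m' i) + 1) := hx'i.2
      _ = h * ((N:ℝ) * ((m' i : ℝ) + 1)) := by ring
    have : h * (m i : ℝ) < h * ((N:ℝ) * ((m' i : ℝ) + 1)) := lt_of_le_of_lt r1 r2
    have := (mul_lt_mul_iff_right₀ hh).mp this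
    have h3 : m i < N * (m' i + 1) := by exact_mod_cast (by push_cast; linarith :
      ((m i : ℤ) : ℝ) < ((N * (m' i + 1) : ℤ) : ℝ))
    omega
  constructor
  · have c1 : ((N * m' i : ℤ) : ℝ) ≤ ((m i : ℤ) : ℝ) := Int.cast_le.2 key1
    push_cast at c1
    calc (N:ℝ) * h * (m' i) = h * ((N:ℝ) * (m' i)) := by ring
    _ ≤ h * (m i) := by apply mul_le_mul_of_nonneg_left _ hh.le; linarith
    _ ≤ z i := hzi.1
  · have c2 : ((m i + 1 : ℤ) : ℝ) ≤ ((N * (m' i + 1) : ℤ) : ℝ) := Int.cast_le.2 key2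
    push_cast at c2
    calc z i < h * ((m i) + 1) := hzi.2
    _ ≤ h * ((N:ℝ) * ((m' i) + 1)) := by apply mul_le_mul_of_nonneg_left _ hh.le; linarith
    _ = (N:ℝ) * h * ((m' i) + 1) := by ring

lemma dyadic_nested_or_disjoint {n : ℕ} {Q Q' : Set (Rn n)}
    (hQ : IsDyadicCube n Q) (hQ' : IsDyadicCube n Q') :
    Q ⊆ Q' ∨ Q' ⊆ Q ∨ Disjoint Q Q' := by
  by_cases hd : Disjoint Q Q'
  · exact Or.inr (Or.inr hd)
  obtain ⟨x, hx, hx'⟩ := Set.not_disjoint_iff.mp hd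
  obtain ⟨k, m, rfl⟩ := hQ
  obtain ⟨k', m', rfl⟩ := hQ'
  rcases le_total k' k with h | h
  · exact Or.inl (dcube_subset_of_mem h hx hx')
  · exact Or.inr (Or.inl (dcube_subset_of_mem h hx' hx))


lemma iSup_rpow_mono {ι : Sort*} (u : ι → ℝ≥0∞) {q : ℝ} (hq : 0 < q) :
    (⨆ k, u k) ^ q = ⨆ k, (u k) ^ q := by
  have h := (ENNReal.orderIsoRpow q hq).map_iSup u
  have e : ∀ x : ℝ≥0∞, (ENNReal.orderIsoRpow q hq) x = x ^ q := fun x => by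
    simp [ENNReal.orderIsoRpow]
  simp only [e] at h
  exact h

/-- MCT reduction: an `L^q`-bound for all finite partial sums gives it for the tsum. -/
lemma lpnorm_tsum_le {α : Type*} [MeasurableSpace α] (m : Measure α) {ι : Type*} [Countable ι]
    (F : ι → α → ℝ≥0∞) (hF : ∀ i, Measurable (F i)) {q : ℝ} (hq : 0 < q) (M : ℝ≥0∞)
    (hs : ∀ s : Finset ι, (∫⁻ x, (∑ i ∈ s, F i x) ^ q ∂m) ^ (1/q) ≤ M) :
    (∫⁻ x, (∑' i, F i x) ^ q ∂m) ^ (1/q) ≤ M := by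
  classical
  rcases isEmpty_or_nonempty ι with h | h
  · simpa using hs ∅
  obtain ⟨e, he⟩ := exists_surjective_nat ι
  set s : ℕ → Finset ι := fun k => (Finset.range (k+1)).image e with hsdef
  have hmono : ∀ {a b : ℕ}, a ≤ b → s a ⊆ s b := fun hab =>
    Finset.image_subset_image (Finset.range_subset_range.2 (by omega))
  have hexh : ∀ t : Finset ι, ∃ k, t ⊆ s k := by
    intro t
    refine ⟨t.sup (fun i => Function.invFun e i), fun i hi => ?_⟩
    simp only [hsdef, Finset.mem_image]
    exact ⟨Function.invFun e i, Finset.mem_range.2 (Nat.lt_succ_of_le (Finset.le_sup hi)),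
      Function.invFun_eq (he i)⟩
  have hpt : ∀ x, (∑' i, F i x) = ⨆ k, ∑ i ∈ s k, F i x := fun x =>
    ENNReal.tsum_eq_iSup_sum' s hexh
  have hmeas : ∀ k, Measurable (fun x => (∑ i ∈ s k, F i x) ^ q) := fun k =>
    (Finset.measurable_sum _ (fun i _ => hF i)).pow_const q
  have key : (∫⁻ x, (∑' i, F i x) ^ q ∂m) = ⨆ k, ∫⁻ x, (∑ i ∈ s k, F i x) ^ q ∂m := by
    rw [← lintegral_iSup hmeas]
    · apply lintegral_congr
      intro x
      rw [hpt x, iSup_rpow_mono _ hq]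
    · intro a b hab x
      exact ENNReal.rpow_le_rpow (Finset.sum_le_sum_of_subset (hmono hab)) hq.le
  have hMq : ∀ k, ∫⁻ x, (∑ i ∈ s k, F i x) ^ q ∂m ≤ M ^ q := by
    intro k
    have h1 := hs (s k)
    have h2 := ENNReal.rpow_le_rpow h1 hq.le
    rwa [one_div, ENNReal.rpow_inv_rpow hq.ne'] at h2
  calc (∫⁻ x, (∑' i, F i x) ^ q ∂m) ^ (1/q) ≤ (M ^ q) ^ (1/q) := by
        rw [key]; exact ENNReal.rpow_le_rpow (iSup_le hMq) (by positivity)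
    _ = M := by rw [one_div, ENNReal.rpow_rpow_inv hq.ne']

/-- discrete layer-cake upper bound -/
lemma lintegral_le_layer {α : Type*} [MeasurableSpace α] (m : Measure α) {g : α → ℝ≥0∞}
    (hg : Measurable g) :
    ∫⁻ x, g x ∂m ≤ ∑' k : ℤ, (2:ℝ≥0∞)^k * m {x | (2:ℝ≥0∞)^k < g x} := by
  have sum_le_pt : ∀ k₀ : ℤ, (∑' n : ℕ, (2:ℝ≥0∞)^(k₀ - n)) = 2^(k₀+1) := by
    intro k₀
    have : ∀ n : ℕ, (2:ℝ≥0∞)^(k₀ - (n:ℤ)) = 2^k₀ * (2⁻¹)^n := by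
      intro n
      rw [sub_eq_add_neg, ENNReal.zpow_add two_ne_zero ENNReal.ofNat_ne_top,
        ENNReal.zpow_neg, zpow_natCast, ENNReal.inv_pow]
    rw [tsum_congr this, ENNReal.tsum_mul_left, ENNReal.tsum_geometric,
      ENNReal.one_sub_inv_two, inv_inv, ENNReal.zpow_add two_ne_zero ENNReal.ofNat_ne_top,
      zpow_one]
  have hpt : ∀ x, g x ≤ ∑' k : ℤ, ({y | (2:ℝ≥0∞)^k < g y}).indicator
      (fun _ => (2:ℝ≥0∞)^k) x := by
    intro x
    set term : ℤ → ℝ≥0∞ := fun k => ({y | (2:ℝ≥0∞)^k < g y}).indicator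
      (fun _ => (2:ℝ≥0∞)^k) x with hterm
    have hterm_eq : ∀ k : ℤ, term k = if (2:ℝ≥0∞)^k < g x then (2:ℝ≥0∞)^k else 0 := by
      intro k; simp [hterm, Set.indicator_apply]
    show g x ≤ ∑' k, term k
    rcases eq_or_ne (g x) 0 with h0 | h0
    · simp [h0]
    rcases eq_or_ne (g x) ∞ with htop | htop
    · have hle : ∀ n : ℕ, (2:ℝ≥0∞)^((n:ℤ)) ≤ term ((fun n : ℕ => (n:ℤ)) n) := by
        intro n
        rw [hterm_eq, if_pos]
        rw [htop, zpow_natCast]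
        exact ENNReal.pow_lt_top (by norm_num)
      have h1 : (∑' n : ℕ, (2:ℝ≥0∞)^(n:ℤ)) ≤ ∑' k, term k :=
        Summable.tsum_le_tsum_of_inj (fun n : ℕ => (n:ℤ))
          (fun a b hab => by
            have h2 : (a:ℤ) = (b:ℤ) := hab
            exact_mod_cast h2)
          (fun c _ => zero_le) hle ENNReal.summable ENNReal.summable
      have h2 : (∑' n : ℕ, (2:ℝ≥0∞)^(n:ℤ)) = ∞ := by
        have hz : ∀ n : ℕ, (2:ℝ≥0∞)^(n:ℤ) = 2^n := fun n => zpow_natCast _ _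
        rw [tsum_congr hz, ENNReal.tsum_geometric]
        simp [tsub_eq_zero_of_le one_le_two]
      rw [h2] at h1
      rw [htop]
      exact le_top.trans h1
    · obtain ⟨k₀, hk₀⟩ := ENNReal.exists_mem_Ioc_zpow h0 htop one_lt_two ENNReal.ofNat_ne_top
      have hle : ∀ n : ℕ, (2:ℝ≥0∞)^(k₀ - (n:ℤ)) ≤ term ((fun n : ℕ => k₀ - (n:ℤ)) n) := by
        intro n
        rw [hterm_eq, if_pos]
        have h4 : (2:ℝ≥0∞)^(k₀ - (n:ℤ)) ≤ 2^k₀ := ENNReal.zpow_le_of_le one_le_two (by omega)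
        exact lt_of_le_of_lt h4 hk₀.1
      have h1 : (∑' n : ℕ, (2:ℝ≥0∞)^(k₀ - (n:ℤ))) ≤ ∑' k, term k :=
        Summable.tsum_le_tsum_of_inj (fun n : ℕ => k₀ - (n:ℤ))
          (fun a b hab => by
            have h2 : k₀ - (a:ℤ) = k₀ - (b:ℤ) := hab
            have h3 : (a:ℤ) = (b:ℤ) := by omega
            exact_mod_cast h3)
          (fun c _ => zero_le) hle ENNReal.summable ENNReal.summable
      rw [sum_le_pt k₀] at h1
      exact le_trans hk₀.2 h1
  calc ∫⁻ x, g x ∂m ≤ ∫⁻ x, ∑' k : ℤ, ({y | (2:ℝ≥0∞)^k < g y}).indicator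
        (fun _ => (2:ℝ≥0∞)^k) x ∂m := lintegral_mono hpt
    _ = ∑' k : ℤ, (2:ℝ≥0∞)^k * m {x | (2:ℝ≥0∞)^k < g x} := by
      have hms : ∀ c : ℝ≥0∞, MeasurableSet {y | c < g y} := fun c => hg measurableSet_Ioi
      rw [lintegral_tsum (fun k => (AEMeasurable.indicator aemeasurable_const (hms (2^k))))]
      apply tsum_congr
      intro k
      rw [lintegral_indicator (hms (2^k)), setLIntegral_const]


lemma lpnorm_finset_sum_le {α : Type*} [MeasurableSpace α] (m : Measure α) {q : ℝ} (hq : 1 ≤ q)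
    {ι : Type*} (s : Finset ι) (F : ι → α → ℝ≥0∞) (hF : ∀ i, Measurable (F i)) :
    (∫⁻ x, (∑ i ∈ s, F i x) ^ q ∂m) ^ (1/q) ≤ ∑ i ∈ s, (∫⁻ x, F i x ^ q ∂m) ^ (1/q) := by
  classical
  have hq0 : (0:ℝ) < q := lt_of_lt_of_le one_pos hq
  induction s using Finset.induction_on with
  | empty =>
    simp only [Finset.sum_empty]
    rw [lintegral_congr (fun x => ENNReal.zero_rpow_of_pos hq0), lintegral_zero,
      ENNReal.zero_rpow_of_pos (by positivity : (0:ℝ) < 1/q)]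
  | insert i s hi ih =>
    rw [Finset.sum_insert hi]
    have h1 := ENNReal.lintegral_Lp_add_le (μ := m) (hF i).aemeasurable
      (Finset.measurable_sum s (fun j _ => hF j)).aemeasurable hq
    calc (∫⁻ x, (∑ j ∈ insert i s, F j x) ^ q ∂m) ^ (1/q)
        = (∫⁻ x, ((fun y => F i y) + (fun y => ∑ j ∈ s, F j y)) x ^ q ∂m) ^ (1/q) := by
          congr 1
          apply lintegral_congr
          intro x
          rw [Finset.sum_insert hi]
          rfl
      _ ≤ (∫⁻ x, F i x ^ q ∂m) ^ (1/q) + (∫⁻ x, (∑ j ∈ s, F j x) ^ q ∂m) ^ (1/q) := h1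
      _ ≤ (∫⁻ x, F i x ^ q ∂m) ^ (1/q) + ∑ j ∈ s, (∫⁻ x, F j x ^ q ∂m) ^ (1/q) :=
          add_le_add_right ih _

lemma rpow_sum_of_disjoint {α ι : Type*} (s : Finset ι) (R : ι → Set α)
    (hdisj : (↑s : Set ι).PairwiseDisjoint R) (F : ι → α → ℝ≥0∞)
    (hsupp : ∀ i ∈ s, ∀ x, x ∉ R i → F i x = 0) {q : ℝ} (hq : 0 < q) (x : α) :
    (∑ i ∈ s, F i x) ^ q = ∑ i ∈ s, (F i x) ^ q := by
  classical
  by_cases hx : ∃ i ∈ s, x ∈ R i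
  · obtain ⟨i, hi, hxi⟩ := hx
    have hzero : ∀ j ∈ s, j ≠ i → F j x = 0 := by
      intro j hj hne
      by_cases hxj : x ∈ R j
      · exact absurd hxi (Set.disjoint_left.mp
          (hdisj (Finset.mem_coe.2 hj) (Finset.mem_coe.2 hi) hne) hxj)
      · exact hsupp j hj x hxj
    rw [Finset.sum_eq_single_of_mem i hi hzero, Finset.sum_eq_single_of_mem i hi
      (fun j hj hne => by rw [hzero j hj hne, ENNReal.zero_rpow_of_pos hq])]
  · push_neg at hx
    have hz : ∀ j ∈ s, F j x = 0 := fun j hj => hsupp j hj x (hx j hj)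
    rw [Finset.sum_eq_zero hz, Finset.sum_eq_zero
      (fun j hj => by rw [hz j hj, ENNReal.zero_rpow_of_pos hq]), ENNReal.zero_rpow_of_pos hq]

lemma finset_exists_le_maximal {ι : Type*} [PartialOrder ι] (s : Finset ι) {a : ι} (ha : a ∈ s) :
    ∃ b ∈ s, a ≤ b ∧ ∀ c ∈ s, b ≤ c → c = b := by
  classical
  obtain ⟨b, hb, hmax'⟩ := Finset.exists_maximal (s := s.filter (fun b => a ≤ b)) ⟨a, by simp [ha]⟩
  have hmax : ∀ x ∈ s.filter (fun b => a ≤ b), ¬ b < x :=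
    fun x hx hlt => lt_irrefl b (lt_of_lt_of_le hlt (hmax' hx hlt.le))
  simp only [Finset.mem_filter] at hb
  refine ⟨b, hb.1, hb.2, fun c hc hbc => ?_⟩
  by_contra hne
  exact hmax c (Finset.mem_filter.2 ⟨hc, le_trans hb.2 hbc⟩)
    (lt_of_le_of_ne hbc (fun h => hne h.symm))

/-! ## Context lemmas -/

lemma lpNorm_withDensity {n : ℕ} {σ : Rn n → ℝ≥0∞} (hσ : Measurable σ) {g : Rn n → ℝ≥0∞}
    (hg : Measurable g) (a : ℝ) :
    lpNorm a σ g = (∫⁻ x, g x ^ a ∂(volume.withDensity σ)) ^ (1/a) := by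
  rw [lintegral_withDensity_eq_lintegral_mul volume hσ (hg.pow_const a)]
  unfold lpNorm
  congr 1
  exact lintegral_congr (fun x => (mul_comm _ _))

lemma setLIntegral_withDensity_eq {n : ℕ} {σ : Rn n → ℝ≥0∞} (hσ : Measurable σ)
    {f : Rn n → ℝ≥0∞} (hf : Measurable f) {Q : Set (Rn n)} (hQ : MeasurableSet Q) :
    ∫⁻ x in Q, f x ∂(volume.withDensity σ) = ∫⁻ x in Q, f x * σ x := by
  rw [restrict_withDensity hQ, lintegral_withDensity_eq_lintegral_mul _ hσ hf]
  exact lintegral_congr (fun x => (mul_comm _ _))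

lemma measurable_cubeSum {n : ℕ} {ι : Type*} [Countable ι] (U : ι → Set (Rn n))
    (hU : ∀ i, MeasurableSet (U i)) (c : ι → ℝ≥0∞) :
    Measurable (fun x => ∑' i, (U i).indicator (fun _ => c i) x) :=
  Measurable.ennreal_tsum (fun i => measurable_const.indicator (hU i))

lemma measurable_linOp {n : ℕ} {Qc : Set (Set (Rn n))} (hQc : Qc.Countable)
    (hQdy : ∀ Q ∈ Qc, IsDyadicCube n Q) (τ : Set (Rn n) → ℝ≥0) (g : Rn n → ℝ≥0∞) :
    Measurable (linOp Qc τ g) := by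
  haveI := hQc.to_subtype
  exact Measurable.ennreal_tsum
    (fun Q => measurable_const.indicator (hQdy Q Q.2).measurableSet)

/-- extraction of a distribution bound from the weak norm -/
lemma measure_bound_of_wLpNorm {n : ℕ} {p : ℝ} (hp : 0 < p) {w g : Rn n → ℝ≥0∞} {B : ℝ≥0∞}
    (h : wLpNorm p w g ≤ B) {t : ℝ≥0} (ht : 0 < t) :
    ∫⁻ x in {x | (t:ℝ≥0∞) < g x}, w x ≤ (B * (t:ℝ≥0∞)⁻¹) ^ p := by
  set Y : ℝ≥0∞ := ∫⁻ x in {x | (t:ℝ≥0∞) < g x}, w x with hY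
  have h1 : (t:ℝ≥0∞) * Y ^ (1/p) ≤ B := by
    refine le_trans ?_ h
    exact le_iSup₂_of_le t ht (le_refl _)
  have htne : (t:ℝ≥0∞) ≠ 0 := ENNReal.coe_ne_zero.2 ht.ne'
  have h2 : Y ^ (1/p) ≤ B * (t:ℝ≥0∞)⁻¹ := by
    calc Y ^ (1/p) = (t:ℝ≥0∞)⁻¹ * ((t:ℝ≥0∞) * Y ^ (1/p)) := by
          rw [← mul_assoc, ENNReal.inv_mul_cancel htne ENNReal.coe_ne_top, one_mul]
      _ ≤ (t:ℝ≥0∞)⁻¹ * B := mul_le_mul_right h1 _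
      _ = B * (t:ℝ≥0∞)⁻¹ := mul_comm _ _
  calc Y = (Y ^ (1/p)) ^ p := by rw [one_div, ENNReal.rpow_inv_rpow hp.ne']
    _ ≤ (B * (t:ℝ≥0∞)⁻¹) ^ p := ENNReal.rpow_le_rpow h2 hp.le

lemma tsum_zpow_tail (k₀ : ℤ) : (∑' n : ℕ, (2:ℝ≥0∞)^(k₀ - (n:ℤ))) = 2^(k₀+1) := by
  have h2 : ∀ n : ℕ, (2:ℝ≥0∞)^(k₀ - (n:ℤ)) = 2^k₀ * (2⁻¹)^n := by
    intro n
    rw [sub_eq_add_neg, ENNReal.zpow_add two_ne_zero ENNReal.ofNat_ne_top,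
      ENNReal.zpow_neg, zpow_natCast, ENNReal.inv_pow]
  rw [tsum_congr h2, ENNReal.tsum_mul_left, ENNReal.tsum_geometric,
    ENNReal.one_sub_inv_two, inv_inv, ENNReal.zpow_add two_ne_zero ENNReal.ofNat_ne_top,
    zpow_one]

/-- Splitting a `ℤ`-indexed tsum at `k₀`. -/
lemma tsum_int_split (h : ℤ → ℝ≥0∞) (k₀ : ℤ) :
    ∑' k : ℤ, h k ≤ (∑' n : ℕ, h (k₀ - n)) + ∑' n : ℕ, h (k₀ + 1 + n) := by
  set s : Set ℤ := {k | k ≤ k₀} with hs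
  have hsplit := Summable.tsum_add_tsum_compl (f := h) (s := s) ENNReal.summable ENNReal.summable
  rw [← hsplit]
  refine add_le_add ?_ ?_
  · refine Summable.tsum_le_tsum_of_inj (fun x : s => (k₀ - (x:ℤ)).toNat)
      (fun a b hab => ?_) (fun c _ => zero_le) (fun x => ?_)
      ENNReal.summable ENNReal.summable
    · have ha := Int.toNat_of_nonneg (sub_nonneg.2 (a.2 : (a:ℤ) ≤ k₀))
      have hb := Int.toNat_of_nonneg (sub_nonneg.2 (b.2 : (b:ℤ) ≤ k₀))
      have : ((k₀ - (a:ℤ)).toNat : ℤ) = ((k₀ - (b:ℤ)).toNat : ℤ) := by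
        exact_mod_cast congrArg (fun t : ℕ => (t:ℤ)) hab
      apply Subtype.ext
      omega
    · have hx := Int.toNat_of_nonneg (sub_nonneg.2 (x.2 : (x:ℤ) ≤ k₀))
      have : k₀ - ((k₀ - (x:ℤ)).toNat : ℤ) = (x:ℤ) := by omega
      rw [this]
  · refine Summable.tsum_le_tsum_of_inj (fun x : ↑sᶜ => ((x:ℤ) - (k₀ + 1)).toNat)
      (fun a b hab => ?_) (fun c _ => zero_le) (fun x => ?_)
      ENNReal.summable ENNReal.summable
    · have ha' : k₀ < (a:ℤ) := by
        have := a.2; simp only [hs, Set.mem_compl_iff, Set.mem_setOf_eq, not_le] at this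
        exact this
      have hb' : k₀ < (b:ℤ) := by
        have := b.2; simp only [hs, Set.mem_compl_iff, Set.mem_setOf_eq, not_le] at this
        exact this
      have : (((a:ℤ) - (k₀+1)).toNat : ℤ) = (((b:ℤ) - (k₀+1)).toNat : ℤ) := by
        exact_mod_cast congrArg (fun t : ℕ => (t:ℤ)) hab
      apply Subtype.ext
      omega
    · have hx' : k₀ < (x:ℤ) := by
        have := x.2; simp only [hs, Set.mem_compl_iff, Set.mem_setOf_eq, not_le] at this
        exact this
      have : k₀ + 1 + (((x:ℤ) - (k₀+1)).toNat : ℤ) = (x:ℤ) := by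
        have := Int.toNat_of_nonneg (by omega : (0:ℤ) ≤ (x:ℤ) - (k₀+1))
        omega
      rw [this]

/-! ## Lower bound: testing constant ≲ weak norm -/

lemma lower_bound_per_R {n : ℕ} {p : ℝ} (hp : 1 < p)
    {Qc : Set (Set (Rn n))} (hQc : Qc.Countable) (hQdy : ∀ Q ∈ Qc, IsDyadicCube n Q)
    (τ : Set (Rn n) → ℝ≥0) {w σ : Rn n → ℝ≥0∞} (hw : Measurable w) (hσ : Measurable σ)
    (hLw : LocInt w) (hLσ : LocInt σ) {C' : ℝ≥0∞} (hC'top : C' ≠ ∞)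
    (Hw : ∀ f : Rn n → ℝ≥0∞, Measurable f →
      wLpNorm p w (linOp Qc τ (fun x => f x * σ x)) ≤ C' * lpNorm p σ f)
    {R : Set (Rn n)} (hR : R ∈ Qc) :
    (∫⁻ x in R, w x) ^ (-(1 - 1/p)) *
      lpNorm (p/(p-1)) σ (fun x => ∑' Q : {Q : Set (Rn n) // Q ∈ Qc ∧ Q ⊆ R},
        (Q : Set (Rn n)).indicator (fun _ => (τ Q : ℝ≥0∞) * dAvg w Q) x)
      ≤ (2 + (1 - (2:ℝ≥0∞)^((1:ℝ)-p))⁻¹) * C' := by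
  classical
  set K1 : ℝ≥0∞ := 2 + (1 - (2:ℝ≥0∞)^((1:ℝ)-p))⁻¹ with hK1
  set q : ℝ := p / (p-1) with hqdef
  set ν := volume.withDensity σ with hν
  set μ := volume.withDensity w with hμ
  have hp0 : (0:ℝ) < p := lt_trans one_pos hp
  have hq1 : 1 < q := by
    rw [hqdef]
    exact (_root_.one_lt_div (by linarith)).2 (by linarith)
  have hq0 : (0:ℝ) < q := lt_trans one_pos hq1
  have hinv : 1/p + 1/q = 1 := by
    rw [hqdef, one_div_div, ← add_div, show 1 + (p-1) = p by ring]
    exact div_self (by linarith)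
  have hqinv : 1/q = 1 - 1/p := by linarith
  have hqmul : q * (p-1) = p := by
    rw [hqdef]; exact div_mul_cancel₀ p (by linarith)
  have hqp : (q - 1) * p = q := by nlinarith [hqmul]
  have hRdy : IsDyadicCube n R := hQdy R hR
  have hRmeas : MeasurableSet R := hRdy.measurableSet
  have hμR_def : ∫⁻ x in R, w x = μ R := (withDensity_apply w hRmeas).symm
  have hμR_top : μ R ≠ ∞ := by rw [← hμR_def]; exact (hLw R hRdy).ne
  have hνR_top : ν R ≠ ∞ := by
    rw [hν, withDensity_apply σ hRmeas]; exact (hLσ R hRdy).ne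
  haveI : Countable {Q : Set (Rn n) // Q ∈ Qc ∧ Q ⊆ R} :=
    (hQc.mono (fun Q hQ => hQ.1)).to_subtype
  set ι := {Q : Set (Rn n) // Q ∈ Qc ∧ Q ⊆ R} with hι
  set F : ι → Rn n → ℝ≥0∞ :=
    fun Q x => (Q : Set (Rn n)).indicator (fun _ => (τ Q : ℝ≥0∞) * dAvg w Q) x with hF
  have hQmeas : ∀ Q : ι, MeasurableSet (Q : Set (Rn n)) :=
    fun Q => (hQdy Q Q.2.1).measurableSet
  have hQdy' : ∀ Q : ι, IsDyadicCube n (Q : Set (Rn n)) := fun Q => hQdy Q Q.2.1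
  have hFmeas : ∀ Q : ι, Measurable (F Q) := fun Q => measurable_const.indicator (hQmeas Q)
  have hSmeas : Measurable (fun x => ∑' Q : ι, F Q x) := Measurable.ennreal_tsum hFmeas
  have hgoalfn : (fun x => ∑' Q : {Q : Set (Rn n) // Q ∈ Qc ∧ Q ⊆ R},
      (Q : Set (Rn n)).indicator (fun _ => (τ Q : ℝ≥0∞) * dAvg w Q) x)
      = fun x => ∑' Q : ι, F Q x := rfl
  rw [hgoalfn, hμR_def, lpNorm_withDensity hσ hSmeas q, ← hν]
  -- degenerate case
  rcases eq_or_ne (μ R) 0 with hμR0 | hμR0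
  · have hz : ∀ (Q : ι) (x : Rn n), F Q x = 0 := by
      intro Q x
      have h1 : ∫⁻ y in (Q : Set (Rn n)), w y ≤ ∫⁻ y in R, w y :=
        lintegral_mono_set Q.2.2
      rw [hμR_def, hμR0] at h1
      have h2 : dAvg w (Q : Set (Rn n)) = 0 := by
        unfold dAvg
        rw [le_zero_iff.1 h1, mul_zero]
      rw [hF]
      show (Q : Set (Rn n)).indicator (fun _ => (τ Q : ℝ≥0∞) * dAvg w Q) x = 0
      rw [h2, mul_zero]
      simp
    have htz : ∀ x : Rn n, (∑' Q : ι, F Q x) ^ q = (0:ℝ≥0∞) := by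
      intro x
      rw [tsum_congr (fun Q => hz Q x), tsum_zero, ENNReal.zero_rpow_of_pos hq0]
    calc (μ R) ^ (-(1 - 1/p)) * (∫⁻ x, (∑' Q : ι, F Q x) ^ q ∂ν) ^ (1/q)
        = (μ R) ^ (-(1 - 1/p)) * ((∫⁻ _x : Rn n, (0:ℝ≥0∞) ∂ν) ^ (1/q)) := by
          rw [lintegral_congr htz]
      _ = 0 := by rw [lintegral_zero, ENNReal.zero_rpow_of_pos (by positivity), mul_zero]
      _ ≤ _ := zero_le
  -- main case: bound every finite partial sum
  have hterm : ∀ s : Finset ι,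
      (∫⁻ x, (∑ Q ∈ s, F Q x) ^ q ∂ν) ^ (1/q) ≤ K1 * C' * (μ R) ^ (1/q) := by
    intro s
    set G : Rn n → ℝ≥0∞ := fun x => ∑ Q ∈ s, F Q x with hG
    have hGmeas : Measurable G := Finset.measurable_sum _ (fun Q _ => hFmeas Q)
    set X : ℝ≥0∞ := ∫⁻ x, G x ^ q ∂ν with hX
    show X ^ (1/q) ≤ _
    rcases eq_or_ne X 0 with hX0 | hX0
    · rw [hX0, ENNReal.zero_rpow_of_pos (by positivity)]
      exact zero_le
    have hMfin : ∀ Q : ι, (τ Q : ℝ≥0∞) * dAvg w Q ≠ ∞ := by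
      intro Q
      have h1 : dAvg w (Q : Set (Rn n)) ≠ ∞ := by
        unfold dAvg
        exact (ENNReal.mul_lt_top (ENNReal.inv_lt_top.2 (hQdy' Q).volume_pos)
          (hLw _ (hQdy' Q))).ne
      exact ENNReal.mul_ne_top ENNReal.coe_ne_top h1
    set M : ℝ≥0∞ := ∑ Q ∈ s, (τ Q : ℝ≥0∞) * dAvg w Q with hM
    have hMtop : M ≠ ∞ := by
      rw [hM]
      exact (ENNReal.sum_lt_top.2 (fun Q _ => lt_top_iff_ne_top.2 (hMfin Q))).ne
    have hGle : ∀ x, G x ≤ M := by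
      intro x
      exact Finset.sum_le_sum (fun Q _ => Set.indicator_le_self _ _ x)
    have hGsupp : ∀ x, x ∉ R → G x = 0 := by
      intro x hx
      apply Finset.sum_eq_zero
      intro Q _
      exact Set.indicator_of_notMem (fun hxQ => hx (Q.2.2 hxQ)) _
    have hXtop : X ≠ ∞ := by
      have hb : ∀ x, G x ^ q ≤ R.indicator (fun _ => M ^ q) x := by
        intro x
        by_cases hx : x ∈ R
        · rw [Set.indicator_of_mem hx]; exact ENNReal.rpow_le_rpow (hGle x) hq0.le
        · rw [Set.indicator_of_notMem hx, hGsupp x hx, ENNReal.zero_rpow_of_pos hq0]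
      have hXb : X ≤ M ^ q * ν R := by
        rw [hX]
        calc ∫⁻ x, G x ^ q ∂ν ≤ ∫⁻ x, R.indicator (fun _ => M ^ q) x ∂ν :=
              lintegral_mono hb
          _ = M ^ q * ν R := by rw [lintegral_indicator hRmeas, setLIntegral_const]
      exact (lt_of_le_of_lt hXb (ENNReal.mul_lt_top
        (ENNReal.rpow_lt_top_of_nonneg hq0.le hMtop) (lt_top_iff_ne_top.2 hνR_top))).ne
    set f : Rn n → ℝ≥0∞ := fun x => G x ^ (q - 1) with hf
    have hfmeas : Measurable f := hGmeas.pow_const _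
    have hfnorm : lpNorm p σ f = X ^ (1/p) := by
      rw [lpNorm_withDensity hσ hfmeas p, ← hν, hX]
      congr 1
      apply lintegral_congr
      intro x
      show (G x ^ (q-1)) ^ p = G x ^ q
      rw [← ENNReal.rpow_mul, hqp]
    -- step 1
    have hstep1 : X = ∑ Q ∈ s,
        ((τ Q : ℝ≥0∞) * dAvg w Q) * ∫⁻ x in (Q : Set (Rn n)), f x ∂ν := by
      rw [hX]
      have hpt : ∀ x, G x ^ q = ∑ Q ∈ s,
          (Q : Set (Rn n)).indicator (fun _ => ((τ Q : ℝ≥0∞) * dAvg w Q)) x * f x := by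
        intro x
        have h1 : G x ^ q = G x * f x := by
          show G x ^ q = G x * G x ^ (q-1)
          calc G x ^ q = G x ^ (1 + (q-1)) := by norm_num
            _ = G x ^ (1:ℝ) * G x ^ (q-1) :=
                ENNReal.rpow_add_of_nonneg _ _ zero_le_one (by linarith)
            _ = G x * G x ^ (q-1) := by rw [ENNReal.rpow_one]
        rw [h1]
        show (∑ Q ∈ s, F Q x) * f x = _
        rw [Finset.sum_mul]
      rw [lintegral_congr hpt,
        lintegral_finset_sum _ (f := fun (Q : ι) x =>
          (Q : Set (Rn n)).indicator (fun _ => ((τ Q : ℝ≥0∞) * dAvg w Q)) x * f x)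
          (fun Q _ => (hFmeas Q).mul hfmeas)]
      apply Finset.sum_congr rfl
      intro Q _
      have hpt2 : ∀ x, (Q : Set (Rn n)).indicator (fun _ => ((τ Q : ℝ≥0∞) * dAvg w Q)) x * f x
          = (Q : Set (Rn n)).indicator (fun y => ((τ Q : ℝ≥0∞) * dAvg w Q) * f y) x := by
        intro x
        by_cases hx : x ∈ (Q : Set (Rn n))
        · rw [Set.indicator_of_mem hx, Set.indicator_of_mem hx]
        · rw [Set.indicator_of_notMem hx, Set.indicator_of_notMem hx, zero_mul]
      rw [lintegral_congr hpt2, lintegral_indicator (hQmeas Q),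
        lintegral_const_mul _ hfmeas]
    -- step 2
    have hstep2 : X = ∑ Q ∈ s,
        ((τ Q : ℝ≥0∞) * dAvg (fun y => f y * σ y) (Q : Set (Rn n))) * μ (Q : Set (Rn n)) := by
      rw [hstep1]
      apply Finset.sum_congr rfl
      intro Q _
      have h2 : ∫⁻ x in (Q : Set (Rn n)), f x ∂ν = ∫⁻ x in (Q : Set (Rn n)), f x * σ x := by
        rw [hν]; exact setLIntegral_withDensity_eq hσ hfmeas (hQmeas Q)
      have h3 : dAvg w (Q : Set (Rn n)) = (volume (Q : Set (Rn n)))⁻¹ * μ (Q : Set (Rn n)) := by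
        rw [hμ, withDensity_apply w (hQmeas Q)]; rfl
      have h4 : dAvg (fun y => f y * σ y) (Q : Set (Rn n))
          = (volume (Q : Set (Rn n)))⁻¹ * ∫⁻ x in (Q : Set (Rn n)), f x ∂ν := by
        rw [h2]; rfl
      rw [h4, h3]
      ring
    -- step 3 : X as μ-integral
    set Φ : Rn n → ℝ≥0∞ := fun x => ∑ Q ∈ s, (Q : Set (Rn n)).indicator
        (fun _ => (τ Q : ℝ≥0∞) * dAvg (fun y => f y * σ y) (Q : Set (Rn n))) x with hΦ
    have hstep3 : X = ∫⁻ x, Φ x ∂μ := by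
      rw [hΦ, lintegral_finset_sum _ (fun Q _ => measurable_const.indicator (hQmeas Q)),
        hstep2]
      apply Finset.sum_congr rfl
      intro Q _
      rw [lintegral_indicator (hQmeas Q), setLIntegral_const]
    have hΦsupp : ∀ x, x ∉ R → Φ x = 0 := by
      intro x hx
      apply Finset.sum_eq_zero
      intro Q _
      exact Set.indicator_of_notMem (fun hxQ => hx (Q.2.2 hxQ)) _
    set g : Rn n → ℝ≥0∞ := linOp Qc τ (fun y => f y * σ y) with hgdef
    have hgmeas : Measurable g := measurable_linOp hQc hQdy τ _
    haveI : Countable Qc := hQc.to_subtype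
    have hΦle : ∀ x, Φ x ≤ g x := by
      intro x
      rw [hΦ, hgdef]
      unfold linOp
      set e : ι → {Q : Set (Rn n) // Q ∈ Qc} := fun Q => ⟨Q.1, Q.2.1⟩ with he
      have hinj : ∀ a ∈ s, ∀ b ∈ s, e a = e b → a = b := by
        intro a _ b _ hab
        exact Subtype.ext (congrArg (fun z : {Q : Set (Rn n) // Q ∈ Qc} => z.val) hab)
      calc ∑ Q ∈ s, (Q : Set (Rn n)).indicator
            (fun _ => (τ Q : ℝ≥0∞) * dAvg (fun y => f y * σ y) (Q : Set (Rn n))) x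
          = ∑ P ∈ s.image e, (P : Set (Rn n)).indicator
            (fun _ => (τ P : ℝ≥0∞) * dAvg (fun y => f y * σ y) (P : Set (Rn n))) x := by
            rw [Finset.sum_image hinj]
        _ ≤ ∑' P : {Q : Set (Rn n) // Q ∈ Qc}, (P : Set (Rn n)).indicator
            (fun _ => (τ P : ℝ≥0∞) * dAvg (fun y => f y * σ y) (P : Set (Rn n))) x :=
            Summable.sum_le_tsum _ (fun _ _ => zero_le) ENNReal.summable
    have hXle : X ≤ ∫⁻ x in R, g x ∂μ := by
      rw [hstep3]
      have hid : ∀ x, Φ x = R.indicator Φ x := by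
        intro x
        by_cases hx : x ∈ R
        · rw [Set.indicator_of_mem hx]
        · rw [Set.indicator_of_notMem hx, hΦsupp x hx]
      calc ∫⁻ x, Φ x ∂μ = ∫⁻ x in R, Φ x ∂μ := by
            rw [lintegral_congr hid, lintegral_indicator hRmeas]
        _ ≤ ∫⁻ x in R, g x ∂μ := setLIntegral_mono hgmeas (fun x _ => hΦle x)
    -- weak-type bound
    set B : ℝ≥0∞ := C' * X ^ (1/p) with hB
    have hwB : wLpNorm p w g ≤ B := by
      rw [hB, ← hfnorm, hgdef]
      exact Hw f hfmeas
    have hdist : ∀ k : ℤ, μ {x | (2:ℝ≥0∞)^k < g x} ≤ (B * ((2:ℝ≥0∞)^k)⁻¹) ^ p := by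
      intro k
      have ht : (0:ℝ≥0) < 2^k := zpow_pos (by norm_num) k
      have hcoe : (((2:ℝ≥0)^k : ℝ≥0) : ℝ≥0∞) = (2:ℝ≥0∞)^k := by
        rw [ENNReal.coe_zpow (by norm_num)]; norm_num
      have hb := measure_bound_of_wLpNorm hp0 hwB ht
      rw [hcoe] at hb
      have hSm : MeasurableSet {x | (2:ℝ≥0∞)^k < g x} := hgmeas measurableSet_Ioi
      rw [hμ, withDensity_apply w hSm]
      exact hb
    have hlayer : X ≤ ∑' k : ℤ, (2:ℝ≥0∞)^k *
        min (μ R) ((B * ((2:ℝ≥0∞)^k)⁻¹) ^ p) := by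
      refine le_trans hXle (le_trans (lintegral_le_layer (μ.restrict R) hgmeas) ?_)
      apply ENNReal.tsum_le_tsum
      intro k
      apply mul_le_mul_right
      have hSm : MeasurableSet {x | (2:ℝ≥0∞)^k < g x} := hgmeas measurableSet_Ioi
      rw [Measure.restrict_apply hSm]
      exact le_min (measure_mono Set.inter_subset_right)
        ((measure_mono Set.inter_subset_left).trans (hdist k))
    rcases eq_or_ne B 0 with hB0 | hB0
    · exfalso
      apply hX0
      refine le_antisymm (le_trans hlayer ?_) (zero_le)
      have hzz : ∀ k : ℤ, (2:ℝ≥0∞)^k * min (μ R) ((B * ((2:ℝ≥0∞)^k)⁻¹) ^ p) = 0 := by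
        intro k
        rw [hB0, zero_mul, ENNReal.zero_rpow_of_pos hp0]
        simp
      rw [tsum_congr hzz]
      simp
    have hBtop : B ≠ ∞ :=
      ENNReal.mul_ne_top hC'top (ENNReal.rpow_ne_top_of_nonneg (by positivity) hXtop)
    set cv : ℝ≥0∞ := B * (μ R) ^ (-(1/p)) with hcv
    have hrp0 : (μ R) ^ (-(1/p)) ≠ 0 := by
      intro hzero
      rcases ENNReal.rpow_eq_zero_iff.1 hzero with ⟨h1, _⟩ | ⟨h1, _⟩
      · exact hμR0 h1
      · exact hμR_top h1
    have hrptop : (μ R) ^ (-(1/p)) ≠ ∞ := by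
      rw [ENNReal.rpow_neg]
      exact ENNReal.inv_ne_top.2 (by
        intro hzero
        rcases ENNReal.rpow_eq_zero_iff.1 hzero with ⟨h1, _⟩ | ⟨h1, _⟩
        · exact hμR0 h1
        · exact hμR_top h1)
    have hcv0 : cv ≠ 0 := mul_ne_zero hB0 hrp0
    have hcvtop : cv ≠ ∞ := ENNReal.mul_ne_top hBtop hrptop
    obtain ⟨k₀, hk₀⟩ := ENNReal.exists_mem_Ico_zpow hcv0 hcvtop one_lt_two ENNReal.ofNat_ne_top
    have hmulid : (μ R) ^ (-(1/p)) * μ R = (μ R) ^ (1/q) := by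
      calc (μ R) ^ (-(1/p)) * μ R = (μ R) ^ (-(1/p)) * (μ R) ^ (1:ℝ) := by
            rw [ENNReal.rpow_one]
        _ = (μ R) ^ (-(1/p) + 1) := (ENNReal.rpow_add _ _ hμR0 hμR_top).symm
        _ = (μ R) ^ (1/q) := by congr 1; linarith
    have hA1 : (∑' m : ℕ, (2:ℝ≥0∞)^(k₀ - (m:ℤ)) *
        min (μ R) ((B * ((2:ℝ≥0∞)^(k₀ - (m:ℤ)))⁻¹) ^ p)) ≤ 2 * (B * (μ R)^(1/q)) := by
      calc (∑' m : ℕ, (2:ℝ≥0∞)^(k₀ - (m:ℤ)) *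
            min (μ R) ((B * ((2:ℝ≥0∞)^(k₀ - (m:ℤ)))⁻¹) ^ p))
          ≤ ∑' m : ℕ, (2:ℝ≥0∞)^(k₀ - (m:ℤ)) * μ R :=
            ENNReal.tsum_le_tsum (fun m => mul_le_mul_right (min_le_left _ _) _)
        _ = (2:ℝ≥0∞)^(k₀+1) * μ R := by rw [ENNReal.tsum_mul_right, tsum_zpow_tail]
        _ ≤ (2 * cv) * μ R := by
            apply mul_le_mul_left
            rw [ENNReal.zpow_add two_ne_zero ENNReal.ofNat_ne_top, zpow_one, mul_comm]
            exact mul_le_mul_right hk₀.1 _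
        _ = 2 * (B * (μ R)^(1/q)) := by
            rw [hcv, ← hmulid]; ring
    have h2ne0 : ∀ a : ℝ, ((2:ℝ≥0∞)^a) ≠ 0 := by
      intro a h
      rcases ENNReal.rpow_eq_zero_iff.1 h with ⟨h1, _⟩ | ⟨h1, _⟩
      · exact two_ne_zero h1
      · exact ENNReal.ofNat_ne_top h1
    have h2netop : ∀ a : ℝ, ((2:ℝ≥0∞)^a) ≠ ∞ := by
      intro a h
      rcases ENNReal.rpow_eq_top_iff.1 h with ⟨h1, _⟩ | ⟨h1, _⟩
      · exact two_ne_zero h1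
      · exact ENNReal.ofNat_ne_top h1
    set r : ℝ≥0∞ := (2:ℝ≥0∞)^((1:ℝ)-p) with hr
    set D : ℝ≥0∞ := B^p * (2:ℝ≥0∞)^((((k₀+1:ℤ)):ℝ) * ((1:ℝ)-p)) with hD
    have hA2 : (∑' m : ℕ, (2:ℝ≥0∞)^(k₀ + 1 + (m:ℤ)) *
        min (μ R) ((B * ((2:ℝ≥0∞)^(k₀ + 1 + (m:ℤ)))⁻¹) ^ p))
        ≤ (1 - (2:ℝ≥0∞)^((1:ℝ)-p))⁻¹ * (B * (μ R)^(1/q)) := by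
      have hterm2 : ∀ m : ℕ, (2:ℝ≥0∞)^(k₀ + 1 + (m:ℤ)) *
          ((B * ((2:ℝ≥0∞)^(k₀ + 1 + (m:ℤ)))⁻¹) ^ p) = D * r^m := by
        intro m
        set j : ℤ := k₀ + 1 + (m:ℤ) with hj
        have h2j : (2:ℝ≥0∞)^j = (2:ℝ≥0∞)^((j:ℝ)) := (ENNReal.rpow_intCast 2 j).symm
        have hinv2 : ((2:ℝ≥0∞)^j)⁻¹ = (2:ℝ≥0∞)^(-(j:ℝ)) := by
          rw [h2j, ← ENNReal.rpow_neg]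
        rw [hinv2, ENNReal.mul_rpow_of_ne_zero hB0 (h2ne0 _), h2j,
          ← ENNReal.rpow_mul]
        calc (2:ℝ≥0∞)^((j:ℝ)) * (B^p * (2:ℝ≥0∞)^(-(j:ℝ) * p))
            = B^p * ((2:ℝ≥0∞)^((j:ℝ)) * (2:ℝ≥0∞)^(-(j:ℝ) * p)) := by ring
          _ = B^p * (2:ℝ≥0∞)^((j:ℝ) + -(j:ℝ) * p) := by
              rw [ENNReal.rpow_add _ _ two_ne_zero ENNReal.ofNat_ne_top]
          _ = B^p * (2:ℝ≥0∞)^((((k₀+1:ℤ)):ℝ) * ((1:ℝ)-p) + (m:ℝ) * ((1:ℝ)-p)) := by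
              congr 1
              have : (j:ℝ) = (((k₀+1:ℤ)):ℝ) + (m:ℝ) := by rw [hj]; push_cast; ring
              rw [this]; ring
          _ = B^p * ((2:ℝ≥0∞)^((((k₀+1:ℤ)):ℝ) * ((1:ℝ)-p)) *
                (2:ℝ≥0∞)^((m:ℝ) * ((1:ℝ)-p))) := by
              rw [ENNReal.rpow_add _ _ two_ne_zero ENNReal.ofNat_ne_top]
          _ = D * r^m := by
              rw [hD, hr, show (m:ℝ) * ((1:ℝ)-p) = ((1:ℝ)-p) * (m:ℝ) by ring,
                ENNReal.rpow_mul 2 ((1:ℝ)-p) ((m:ℕ):ℝ), ENNReal.rpow_natCast]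
              ring
      have hsum : (∑' m : ℕ, (2:ℝ≥0∞)^(k₀ + 1 + (m:ℤ)) *
          min (μ R) ((B * ((2:ℝ≥0∞)^(k₀ + 1 + (m:ℤ)))⁻¹) ^ p)) ≤ D * (1 - r)⁻¹ := by
        calc (∑' m : ℕ, (2:ℝ≥0∞)^(k₀ + 1 + (m:ℤ)) *
              min (μ R) ((B * ((2:ℝ≥0∞)^(k₀ + 1 + (m:ℤ)))⁻¹) ^ p))
            ≤ ∑' m : ℕ, D * r^m := by
              apply ENNReal.tsum_le_tsum
              intro m
              rw [← hterm2 m]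
              exact mul_le_mul_right (min_le_right _ _) _
          _ = D * (1 - r)⁻¹ := by rw [ENNReal.tsum_mul_left, ENNReal.tsum_geometric]
      have hanti : ∀ a b : ℝ≥0∞, a ≤ b → b ^ ((1:ℝ)-p) ≤ a ^ ((1:ℝ)-p) := by
        intro a b hab
        rw [show (1:ℝ)-p = -(p-1) by ring, ENNReal.rpow_neg, ENNReal.rpow_neg]
        exact ENNReal.inv_le_inv.2 (ENNReal.rpow_le_rpow hab (by linarith))
      have hDle : D ≤ B * (μ R)^(1/q) := by
        have h6 : (2:ℝ≥0∞)^((((k₀+1:ℤ)):ℝ) * ((1:ℝ)-p)) ≤ cv ^ ((1:ℝ)-p) := by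
          rw [ENNReal.rpow_mul, ENNReal.rpow_intCast]
          exact hanti cv _ hk₀.2.le
        calc D ≤ B^p * cv ^ ((1:ℝ)-p) := mul_le_mul_right h6 _
          _ = B^p * (B^((1:ℝ)-p) * ((μ R) ^ (-(1/p))) ^ ((1:ℝ)-p)) := by
              rw [hcv, ENNReal.mul_rpow_of_ne_zero hB0 hrp0]
          _ = (B^p * B^((1:ℝ)-p)) * (μ R) ^ (-(1/p) * ((1:ℝ)-p)) := by
              rw [← ENNReal.rpow_mul]; ring
          _ = B * (μ R)^(1/q) := by
              rw [← ENNReal.rpow_add _ _ hB0 hBtop,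
                show p + ((1:ℝ)-p) = (1:ℝ) by ring, ENNReal.rpow_one]
              congr 1
              rw [hqdef, one_div_div]
              field_simp
              congr 1; ring
      calc (∑' m : ℕ, (2:ℝ≥0∞)^(k₀ + 1 + (m:ℤ)) *
            min (μ R) ((B * ((2:ℝ≥0∞)^(k₀ + 1 + (m:ℤ)))⁻¹) ^ p)) ≤ D * (1 - r)⁻¹ := hsum
        _ ≤ (B * (μ R)^(1/q)) * (1 - r)⁻¹ := mul_le_mul_left hDle _
        _ = (1 - (2:ℝ≥0∞)^((1:ℝ)-p))⁻¹ * (B * (μ R)^(1/q)) := by rw [hr, mul_comm]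
    have htot : X ≤ K1 * (B * (μ R)^(1/q)) := by
      refine le_trans hlayer (le_trans (tsum_int_split _ k₀) ?_)
      rw [hK1, add_mul]
      exact add_le_add hA1 hA2
    have hXp0 : X ^ ((1:ℝ)/p) ≠ 0 := by
      intro hzero
      rcases ENNReal.rpow_eq_zero_iff.1 hzero with ⟨h1, _⟩ | ⟨h1, _⟩
      · exact hX0 h1
      · exact hXtop h1
    have hXptop : X ^ ((1:ℝ)/p) ≠ ∞ := ENNReal.rpow_ne_top_of_nonneg (by positivity) hXtop
    have h5 : X ^ (1/p) * X ^ (1/q) ≤ X ^ (1/p) * (K1 * C' * (μ R)^(1/q)) := by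
      calc X ^ (1/p) * X ^ (1/q) = X := by
            rw [← ENNReal.rpow_add _ _ hX0 hXtop, hinv, ENNReal.rpow_one]
        _ ≤ K1 * (B * (μ R)^(1/q)) := htot
        _ = X ^ (1/p) * (K1 * C' * (μ R)^(1/q)) := by rw [hB]; ring
    exact (ENNReal.mul_le_mul_iff_right hXp0 hXptop).1 h5
  have hfinal := lpnorm_tsum_le ν F hFmeas hq0 _ hterm
  calc (μ R) ^ (-(1-1/p)) * (∫⁻ x, (∑' Q : ι, F Q x) ^ q ∂ν) ^ (1/q)
      ≤ (μ R) ^ (-(1-1/p)) * (K1 * C' * (μ R)^(1/q)) := mul_le_mul_right hfinal _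
    _ = (K1 * C') * ((μ R)^(-(1/q)) * (μ R)^(1/q)) := by rw [hqinv]; ring
    _ = K1 * C' := by
        rw [← ENNReal.rpow_add _ _ hμR0 hμR_top]
        norm_num

lemma K1_ne_zero {p : ℝ} : (2 + (1 - (2:ℝ≥0∞)^((1:ℝ)-p))⁻¹) ≠ 0 :=
  ne_of_gt (lt_of_lt_of_le two_pos le_self_add)

lemma K1_ne_top {p : ℝ} (hp : 1 < p) : (2 + (1 - (2:ℝ≥0∞)^((1:ℝ)-p))⁻¹) ≠ ∞ := by
  apply ENNReal.add_ne_top.2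
  constructor
  · exact ENNReal.ofNat_ne_top
  · apply ENNReal.inv_ne_top.2
    have h1 : (2:ℝ≥0∞)^((1:ℝ)-p) < 1 :=
      ENNReal.rpow_lt_one_of_one_lt_of_neg one_lt_two (by linarith)
    exact (tsub_pos_iff_lt.2 h1).ne'

lemma lower_bound {n : ℕ} {p : ℝ} (hp : 1 < p)
    {Qc : Set (Set (Rn n))} (hQc : Qc.Countable) (hQdy : ∀ Q ∈ Qc, IsDyadicCube n Q)
    (τ : Set (Rn n) → ℝ≥0) {w σ : Rn n → ℝ≥0∞} (hw : Measurable w) (hσ : Measurable σ)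
    (hLw : LocInt w) (hLσ : LocInt σ) :
    (2 + (1 - (2:ℝ≥0∞)^((1:ℝ)-p))⁻¹)⁻¹ * linTestDual Qc τ p w σ
      ≤ linOpNormWeak Qc τ p w σ := by
  set K1 : ℝ≥0∞ := 2 + (1 - (2:ℝ≥0∞)^((1:ℝ)-p))⁻¹ with hK1
  unfold linOpNormWeak
  apply le_sInf
  intro C' hC'
  simp only [Set.mem_setOf_eq] at hC'
  rcases eq_or_ne C' ∞ with h | hC'top
  · rw [h]; exact le_top
  have hTD : linTestDual Qc τ p w σ ≤ K1 * C' := by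
    unfold linTestDual
    apply iSup₂_le
    intro R hR
    exact lower_bound_per_R hp hQc hQdy τ hw hσ hLw hLσ hC'top hC' hR
  calc K1⁻¹ * linTestDual Qc τ p w σ ≤ K1⁻¹ * (K1 * C') := mul_le_mul_right hTD _
    _ = (K1⁻¹ * K1) * C' := (mul_assoc _ _ _).symm
    _ = C' := by rw [ENNReal.inv_mul_cancel K1_ne_zero (K1_ne_top hp), one_mul]

/-! ## Upper bound: key testing estimate -/

lemma exists_ratio_nat {d a : ℝ≥0∞} (hd0 : d ≠ 0) (hda : d ≤ a) (hatop : a ≠ ∞) :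
    ∃ j : ℕ, (2:ℝ≥0∞)^(j:ℤ) * d ≤ a ∧ a < (2:ℝ≥0∞)^((j:ℤ)+1) * d := by
  have hdtop : d ≠ ∞ := fun h => hatop (top_le_iff.1 (h ▸ hda))
  have ha0 : a ≠ 0 := fun h => hd0 (le_antisymm (le_trans hda (le_of_eq h)) (zero_le))
  have hc0 : a / d ≠ 0 := by
    rw [Ne, ENNReal.div_eq_zero_iff]
    push_neg
    exact ⟨ha0, hdtop⟩
  have hctop : a / d ≠ ∞ := by
    rw [Ne, ENNReal.div_eq_top]
    push_neg
    exact ⟨fun _ => hd0, fun h => absurd h hatop⟩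
  obtain ⟨k, hk⟩ := ENNReal.exists_mem_Ico_zpow hc0 hctop one_lt_two ENNReal.ofNat_ne_top
  have hk0 : 0 ≤ k := by
    by_contra hneg
    push_neg at hneg
    have h1 : (2:ℝ≥0∞)^(k+1) ≤ 2^(0:ℤ) := ENNReal.zpow_le_of_le one_le_two (by omega)
    rw [zpow_zero] at h1
    have h2 : (1:ℝ≥0∞) ≤ a / d :=
      (ENNReal.le_div_iff_mul_le (Or.inl hd0) (Or.inl hdtop)).2 (by rwa [one_mul])
    exact absurd (lt_of_le_of_lt h2 hk.2) (not_lt.2 h1)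
  refine ⟨k.toNat, ?_, ?_⟩
  · rw [Int.toNat_of_nonneg hk0]
    exact (ENNReal.le_div_iff_mul_le (Or.inl hd0) (Or.inl hdtop)).1 hk.1
  · rw [Int.toNat_of_nonneg hk0]
    exact (ENNReal.div_lt_iff (Or.inl hd0) (Or.inl hdtop)).1 hk.2

lemma key_testing {n : ℕ} {p : ℝ} (hp : 1 < p)
    {Qc : Set (Set (Rn n))} (hQc : Qc.Countable) (hQdy : ∀ Q ∈ Qc, IsDyadicCube n Q)
    (τ : Set (Rn n) → ℝ≥0) {w σ : Rn n → ℝ≥0∞} (hw : Measurable w) (hσ : Measurable σ)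
    (hLw : LocInt w) (hLσ : LocInt σ)
    {E : Set (Rn n)} (hE : MeasurableSet E) :
    (∫⁻ x, (∑' Q : Qc, (Q : Set (Rn n)).indicator
        (fun _ => (τ Q : ℝ≥0∞) * dAvg (E.indicator w) (Q : Set (Rn n))) x) ^ (p/(p-1))
      ∂(volume.withDensity σ)) ^ (1/(p/(p-1)))
      ≤ 2 * (1 - (2:ℝ≥0∞)^(-(1/p)))⁻¹ * linTestDual Qc τ p w σ *
        ((volume.withDensity w) E) ^ (1/(p/(p-1))) := by
  classical
  haveI : Countable Qc := hQc.to_subtype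
  set q : ℝ := p / (p-1) with hqdef
  set ν := volume.withDensity σ with hν
  set μ := volume.withDensity w with hμ
  set T := linTestDual Qc τ p w σ with hT
  have hp0 : (0:ℝ) < p := lt_trans one_pos hp
  have hq1 : 1 < q := by
    rw [hqdef]
    exact (_root_.one_lt_div (by linarith)).2 (by linarith)
  have hq0 : (0:ℝ) < q := lt_trans one_pos hq1
  have hinv : 1/p + 1/q = 1 := by
    rw [hqdef, one_div_div, ← add_div, show 1 + (p-1) = p by ring]
    exact div_self (by linarith)
  have hqinv : 1/q = 1 - 1/p := by linarith
  have hQdy' : ∀ Q : Qc, IsDyadicCube n (Q : Set (Rn n)) := fun Q => hQdy Q Q.2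
  have hQmeas : ∀ Q : Qc, MeasurableSet (Q : Set (Rn n)) := fun Q => (hQdy' Q).measurableSet
  have hμQ_eq : ∀ Q : Qc, ∫⁻ x in (Q : Set (Rn n)), w x = μ (Q : Set (Rn n)) :=
    fun Q => (withDensity_apply w (hQmeas Q)).symm
  have hμQtop : ∀ Q : Qc, μ (Q : Set (Rn n)) ≠ ∞ :=
    fun Q => by rw [← hμQ_eq Q]; exact (hLw _ (hQdy' Q)).ne
  set F : Qc → Rn n → ℝ≥0∞ := fun Q x => (Q : Set (Rn n)).indicator
    (fun _ => (τ Q : ℝ≥0∞) * dAvg (E.indicator w) (Q : Set (Rn n))) x with hF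
  set G : Qc → Rn n → ℝ≥0∞ := fun Q x => (Q : Set (Rn n)).indicator
    (fun _ => (τ Q : ℝ≥0∞) * dAvg w (Q : Set (Rn n))) x with hG
  have hFmeas : ∀ Q : Qc, Measurable (F Q) := fun Q => measurable_const.indicator (hQmeas Q)
  have hGmeas : ∀ Q : Qc, Measurable (G Q) := fun Q => measurable_const.indicator (hQmeas Q)
  have haQ : ∀ Q : Qc, dAvg (E.indicator w) (Q : Set (Rn n))
      = (volume (Q : Set (Rn n)))⁻¹ * μ (E ∩ (Q : Set (Rn n))) := by
    intro Q
    unfold dAvg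
    congr 1
    rw [hμ, withDensity_apply w (hE.inter (hQmeas Q)),
      lintegral_indicator hE, Measure.restrict_restrict hE]
  have hdAvgw : ∀ Q : Qc, dAvg w (Q : Set (Rn n))
      = (volume (Q : Set (Rn n)))⁻¹ * μ (Q : Set (Rn n)) := by
    intro Q
    unfold dAvg
    rw [hμQ_eq Q]
  have hdle : ∀ Q : Qc, μ (E ∩ (Q : Set (Rn n))) ≤ μ (Q : Set (Rn n)) :=
    fun Q => measure_mono Set.inter_subset_right
  -- choice of the dyadic ratio level
  have Hj : ∀ Q : Qc, ∃ j : ℕ, μ (E ∩ (Q : Set (Rn n))) ≠ 0 →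
      ((2:ℝ≥0∞)^(j:ℤ) * μ (E ∩ (Q : Set (Rn n))) ≤ μ (Q : Set (Rn n)) ∧
        μ (Q : Set (Rn n)) < (2:ℝ≥0∞)^((j:ℤ)+1) * μ (E ∩ (Q : Set (Rn n)))) := by
    intro Q
    by_cases h : μ (E ∩ (Q : Set (Rn n))) = 0
    · exact ⟨0, fun hc => absurd h hc⟩
    · obtain ⟨j, hj⟩ := exists_ratio_nat h (hdle Q) (hμQtop Q)
      exact ⟨j, fun _ => hj⟩
  choose jdx hjdx using Hj
  -- apply the MCT reduction
  refine lpnorm_tsum_le ν F hFmeas hq0 _ (fun s => ?_)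
  set s₀ := s.filter (fun (Q : Qc) => μ (E ∩ (Q : Set (Rn n))) ≠ 0) with hs₀
  have hsum_eq : ∀ x, (∑ Q ∈ s, F Q x) = ∑ Q ∈ s₀, F Q x := by
    intro x
    refine (Finset.sum_subset (Finset.filter_subset _ _) ?_).symm
    intro Q hQ hQn
    have hd0 : μ (E ∩ (Q : Set (Rn n))) = 0 := by
      by_contra hc
      exact hQn (Finset.mem_filter.2 ⟨hQ, hc⟩)
    have hzero : (τ Q : ℝ≥0∞) * dAvg (E.indicator w) (Q : Set (Rn n)) = 0 := by
      rw [haQ Q, hd0, mul_zero, mul_zero]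
    rw [hF]
    show (Q : Set (Rn n)).indicator
      (fun _ => (τ Q : ℝ≥0∞) * dAvg (E.indicator w) (Q : Set (Rn n))) x = 0
    rw [hzero]
    simp
  -- the per-level bound
  have fiber_bound : ∀ j : ℕ,
      (∫⁻ x, (∑ Q ∈ s₀.filter (fun (Q : Qc) => jdx Q = j), F Q x) ^ q ∂ν) ^ (1/q)
      ≤ (2:ℝ≥0∞)^((1:ℝ)/q) * ((2:ℝ≥0∞)^(-(1/p)))^j * (T * (μ E) ^ ((1:ℝ)/q)) := by
    intro j
    set sj := s₀.filter (fun (Q : Qc) => jdx Q = j) with hsj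
    have hsj_spec : ∀ Q ∈ sj,
        (2:ℝ≥0∞)^((j:ℕ):ℤ) * μ (E ∩ (Q : Set (Rn n))) ≤ μ (Q : Set (Rn n)) ∧
        μ (Q : Set (Rn n)) < (2:ℝ≥0∞)^(((j:ℕ):ℤ)+1) * μ (E ∩ (Q : Set (Rn n))) := by
      intro Q hQ
      have h1 := Finset.mem_filter.1 hQ
      have h2 := (Finset.mem_filter.1 h1.1).2
      have h3 := hjdx Q h2
      rwa [h1.2] at h3
    have h2jid : (2:ℝ≥0∞)^(-(j:ℝ)) * (2:ℝ≥0∞)^((j:ℕ):ℤ) = 1 := by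
      rw [← ENNReal.rpow_intCast 2 ((j:ℕ):ℤ),
        show ((((j:ℕ):ℤ)):ℝ) = (j:ℝ) by push_cast; ring,
        ← ENNReal.rpow_add _ _ two_ne_zero ENNReal.ofNat_ne_top]
      norm_num
    have hFleG : ∀ Q ∈ sj, ∀ x, F Q x ≤ (2:ℝ≥0∞)^(-(j:ℝ)) * G Q x := by
      intro Q hQ x
      have hle : dAvg (E.indicator w) (Q : Set (Rn n))
          ≤ (2:ℝ≥0∞)^(-(j:ℝ)) * dAvg w (Q : Set (Rn n)) := by
        rw [haQ Q, hdAvgw Q]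
        have key : μ (E ∩ (Q : Set (Rn n))) ≤ (2:ℝ≥0∞)^(-(j:ℝ)) * μ (Q : Set (Rn n)) := by
          calc μ (E ∩ (Q : Set (Rn n)))
              = ((2:ℝ≥0∞)^(-(j:ℝ)) * (2:ℝ≥0∞)^((j:ℕ):ℤ)) * μ (E ∩ (Q : Set (Rn n))) := by
                rw [h2jid, one_mul]
            _ = (2:ℝ≥0∞)^(-(j:ℝ)) * ((2:ℝ≥0∞)^((j:ℕ):ℤ) * μ (E ∩ (Q : Set (Rn n)))) :=
                mul_assoc _ _ _
            _ ≤ (2:ℝ≥0∞)^(-(j:ℝ)) * μ (Q : Set (Rn n)) :=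
                mul_le_mul_right (hsj_spec Q hQ).1 _
        calc (volume (Q : Set (Rn n)))⁻¹ * μ (E ∩ (Q : Set (Rn n)))
            ≤ (volume (Q : Set (Rn n)))⁻¹ * ((2:ℝ≥0∞)^(-(j:ℝ)) * μ (Q : Set (Rn n))) :=
              mul_le_mul_right key _
          _ = (2:ℝ≥0∞)^(-(j:ℝ)) * ((volume (Q : Set (Rn n)))⁻¹ * μ (Q : Set (Rn n))) := by
              ring
      rw [hF, hG]
      show (Q : Set (Rn n)).indicator _ x ≤ (2:ℝ≥0∞)^(-(j:ℝ)) * (Q : Set (Rn n)).indicator _ x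
      by_cases hx : x ∈ (Q : Set (Rn n))
      · rw [Set.indicator_of_mem hx, Set.indicator_of_mem hx]
        calc (τ Q : ℝ≥0∞) * dAvg (E.indicator w) (Q : Set (Rn n))
            ≤ (τ Q : ℝ≥0∞) * ((2:ℝ≥0∞)^(-(j:ℝ)) * dAvg w (Q : Set (Rn n))) :=
              mul_le_mul_right hle _
          _ = (2:ℝ≥0∞)^(-(j:ℝ)) * ((τ Q : ℝ≥0∞) * dAvg w (Q : Set (Rn n))) := by ring
      · rw [Set.indicator_of_notMem hx, Set.indicator_of_notMem hx, mul_zero]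
    have hmaxex : ∀ Q ∈ sj, ∃ Rm, Rm ∈ sj ∧ Q ≤ Rm ∧ ∀ c ∈ sj, Rm ≤ c → c = Rm :=
      fun Q hQ => finset_exists_le_maximal sj hQ
    choose! rsel hrs1 hrs2 hrs3 using hmaxex
    set t := sj.image rsel with htdef
    have htmem : ∀ Rm ∈ t, Rm ∈ sj ∧ ∀ c ∈ sj, Rm ≤ c → c = Rm := by
      intro Rm hRm
      obtain ⟨Q, hQ, rfl⟩ := Finset.mem_image.1 hRm
      exact ⟨hrs1 Q hQ, hrs3 Q hQ⟩
    have htdisj : (↑t : Set Qc).PairwiseDisjoint (fun (Rm : Qc) => (Rm : Set (Rn n))) := by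
      intro a ha b hb hab
      have ha' := htmem a (Finset.mem_coe.1 ha)
      have hb' := htmem b (Finset.mem_coe.1 hb)
      rcases dyadic_nested_or_disjoint (hQdy' a) (hQdy' b) with h | h | h
      · exact absurd ((ha'.2 b hb'.1 h).symm) hab
      · exact absurd (hb'.2 a ha'.1 h) hab
      · exact h
    have hfibj : ∀ x, (∑ Q ∈ sj, G Q x)
        = ∑ Rm ∈ t, ∑ Q ∈ sj.filter (fun (Q : Qc) => rsel Q = Rm), G Q x := by
      intro x
      exact (Finset.sum_fiberwise_of_maps_to
        (fun Q hQ => Finset.mem_image_of_mem rsel hQ) _).symm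
    have hsubRm : ∀ Rm : Qc, ∀ Q ∈ sj.filter (fun (Q : Qc) => rsel Q = Rm),
        (Q : Set (Rn n)) ⊆ (Rm : Set (Rn n)) := by
      intro Rm Q hQ
      have h1 := Finset.mem_filter.1 hQ
      have h2 := hrs2 Q h1.1
      rw [h1.2] at h2
      exact h2
    have hsupp : ∀ Rm ∈ t, ∀ x, x ∉ (fun (Rm : Qc) => (Rm : Set (Rn n))) Rm →
        (∑ Q ∈ sj.filter (fun (Q : Qc) => rsel Q = Rm), G Q x) = 0 := by
      intro Rm _ x hx
      apply Finset.sum_eq_zero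
      intro Q hQ
      exact Set.indicator_of_notMem (fun hxQ => hx (hsubRm Rm Q hQ hxQ)) _
    have hperR : ∀ Rm ∈ t,
        ∫⁻ x, (∑ Q ∈ sj.filter (fun (Q : Qc) => rsel Q = Rm), G Q x) ^ q ∂ν
        ≤ T^q * μ (Rm : Set (Rn n)) := by
      intro Rm _
      haveI : Countable {P : Set (Rn n) // P ∈ Qc ∧ P ⊆ (Rm : Set (Rn n))} :=
        (hQc.mono (fun P hP => hP.1)).to_subtype
      set SR : Rn n → ℝ≥0∞ :=
        fun x => ∑' P : {P : Set (Rn n) // P ∈ Qc ∧ P ⊆ (Rm : Set (Rn n))},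
          (P : Set (Rn n)).indicator (fun _ => (τ P : ℝ≥0∞) * dAvg w (P : Set (Rn n))) x
        with hSR
      have hSRmeas : Measurable SR := Measurable.ennreal_tsum (fun P =>
        measurable_const.indicator (hQdy P P.2.1).measurableSet)
      have hinner_le : ∀ x, (∑ Q ∈ sj.filter (fun (Q : Qc) => rsel Q = Rm), G Q x) ≤ SR x := by
        intro x
        rw [hSR]
        set e : {Q : Qc // Q ∈ sj.filter (fun (Q : Qc) => rsel Q = Rm)} →
            {P : Set (Rn n) // P ∈ Qc ∧ P ⊆ (Rm : Set (Rn n))} :=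
          fun Q => ⟨(Q.1 : Set (Rn n)), Q.1.2, hsubRm Rm Q.1 Q.2⟩ with he
        have hinj : ∀ a ∈ (sj.filter (fun (Q : Qc) => rsel Q = Rm)).attach,
            ∀ b ∈ (sj.filter (fun (Q : Qc) => rsel Q = Rm)).attach, e a = e b → a = b := by
          intro a _ b _ hab
          have h1 : ((a.1 : Qc) : Set (Rn n)) = ((b.1 : Qc) : Set (Rn n)) :=
            congrArg (fun z : {P : Set (Rn n) // P ∈ Qc ∧ P ⊆ (Rm : Set (Rn n))} => z.val) hab
          exact Subtype.ext (Subtype.ext h1)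
        have hsum_att : (∑ Q ∈ sj.filter (fun (Q : Qc) => rsel Q = Rm), G Q x)
            = ∑ P ∈ (sj.filter (fun (Q : Qc) => rsel Q = Rm)).attach.image e,
              (P : Set (Rn n)).indicator
                (fun _ => (τ P : ℝ≥0∞) * dAvg w (P : Set (Rn n))) x := by
          rw [Finset.sum_image hinj, ← Finset.sum_attach
            (sj.filter (fun (Q : Qc) => rsel Q = Rm)) (fun Q => G Q x)]
        rw [hsum_att]
        exact Summable.sum_le_tsum _ (fun _ _ => zero_le) ENNReal.summable
      have h7 : (∫⁻ x, (∑ Q ∈ sj.filter (fun (Q : Qc) => rsel Q = Rm), G Q x) ^ q ∂ν)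
          ≤ ∫⁻ x, SR x ^ q ∂ν :=
        lintegral_mono (fun x => ENNReal.rpow_le_rpow (hinner_le x) hq0.le)
      refine le_trans h7 ?_
      rcases eq_or_ne (μ (Rm : Set (Rn n))) 0 with h0 | h0
      · have hz : ∀ (P : {P : Set (Rn n) // P ∈ Qc ∧ P ⊆ (Rm : Set (Rn n))}),
            (τ P : ℝ≥0∞) * dAvg w (P : Set (Rn n)) = 0 := by
          intro P
          have h1 : ∫⁻ y in (P : Set (Rn n)), w y ≤ ∫⁻ y in (Rm : Set (Rn n)), w y :=
            lintegral_mono_set P.2.2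
          rw [hμQ_eq Rm, h0] at h1
          have h2 : dAvg w (P : Set (Rn n)) = 0 := by
            unfold dAvg
            rw [le_zero_iff.1 h1, mul_zero]
          rw [h2, mul_zero]
        have hz2 : ∀ x, SR x ^ q = 0 := by
          intro x
          rw [hSR]
          show (∑' P : {P : Set (Rn n) // P ∈ Qc ∧ P ⊆ (Rm : Set (Rn n))},
            (P : Set (Rn n)).indicator
              (fun _ => (τ P : ℝ≥0∞) * dAvg w (P : Set (Rn n))) x) ^ q = (0:ℝ≥0∞)
          have : ∀ P : {P : Set (Rn n) // P ∈ Qc ∧ P ⊆ (Rm : Set (Rn n))},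
              (P : Set (Rn n)).indicator
                (fun _ => (τ P : ℝ≥0∞) * dAvg w (P : Set (Rn n))) x = 0 := by
            intro P
            rw [hz P]
            simp
          rw [tsum_congr this, tsum_zero, ENNReal.zero_rpow_of_pos hq0]
        rw [lintegral_congr hz2, lintegral_zero]
        exact zero_le
      · have hTerm : (∫⁻ x in (Rm : Set (Rn n)), w x) ^ (-(1 - 1/p)) * lpNorm q σ SR ≤ T := by
          rw [hT]
          unfold linTestDual
          exact le_iSup₂_of_le (Rm : Set (Rn n)) Rm.2 (le_refl _)
        rw [hμQ_eq Rm] at hTerm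
        have hlp : lpNorm q σ SR = (∫⁻ x, SR x ^ q ∂ν) ^ (1/q) := by
          rw [lpNorm_withDensity hσ hSRmeas q, ← hν]
        rw [hlp] at hTerm
        have h9 : (∫⁻ x, SR x ^ q ∂ν) ^ (1/q) ≤ T * (μ (Rm : Set (Rn n))) ^ ((1:ℝ)/q) := by
          calc (∫⁻ x, SR x ^ q ∂ν) ^ (1/q)
              = (μ (Rm : Set (Rn n))) ^ ((1:ℝ)/q) *
                ((μ (Rm : Set (Rn n))) ^ (-(1 - 1/p)) * (∫⁻ x, SR x ^ q ∂ν) ^ (1/q)) := by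
                rw [← mul_assoc, ← ENNReal.rpow_add _ _ h0 (hμQtop Rm),
                  show (1:ℝ)/q + (-(1 - 1/p)) = 0 by rw [hqinv]; ring,
                  ENNReal.rpow_zero, one_mul]
            _ ≤ (μ (Rm : Set (Rn n))) ^ ((1:ℝ)/q) * T := mul_le_mul_right hTerm _
            _ = T * (μ (Rm : Set (Rn n))) ^ ((1:ℝ)/q) := mul_comm _ _
        have h10 := ENNReal.rpow_le_rpow h9 hq0.le
        rw [one_div, ENNReal.rpow_inv_rpow hq0.ne'] at h10
        refine le_trans h10 (le_of_eq ?_)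
        rw [ENNReal.mul_rpow_of_nonneg _ _ hq0.le]
        congr 1
        exact ENNReal.rpow_inv_rpow hq0.ne' _
    have hsum_meas : ∑ Rm ∈ t, μ (Rm : Set (Rn n)) ≤ (2:ℝ≥0∞)^(((j:ℕ):ℤ)+1) * μ E := by
      have h9 : ∀ Rm ∈ t, μ (Rm : Set (Rn n))
          ≤ (2:ℝ≥0∞)^(((j:ℕ):ℤ)+1) * μ (E ∩ (Rm : Set (Rn n))) := by
        intro Rm hRm
        exact (hsj_spec Rm (htmem Rm hRm).1).2.le
      calc ∑ Rm ∈ t, μ (Rm : Set (Rn n))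
          ≤ ∑ Rm ∈ t, (2:ℝ≥0∞)^(((j:ℕ):ℤ)+1) * μ (E ∩ (Rm : Set (Rn n))) :=
            Finset.sum_le_sum h9
        _ = (2:ℝ≥0∞)^(((j:ℕ):ℤ)+1) * ∑ Rm ∈ t, μ (E ∩ (Rm : Set (Rn n))) :=
            (Finset.mul_sum _ _ _).symm
        _ ≤ (2:ℝ≥0∞)^(((j:ℕ):ℤ)+1) * μ E := by
            apply mul_le_mul_right
            have hdisj2 : (↑t : Set Qc).PairwiseDisjoint
                (fun (Rm : Qc) => E ∩ (Rm : Set (Rn n))) := by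
              intro a ha b hb hab
              exact (htdisj ha hb hab).mono Set.inter_subset_right Set.inter_subset_right
            rw [← measure_biUnion_finset hdisj2 (fun Rm _ => hE.inter (hQmeas Rm))]
            exact measure_mono (Set.iUnion₂_subset (fun Rm _ => Set.inter_subset_left))
    have hGsum_meas : Measurable (fun x => ∑ Q ∈ sj, G Q x) :=
      Finset.measurable_sum _ (fun Q _ => hGmeas Q)
    have hstep : ∫⁻ x, (∑ Q ∈ sj, G Q x)^q ∂ν
        ≤ T^q * ((2:ℝ≥0∞)^(((j:ℕ):ℤ)+1) * μ E) := by
      have hptw : ∀ x, (∑ Q ∈ sj, G Q x)^q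
          = ∑ Rm ∈ t, (∑ Q ∈ sj.filter (fun (Q : Qc) => rsel Q = Rm), G Q x)^q := by
        intro x
        rw [hfibj x]
        exact rpow_sum_of_disjoint t _ htdisj _ hsupp hq0 x
      rw [lintegral_congr hptw, lintegral_finset_sum _ (fun Rm _ =>
        (Finset.measurable_sum _ (fun Q _ => hGmeas Q)).pow_const q)]
      calc ∑ Rm ∈ t, ∫⁻ x, (∑ Q ∈ sj.filter (fun (Q : Qc) => rsel Q = Rm), G Q x)^q ∂ν
          ≤ ∑ Rm ∈ t, T^q * μ (Rm : Set (Rn n)) := Finset.sum_le_sum hperR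
        _ = T^q * ∑ Rm ∈ t, μ (Rm : Set (Rn n)) := (Finset.mul_sum _ _ _).symm
        _ ≤ T^q * ((2:ℝ≥0∞)^(((j:ℕ):ℤ)+1) * μ E) := mul_le_mul_right hsum_meas _
    calc (∫⁻ x, (∑ Q ∈ sj, F Q x)^q ∂ν)^(1/q)
        ≤ (∫⁻ x, ((2:ℝ≥0∞)^(-(j:ℝ)) * ∑ Q ∈ sj, G Q x)^q ∂ν)^(1/q) := by
          apply ENNReal.rpow_le_rpow _ (by positivity)
          apply lintegral_mono
          intro x
          apply ENNReal.rpow_le_rpow _ hq0.le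
          rw [Finset.mul_sum]
          exact Finset.sum_le_sum (fun Q hQ => hFleG Q hQ x)
      _ = (2:ℝ≥0∞)^(-(j:ℝ)) * (∫⁻ x, (∑ Q ∈ sj, G Q x)^q ∂ν)^(1/q) := by
          have hptw2 : ∀ x, ((2:ℝ≥0∞)^(-(j:ℝ)) * ∑ Q ∈ sj, G Q x)^q
              = ((2:ℝ≥0∞)^(-(j:ℝ)))^q * (∑ Q ∈ sj, G Q x)^q :=
            fun x => ENNReal.mul_rpow_of_nonneg _ _ hq0.le
          rw [lintegral_congr hptw2, lintegral_const_mul _ (hGsum_meas.pow_const q),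
            ENNReal.mul_rpow_of_nonneg _ _ (by positivity : (0:ℝ) ≤ 1/q)]
          congr 1
          rw [← ENNReal.rpow_mul, ← ENNReal.rpow_mul]
          congr 1
          field_simp
      _ ≤ (2:ℝ≥0∞)^(-(j:ℝ)) * (T^q * ((2:ℝ≥0∞)^(((j:ℕ):ℤ)+1) * μ E))^(1/q) :=
          mul_le_mul_right (ENNReal.rpow_le_rpow hstep (by positivity)) _
      _ = (2:ℝ≥0∞)^((1:ℝ)/q) * ((2:ℝ≥0∞)^(-(1/p)))^j * (T * (μ E) ^ ((1:ℝ)/q)) := by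
          have e1 : (T^q * ((2:ℝ≥0∞)^(((j:ℕ):ℤ)+1) * μ E))^((1:ℝ)/q)
              = T * ((2:ℝ≥0∞)^(((j:ℝ)+1)*((1:ℝ)/q)) * (μ E)^((1:ℝ)/q)) := by
            rw [ENNReal.mul_rpow_of_nonneg _ _ (by positivity : (0:ℝ) ≤ (1:ℝ)/q),
              ENNReal.mul_rpow_of_nonneg _ _ (by positivity : (0:ℝ) ≤ (1:ℝ)/q)]
            congr 1
            · rw [one_div, ENNReal.rpow_rpow_inv hq0.ne']
            · congr 1
              rw [← ENNReal.rpow_intCast 2 (((j:ℕ):ℤ)+1), ← ENNReal.rpow_mul]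
              congr 1
              push_cast
              ring
          have e2 : (2:ℝ≥0∞)^(-(j:ℝ)) * (2:ℝ≥0∞)^(((j:ℝ)+1)*((1:ℝ)/q))
              = (2:ℝ≥0∞)^((1:ℝ)/q) * ((2:ℝ≥0∞)^(-(1/p)))^j := by
            rw [← ENNReal.rpow_natCast ((2:ℝ≥0∞)^(-(1/p))) j, ← ENNReal.rpow_mul,
              ← ENNReal.rpow_add _ _ two_ne_zero ENNReal.ofNat_ne_top,
              ← ENNReal.rpow_add _ _ two_ne_zero ENNReal.ofNat_ne_top]
            congr 1
            have h1p : (1:ℝ) - 1/q = 1/p := by linarith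
            have hjq : ((j:ℝ)+1)*((1:ℝ)/q) = (j:ℝ)/q + 1/q := by ring
            rw [hjq]
            have : -(1/p) * (j:ℝ) = -(((1:ℝ) - 1/q)) * (j:ℝ) := by rw [h1p]
            rw [this]
            ring
          rw [show (1:ℝ)/q = 1/q from rfl] at e1
          rw [e1]
          calc (2:ℝ≥0∞)^(-(j:ℝ)) * (T * ((2:ℝ≥0∞)^(((j:ℝ)+1)*((1:ℝ)/q)) * (μ E)^((1:ℝ)/q)))
              = ((2:ℝ≥0∞)^(-(j:ℝ)) * (2:ℝ≥0∞)^(((j:ℝ)+1)*((1:ℝ)/q))) *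
                (T * (μ E)^((1:ℝ)/q)) := by ring
            _ = (2:ℝ≥0∞)^((1:ℝ)/q) * ((2:ℝ≥0∞)^(-(1/p)))^j * (T * (μ E)^((1:ℝ)/q)) := by
                rw [e2]
  -- assemble over levels
  have hfib0 : ∀ x, (∑ Q ∈ s, F Q x) = ∑ j ∈ s₀.image jdx,
      ∑ Q ∈ s₀.filter (fun (Q : Qc) => jdx Q = j), F Q x := by
    intro x
    rw [hsum_eq x]
    exact (Finset.sum_fiberwise_of_maps_to (fun Q hQ => Finset.mem_image_of_mem jdx hQ) _).symm
  have hmeas_j : ∀ j : ℕ, Measurable (fun x => ∑ Q ∈ s₀.filter (fun (Q : Qc) => jdx Q = j), F Q x) :=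
    fun j => Finset.measurable_sum _ (fun Q _ => hFmeas Q)
  calc (∫⁻ x, (∑ Q ∈ s, F Q x) ^ q ∂ν) ^ (1/q)
      = (∫⁻ x, (∑ j ∈ s₀.image jdx, ∑ Q ∈ s₀.filter (fun (Q : Qc) => jdx Q = j), F Q x) ^ q ∂ν)
        ^ (1/q) := by
        congr 1
        exact lintegral_congr (fun x => by rw [hfib0 x])
    _ ≤ ∑ j ∈ s₀.image jdx, (∫⁻ x, (∑ Q ∈ s₀.filter (fun (Q : Qc) => jdx Q = j), F Q x) ^ q ∂ν)
        ^ (1/q) := lpnorm_finset_sum_le ν hq1.le _ _ (fun j => hmeas_j j)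
    _ ≤ ∑ j ∈ s₀.image jdx, (2:ℝ≥0∞)^((1:ℝ)/q) * ((2:ℝ≥0∞)^(-(1/p)))^j *
        (T * (μ E) ^ ((1:ℝ)/q)) := Finset.sum_le_sum (fun j _ => fiber_bound j)
    _ = (2:ℝ≥0∞)^((1:ℝ)/q) * (∑ j ∈ s₀.image jdx, ((2:ℝ≥0∞)^(-(1/p)))^j) *
        (T * (μ E) ^ ((1:ℝ)/q)) := by
        rw [← Finset.sum_mul, ← Finset.mul_sum]
    _ ≤ 2 * (1 - (2:ℝ≥0∞)^(-(1/p)))⁻¹ * T * (μ E) ^ ((1:ℝ)/q) := by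
        have hb1 : (2:ℝ≥0∞)^((1:ℝ)/q) ≤ 2 := by
          calc (2:ℝ≥0∞)^((1:ℝ)/q) ≤ (2:ℝ≥0∞)^((1:ℝ)) :=
              ENNReal.rpow_le_rpow_of_exponent_le one_le_two
                ((div_le_one hq0).2 hq1.le)
            _ = 2 := ENNReal.rpow_one _
        have hb2 : (∑ j ∈ s₀.image jdx, ((2:ℝ≥0∞)^(-(1/p)))^j)
            ≤ (1 - (2:ℝ≥0∞)^(-(1/p)))⁻¹ := by
          refine le_trans (Summable.sum_le_tsum _ (fun _ _ => zero_le) ENNReal.summable) ?_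
          rw [ENNReal.tsum_geometric]
        calc (2:ℝ≥0∞)^((1:ℝ)/q) * (∑ j ∈ s₀.image jdx, ((2:ℝ≥0∞)^(-(1/p)))^j) *
            (T * (μ E) ^ ((1:ℝ)/q))
            ≤ 2 * (1 - (2:ℝ≥0∞)^(-(1/p)))⁻¹ * (T * (μ E) ^ ((1:ℝ)/q)) :=
              mul_le_mul_left (mul_le_mul' hb1 hb2) _
          _ = 2 * (1 - (2:ℝ≥0∞)^(-(1/p)))⁻¹ * T * (μ E) ^ ((1:ℝ)/q) := by ring

lemma upper_bound {n : ℕ} {p : ℝ} (hp : 1 < p)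
    {Qc : Set (Set (Rn n))} (hQc : Qc.Countable) (hQdy : ∀ Q ∈ Qc, IsDyadicCube n Q)
    (τ : Set (Rn n) → ℝ≥0) {w σ : Rn n → ℝ≥0∞} (hw : Measurable w) (hσ : Measurable σ)
    (hLw : LocInt w) (hLσ : LocInt σ) (f : Rn n → ℝ≥0∞) (hf : Measurable f) :
    wLpNorm p w (linOp Qc τ (fun x => f x * σ x))
      ≤ 2 * (1 - (2:ℝ≥0∞)^(-(1/p)))⁻¹ * linTestDual Qc τ p w σ * lpNorm p σ f := by
  classical
  haveI : Countable Qc := hQc.to_subtype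
  set q : ℝ := p / (p-1) with hqdef
  set ν := volume.withDensity σ with hν
  set μ := volume.withDensity w with hμ
  set T := linTestDual Qc τ p w σ with hT
  set C2 : ℝ≥0∞ := 2 * (1 - (2:ℝ≥0∞)^(-(1/p)))⁻¹ with hC2
  have hp0 : (0:ℝ) < p := lt_trans one_pos hp
  have hq1 : 1 < q := by
    rw [hqdef]
    exact (_root_.one_lt_div (by linarith)).2 (by linarith)
  have hq0 : (0:ℝ) < q := lt_trans one_pos hq1
  have hinv : 1/p + 1/q = 1 := by
    rw [hqdef, one_div_div, ← add_div, show 1 + (p-1) = p by ring]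
    exact div_self (by linarith)
  have hpq : Real.HolderConjugate p q := by
    refine Real.holderConjugate_iff.2 ⟨hp, ?_⟩
    rw [← one_div, ← one_div]
    exact hinv
  have hQdy' : ∀ Q : Qc, IsDyadicCube n (Q : Set (Rn n)) := fun Q => hQdy Q Q.2
  have hQmeas : ∀ Q : Qc, MeasurableSet (Q : Set (Rn n)) := fun Q => (hQdy' Q).measurableSet
  have haQ : ∀ E : Set (Rn n), MeasurableSet E → ∀ Q : Qc, dAvg (E.indicator w) (Q : Set (Rn n))
      = (volume (Q : Set (Rn n)))⁻¹ * μ (E ∩ (Q : Set (Rn n))) := by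
    intro E hE Q
    unfold dAvg
    congr 1
    rw [hμ, withDensity_apply w (hE.inter (hQmeas Q)),
      lintegral_indicator hE, Measure.restrict_restrict hE]
  set g : Rn n → ℝ≥0∞ := linOp Qc τ (fun x => f x * σ x) with hg
  have hgmeas : Measurable g := measurable_linOp hQc hQdy τ _
  unfold wLpNorm
  apply iSup₂_le
  intro t ht
  have hΩmeas : MeasurableSet {x | (t:ℝ≥0∞) < g x} := hgmeas measurableSet_Ioi
  rw [show (∫⁻ x in {x | (t:ℝ≥0∞) < g x}, w x) = μ {x | (t:ℝ≥0∞) < g x} from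
    (withDensity_apply w hΩmeas).symm]
  -- main estimate for measurable subsets of finite measure
  have main : ∀ E : Set (Rn n), MeasurableSet E → E ⊆ {x | (t:ℝ≥0∞) < g x} → μ E ≠ ∞ →
      (t:ℝ≥0∞) * (μ E)^(1/p) ≤ C2 * T * lpNorm p σ f := by
    intro E hE hEΩ hEtop
    rcases eq_or_ne (μ E) 0 with h0 | h0
    · rw [h0, ENNReal.zero_rpow_of_pos (by positivity), mul_zero]
      exact zero_le
    set h : Rn n → ℝ≥0∞ := fun x => ∑' Q : Qc, (Q : Set (Rn n)).indicator
      (fun _ => (τ Q : ℝ≥0∞) * dAvg (E.indicator w) (Q : Set (Rn n))) x with hh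
    have hhmeas : Measurable h :=
      Measurable.ennreal_tsum (fun Q => measurable_const.indicator (hQmeas Q))
    have hi : (t:ℝ≥0∞) * μ E ≤ ∫⁻ x in E, g x ∂μ := by
      calc (t:ℝ≥0∞) * μ E = ∫⁻ _x in E, (t:ℝ≥0∞) ∂μ := (setLIntegral_const E _).symm
        _ ≤ ∫⁻ x in E, g x ∂μ := setLIntegral_mono hgmeas (fun x hx => (hEΩ hx).le)
    have hii : ∫⁻ x in E, g x ∂μ = ∫⁻ x, f x * h x ∂ν := by
      have hL : ∫⁻ x in E, g x ∂μ = ∑' Q : Qc, (τ Q : ℝ≥0∞) *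
          dAvg (fun y => f y * σ y) (Q : Set (Rn n)) * μ (E ∩ (Q : Set (Rn n))) := by
        rw [hg]
        unfold linOp
        rw [lintegral_tsum (fun Q => (measurable_const.indicator (hQmeas Q)).aemeasurable)]
        apply tsum_congr
        intro Q
        rw [lintegral_indicator (hQmeas Q), setLIntegral_const,
          Measure.restrict_apply (hQmeas Q), Set.inter_comm]
      have hR : ∫⁻ x, f x * h x ∂ν = ∑' Q : Qc, (τ Q : ℝ≥0∞) *
          dAvg (E.indicator w) (Q : Set (Rn n)) * ∫⁻ x in (Q : Set (Rn n)), f x ∂ν := by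
        rw [hh]
        have hptw : ∀ x, f x * (∑' Q : Qc, (Q : Set (Rn n)).indicator
            (fun _ => (τ Q : ℝ≥0∞) * dAvg (E.indicator w) (Q : Set (Rn n))) x)
            = ∑' Q : Qc, (Q : Set (Rn n)).indicator
              (fun y => (τ Q : ℝ≥0∞) * dAvg (E.indicator w) (Q : Set (Rn n)) * f y) x := by
          intro x
          rw [← ENNReal.tsum_mul_left]
          apply tsum_congr
          intro Q
          by_cases hx : x ∈ (Q : Set (Rn n))
          · rw [Set.indicator_of_mem hx, Set.indicator_of_mem hx]
            ring
          · rw [Set.indicator_of_notMem hx, Set.indicator_of_notMem hx, mul_zero]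
        rw [lintegral_congr hptw, lintegral_tsum (f := fun (Q : Qc) => (Q : Set (Rn n)).indicator
          (fun y => (τ Q : ℝ≥0∞) * dAvg (E.indicator w) (Q : Set (Rn n)) * f y)) (fun Q =>
          ((measurable_const.mul hf).indicator (hQmeas Q)).aemeasurable)]
        apply tsum_congr
        intro Q
        rw [lintegral_indicator (hQmeas Q), lintegral_const_mul _ hf]
      rw [hL, hR]
      apply tsum_congr
      intro Q
      have e3 : ∫⁻ x in (Q : Set (Rn n)), f x ∂ν = ∫⁻ x in (Q : Set (Rn n)), f x * σ x := by
        rw [hν]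
        exact setLIntegral_withDensity_eq hσ hf (hQmeas Q)
      have e4 : dAvg (fun y => f y * σ y) (Q : Set (Rn n))
          = (volume (Q : Set (Rn n)))⁻¹ * ∫⁻ x in (Q : Set (Rn n)), f x ∂ν := by
        rw [e3]
        rfl
      rw [e4, haQ E hE Q]
      ring
    have hiv : ∫⁻ x, f x * h x ∂ν ≤ lpNorm p σ f * (∫⁻ x, h x ^ q ∂ν)^(1/q) := by
      rw [lpNorm_withDensity hσ hf p, ← hν]
      exact ENNReal.lintegral_mul_le_Lp_mul_Lq ν hpq hf.aemeasurable hhmeas.aemeasurable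
    have hv : (∫⁻ x, h x ^ q ∂ν)^(1/q) ≤ C2 * T * (μ E)^((1:ℝ)/q) :=
      key_testing hp hQc hQdy τ hw hσ hLw hLσ hE
    have hchain : (t:ℝ≥0∞) * μ E ≤ lpNorm p σ f * (C2 * T * (μ E)^((1:ℝ)/q)) :=
      le_trans hi (le_trans (le_of_eq hii) (le_trans hiv (mul_le_mul_right hv _)))
    have hEq0 : (μ E)^((1:ℝ)/q) ≠ 0 := by
      intro hzero
      rcases ENNReal.rpow_eq_zero_iff.1 hzero with ⟨h1, _⟩ | ⟨h1, _⟩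
      · exact h0 h1
      · exact hEtop h1
    have hEqtop : (μ E)^((1:ℝ)/q) ≠ ∞ :=
      ENNReal.rpow_ne_top_of_nonneg (by positivity) hEtop
    have hqp1 : (1:ℝ)/q + 1/p = 1 := by linarith
    have hkey : ((μ E)^((1:ℝ)/q)) * ((t:ℝ≥0∞) * (μ E)^(1/p))
        ≤ ((μ E)^((1:ℝ)/q)) * (C2 * T * lpNorm p σ f) := by
      have hfact : (t:ℝ≥0∞) * μ E = ((μ E)^((1:ℝ)/q)) * ((t:ℝ≥0∞) * (μ E)^(1/p)) := by
        calc (t:ℝ≥0∞) * μ E = (t:ℝ≥0∞) * ((μ E)^((1:ℝ)/q) * (μ E)^((1:ℝ)/p)) := by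
              rw [← ENNReal.rpow_add _ _ h0 hEtop, hqp1, ENNReal.rpow_one]
          _ = ((μ E)^((1:ℝ)/q)) * ((t:ℝ≥0∞) * (μ E)^((1:ℝ)/p)) := by ring
      rw [← hfact]
      refine le_trans hchain (le_of_eq ?_)
      ring
    exact (ENNReal.mul_le_mul_iff_right hEq0 hEqtop).1 hkey
  -- exhaustion by sets of finite measure
  obtain ⟨e, he⟩ := exists_surjective_nat (Fin n → ℤ)
  have hcube_dy : ∀ m : Fin n → ℤ, IsDyadicCube n (dcube n 0 m) := fun m => ⟨0, m, rfl⟩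
  set U : ℕ → Set (Rn n) := fun k => ⋃ i ∈ Finset.range (k+1), dcube n 0 (e i) with hU
  set Ek : ℕ → Set (Rn n) := fun k => {x | (t:ℝ≥0∞) < g x} ∩ U k with hEk
  have hUmeas : ∀ k, MeasurableSet (U k) := fun k =>
    (Finset.range (k+1)).measurableSet_biUnion (fun i _ => (hcube_dy (e i)).measurableSet)
  have hEkmeas : ∀ k, MeasurableSet (Ek k) := fun k => hΩmeas.inter (hUmeas k)
  have hEkfin : ∀ k, μ (Ek k) ≠ ∞ := by
    intro k
    have h1 : μ (Ek k) ≤ μ (U k) := measure_mono Set.inter_subset_right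
    refine (lt_of_le_of_lt h1 ?_).ne
    calc μ (U k) ≤ ∑ i ∈ Finset.range (k+1), μ (dcube n 0 (e i)) :=
        measure_biUnion_finset_le _ _
      _ < ∞ := ENNReal.sum_lt_top.2 (fun i _ => by
          rw [hμ, withDensity_apply w (hcube_dy (e i)).measurableSet]
          exact hLw _ (hcube_dy (e i)))
  have hEkmono : Monotone Ek := by
    intro a b hab
    apply Set.inter_subset_inter_right
    intro x hx
    simp only [hU, Set.mem_iUnion] at hx ⊢
    obtain ⟨i, hi, hxi⟩ := hx
    exact ⟨i, Finset.mem_range.2 (lt_of_lt_of_le (Finset.mem_range.1 hi) (by omega)), hxi⟩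
  have hEkunion : ⋃ k, Ek k = {x | (t:ℝ≥0∞) < g x} := by
    apply Set.eq_of_subset_of_subset
    · exact Set.iUnion_subset (fun k => Set.inter_subset_left)
    · intro x hx
      obtain ⟨i, hi⟩ := he (fun j => ⌊x j⌋)
      have hxc : x ∈ dcube n 0 (e i) := by
        rw [hi]
        intro j
        constructor
        · simp only [neg_zero, zpow_zero, one_mul]
          exact Int.floor_le (x j)
        · simp only [neg_zero, zpow_zero, one_mul]
          exact Int.lt_floor_add_one (x j)
      refine Set.mem_iUnion.2 ⟨i, hx, ?_⟩
      exact Set.mem_biUnion (Finset.self_mem_range_succ i) hxc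
  have hμΩ : μ {x | (t:ℝ≥0∞) < g x} = ⨆ k, μ (Ek k) := by
    rw [← hEkunion]
    exact Directed.measure_iUnion (hEkmono.directed_le)
  rw [hμΩ, iSup_rpow_mono (fun k => μ (Ek k)) (by positivity : (0:ℝ) < 1/p),
    ENNReal.mul_iSup]
  exact iSup_le (fun k => main (Ek k) (hEkmeas k) Set.inter_subset_left (hEkfin k))

/-- Proposition 2.2 (Lacey–Sawyer–Uriarte-Tuero), weak type characterization. -/
theorem statement9 (n : ℕ) (p : ℝ) (hp : 1 < p) :
    ∃ c C : ℝ≥0∞, 0 < c ∧ C ≠ ∞ ∧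
      ∀ Qc : Set (Set (Rn n)), Qc.Countable → (∀ Q ∈ Qc, IsDyadicCube n Q) →
      ∀ τ : Set (Rn n) → ℝ≥0,
      ∀ w σ : Rn n → ℝ≥0∞, Measurable w → Measurable σ → LocInt w → LocInt σ →
        c * linTestDual Qc τ p w σ ≤ linOpNormWeak Qc τ p w σ ∧
        linOpNormWeak Qc τ p w σ ≤ C * linTestDual Qc τ p w σ := by
  refine ⟨(2 + (1 - (2:ℝ≥0∞)^((1:ℝ)-p))⁻¹)⁻¹, 2 * (1 - (2:ℝ≥0∞)^(-(1/p)))⁻¹, ?_, ?_, ?_⟩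
  · exact ENNReal.inv_pos.2 (K1_ne_top hp)
  · apply ENNReal.mul_ne_top ENNReal.ofNat_ne_top
    apply ENNReal.inv_ne_top.2
    have h1 : (2:ℝ≥0∞)^(-(1/p)) < 1 :=
      ENNReal.rpow_lt_one_of_one_lt_of_neg one_lt_two
        (neg_lt_zero.2 (by positivity : (0:ℝ) < 1/p))
    exact (tsub_pos_iff_lt.2 h1).ne'
  · intro Qc hQc hQdy τ w σ hw hσ hLw hLσ
    constructor
    · exact lower_bound hp hQc hQdy τ hw hσ hLw hLσ
    · unfold linOpNormWeak
      apply sInf_le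
      simp only [Set.mem_setOf_eq]
      intro f hf
      exact upper_bound hp hQc hQdy τ hw hσ hLw hLσ f hf
end Paper
end
end
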